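/- arXiv:1903.10365 — 11 statements merged into one kernel-verified Lean document; each statement's English description precedes it below -/
import Mathlib

section
/- For every integer k ≥ 2, ∫_0^1 (r^{-2} − ∑_{j=0}^{k-1} (1-r²)^j)² · r^{2k+1} · (1-r²)^{-2k} dr = 1/(2(k-1)). Consequently, for n = 2k+2 the quantity Γ(n/2)Γ(k)(∑_{j=0}^{k-1} Γ(j+(n-2k)/2)/(Γ(j+1)Γ((n-2k)/2))) / (2^{(n+2k)/2} Γ((n-2k)/2) ∫_0^1 (r^{2k-n} − ∑_{j=0}^{k-1}(Γ(j+(n-2k)/2)/(Γ(j+1)Γ((n-2k)/2)))(1-r²)^j)² r^{n-1}(1-r²)^{-2k} dr) equals (k-1)(k!)²/2^{2k}. -/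
open Real Finset


lemma aux_integral (k : ℕ) (hk : 2 ≤ k) :
    (∫ r in (0 : ℝ)..1,
        ((r ^ 2)⁻¹ - ∑ j ∈ Finset.range k, (1 - r ^ 2) ^ j) ^ 2 *
          r ^ (2 * k + 1) / (1 - r ^ 2) ^ (2 * k)) = 1 / (2 * ((k : ℝ) - 1)) := by
  obtain ⟨m, rfl⟩ : ∃ m, k = m + 2 := ⟨k - 2, by omega⟩
  have hcongr : ∀ᵐ r ∂(MeasureTheory.volume), r ∈ Set.uIoc (0:ℝ) 1 →
      ((r ^ 2)⁻¹ - ∑ j ∈ Finset.range (m+2), (1 - r ^ 2) ^ j) ^ 2 *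
        r ^ (2 * (m+2) + 1) / (1 - r ^ 2) ^ (2 * (m+2)) = r ^ (2*m+1) := by
    have h1 : (MeasureTheory.volume ({1} : Set ℝ)) = 0 := MeasureTheory.measure_singleton 1
    filter_upwards [MeasureTheory.measure_eq_zero_iff_ae_notMem.mp h1] with r hr1 hrI
    rw [Set.uIoc_of_le (by norm_num : (0:ℝ) ≤ 1)] at hrI
    have hr0 : 0 < r := hrI.1
    have hrlt : r < 1 := lt_of_le_of_ne hrI.2 (by simpa using hr1)
    have hs : (0:ℝ) < 1 - r ^ 2 := by nlinarith
    have hx : (1 - r ^ 2) ≠ 1 := by nlinarith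
    rw [geom_sum_eq hx]
    have hr0' : r ≠ 0 := ne_of_gt hr0
    have hs' : (1 - r ^ 2) ≠ 0 := ne_of_gt hs
    field_simp
    ring
  rw [intervalIntegral.integral_congr_ae hcongr, integral_pow]
  push_cast
  rw [one_pow, zero_pow (by omega)]
  ring

/-- Remark 1.8 of the paper: evaluation of the integral
`∫₀¹ (r⁻² − ∑_{j<k}(1-r²)^j)² r^{2k+1} (1-r²)^{-2k} dr = 1/(2(k-1))`, and consequently
for `n = 2k+2` the lower-bound quantity of Theorem 1.7(2) equals `(k-1)(k!)²/2^{2k}`. -/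
theorem remark_1_8_evaluation (k : ℕ) (hk : 2 ≤ k) (n : ℕ) (hn : n = 2 * k + 2) :
    (∫ r in (0 : ℝ)..1,
        ((r ^ 2)⁻¹ - ∑ j ∈ Finset.range k, (1 - r ^ 2) ^ j) ^ 2 *
          r ^ (2 * k + 1) / (1 - r ^ 2) ^ (2 * k)) = 1 / (2 * ((k : ℝ) - 1))
    ∧
    (Real.Gamma ((n : ℝ) / 2) * Real.Gamma (k : ℝ) *
        ∑ j ∈ Finset.range k,
          Real.Gamma ((j : ℝ) + ((n : ℝ) - 2 * k) / 2) /
            (Real.Gamma ((j : ℝ) + 1) * Real.Gamma (((n : ℝ) - 2 * k) / 2))) /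
      ((2 : ℝ) ^ (((n : ℝ) + 2 * k) / 2) * Real.Gamma (((n : ℝ) - 2 * k) / 2) *
        ∫ r in (0 : ℝ)..1,
          (r ^ (2 * (k : ℝ) - n) -
            ∑ j ∈ Finset.range k,
              Real.Gamma ((j : ℝ) + ((n : ℝ) - 2 * k) / 2) /
                  (Real.Gamma ((j : ℝ) + 1) * Real.Gamma (((n : ℝ) - 2 * k) / 2)) *
                (1 - r ^ 2) ^ j) ^ 2 *
            r ^ (n - 1) / (1 - r ^ 2) ^ (2 * k))
    = ((k : ℝ) - 1) * (Nat.factorial k : ℝ) ^ 2 / 2 ^ (2 * k) := by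
  have hI := aux_integral k hk
  refine ⟨hI, ?_⟩
  -- basic exponent simplifications
  have he1 : ((n : ℝ) - 2 * k) / 2 = 1 := by rw [hn]; push_cast; ring
  have he2 : 2 * (k : ℝ) - n = -2 := by rw [hn]; push_cast; ring
  have he3 : (n : ℝ) / 2 = (k : ℝ) + 1 := by rw [hn]; push_cast; ring
  have he4 : ((n : ℝ) + 2 * k) / 2 = ((2 * k + 1 : ℕ) : ℝ) := by rw [hn]; push_cast; ring
  have hn1 : n - 1 = 2 * k + 1 := by omega
  -- coefficients are 1
  have hcoef : ∀ j : ℕ, Real.Gamma ((j : ℝ) + ((n : ℝ) - 2 * k) / 2) /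
      (Real.Gamma ((j : ℝ) + 1) * Real.Gamma (((n : ℝ) - 2 * k) / 2)) = 1 := by
    intro j
    rw [he1, Real.Gamma_one, mul_one, div_self]
    exact ne_of_gt (Real.Gamma_pos_of_pos (by positivity))
  -- the second integral equals the first
  have hint : (∫ r in (0 : ℝ)..1,
          (r ^ (2 * (k : ℝ) - n) -
            ∑ j ∈ Finset.range k,
              Real.Gamma ((j : ℝ) + ((n : ℝ) - 2 * k) / 2) /
                  (Real.Gamma ((j : ℝ) + 1) * Real.Gamma (((n : ℝ) - 2 * k) / 2)) *
                (1 - r ^ 2) ^ j) ^ 2 *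
            r ^ (n - 1) / (1 - r ^ 2) ^ (2 * k))
      = (∫ r in (0 : ℝ)..1,
        ((r ^ 2)⁻¹ - ∑ j ∈ Finset.range k, (1 - r ^ 2) ^ j) ^ 2 *
          r ^ (2 * k + 1) / (1 - r ^ 2) ^ (2 * k)) := by
    apply intervalIntegral.integral_congr
    intro r hr
    rw [Set.uIcc_of_le (by norm_num : (0:ℝ) ≤ 1)] at hr
    have hr0 : (0:ℝ) ≤ r := hr.1
    have hpow : r ^ (2 * (k : ℝ) - n) = (r ^ 2)⁻¹ := by
      rw [he2]
      rcases eq_or_lt_of_le hr0 with h | h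
      · rw [← h, Real.zero_rpow (by norm_num)]
        norm_num
      · rw [show (-2 : ℝ) = ((-2 : ℤ) : ℝ) by norm_num, Real.rpow_intCast]
        simp [zpow_neg]
    simp only [hcoef, one_mul, hpow, hn1]
  rw [hint, hI, he1, he3, he4, Real.Gamma_one]
  rw [Real.rpow_natCast]
  have hGk1 : Real.Gamma ((k : ℝ) + 1) = (Nat.factorial k : ℝ) := Real.Gamma_nat_eq_factorial k
  have hGk : Real.Gamma (k : ℝ) = (Nat.factorial (k - 1) : ℝ) := by
    have : (k : ℝ) = ((k - 1 : ℕ) : ℝ) + 1 := by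
      push_cast [Nat.cast_sub (by omega : 1 ≤ k)]; ring
    rw [this, Real.Gamma_nat_eq_factorial]
  rw [hGk1, hGk]
  have hsum : (∑ j ∈ Finset.range k,
      Real.Gamma ((j : ℝ) + 1) / (Real.Gamma ((j : ℝ) + 1) * 1)) = (k : ℝ) := by
    rw [Finset.sum_congr rfl (fun j _ => by
      rw [mul_one, div_self (ne_of_gt (Real.Gamma_pos_of_pos (by positivity)))])]
    simp
  rw [hsum]
  have hfact : ((Nat.factorial (k - 1) : ℝ)) * k = (Nat.factorial k : ℝ) := by
    rw [← Nat.cast_mul]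
    congr 1
    rw [mul_comm]
    exact Nat.mul_factorial_pred (by omega)
  have hk1 : (k : ℝ) - 1 ≠ 0 := by
    have : (2 : ℝ) ≤ (k : ℝ) := by exact_mod_cast hk
    intro h; nlinarith
  have h2 : (2 : ℝ) ^ (2 * k + 1) = 2 * 2 ^ (2 * k) := by ring
  field_simp
  rw [← hfact]
  ring
end

section
/- Let m be a positive integer and let D be the operator taking a function f : (0,∞) → ℝ to the function ρ ↦ −(1/sinh ρ)·f'(ρ). Then for every ρ > 0, the (m-1)-fold iterate of D applied to the function ρ ↦ 1/sinh ρ satisfies (D^{m-1}(1/sinh))(ρ) = (Γ(m)/π) · (sinh ρ)^{-(2m-1)} · ∫_0^π (cosh ρ + cos t)^{m-1} dt. -/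
open Real intervalIntegral

open MeasureTheory Metric

noncomputable def II (n : ℕ) (u : ℝ) : ℝ := ∫ t in (0:ℝ)..Real.pi, (u + Real.cos t) ^ n

lemma II_intble (n : ℕ) (u : ℝ) :
    IntervalIntegrable (fun t => (u + Real.cos t) ^ n) MeasureTheory.volume 0 Real.pi :=
  (Continuous.pow (by continuity) n).intervalIntegrable _ _

lemma II_zero (u : ℝ) : II 0 u = Real.pi := by
  simp [II]

lemma II_one (u : ℝ) : II 1 u = Real.pi * u := by
  simp only [II, pow_one]
  rw [intervalIntegral.integral_add intervalIntegrable_const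
    (Real.continuous_cos.intervalIntegrable _ _)]
  simp [mul_comm]

lemma II_rec (n : ℕ) (u : ℝ) :
    ((n:ℝ)+2) * II (n+2) u = (2*(n:ℝ)+3)*u*II (n+1) u - ((n:ℝ)+1)*(u^2-1)*II n u := by
  have hF : ∀ t ∈ Set.uIcc (0:ℝ) Real.pi,
      HasDerivAt (fun t => Real.sin t * (u + Real.cos t)^(n+1))
        (Real.cos t * (u+Real.cos t)^(n+1)
          + Real.sin t * (((n:ℝ)+1) * (u+Real.cos t)^n * (-Real.sin t))) t := by
    intro t _
    have := (Real.hasDerivAt_sin t).mul (((Real.hasDerivAt_cos t).const_add u).pow (n+1))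
    simp at this ⊢
    exact this
  have hcont : Continuous (fun t => Real.cos t * (u+Real.cos t)^(n+1)
      + Real.sin t * (((n:ℝ)+1) * (u+Real.cos t)^n * (-Real.sin t))) := by continuity
  have h0 := intervalIntegral.integral_eq_sub_of_hasDerivAt hF (hcont.intervalIntegrable 0 Real.pi)
  rw [Real.sin_pi, Real.sin_zero] at h0
  simp only [zero_mul, sub_zero] at h0
  have key : ∀ t : ℝ, Real.cos t * (u+Real.cos t)^(n+1)
      + Real.sin t * (((n:ℝ)+1) * (u+Real.cos t)^n * (-Real.sin t))
      = ((n:ℝ)+2)*(u+Real.cos t)^(n+2) - (2*(n:ℝ)+3)*u*(u+Real.cos t)^(n+1)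
        + ((n:ℝ)+1)*(u^2-1)*(u+Real.cos t)^n := by
    intro t
    have hs : Real.sin t ^ 2 = 1 - Real.cos t ^ 2 := Real.sin_sq t
    linear_combination (-((n:ℝ)+1) * (u+Real.cos t)^n) * hs
  rw [intervalIntegral.integral_congr (fun t _ => key t)] at h0
  rw [intervalIntegral.integral_add
      (((II_intble (n+2) u).const_mul _).sub ((II_intble (n+1) u).const_mul _))
      ((II_intble n u).const_mul _),
    intervalIntegral.integral_sub ((II_intble (n+2) u).const_mul _)
      ((II_intble (n+1) u).const_mul _),
    intervalIntegral.integral_const_mul, intervalIntegral.integral_const_mul,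
    intervalIntegral.integral_const_mul] at h0
  have e2 : (∫ t in (0:ℝ)..Real.pi, (u + Real.cos t)^(n+2)) = II (n+2) u := rfl
  have e1 : (∫ t in (0:ℝ)..Real.pi, (u + Real.cos t)^(n+1)) = II (n+1) u := rfl
  have e0 : (∫ t in (0:ℝ)..Real.pi, (u + Real.cos t)^n) = II n u := rfl
  rw [e2, e1, e0] at h0
  linarith

lemma II_hasDerivAt (n : ℕ) (u : ℝ) :
    HasDerivAt (fun u => II (n+1) u) (((n:ℝ)+1) * II n u) u := by
  have h := intervalIntegral.hasDerivAt_integral_of_dominated_loc_of_deriv_le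
    (F := fun x t => (x + Real.cos t)^(n+1)) (F' := fun x t => ((n:ℝ)+1) * (x + Real.cos t)^n)
    (bound := fun _ => ((n:ℝ)+1) * (|u| + 2)^n) (μ := MeasureTheory.volume)
    (a := 0) (b := Real.pi) (x₀ := u) (Metric.ball_mem_nhds u zero_lt_one)
    (Filter.Eventually.of_forall fun x =>
      ((Continuous.pow (by continuity) (n+1)).aestronglyMeasurable))
    (II_intble (n+1) u)
    ((Continuous.mul continuous_const (Continuous.pow (by continuity) n)).aestronglyMeasurable)
    (Filter.Eventually.of_forall fun t _ x hx => by
      have h1 : |x + Real.cos t| ≤ |u| + 2 := by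
        have h2 : |x - u| < 1 := by simpa [Real.dist_eq] using hx
        have h3 : |Real.cos t| ≤ 1 := Real.abs_cos_le_one t
        calc |x + Real.cos t| = |(x - u) + u + Real.cos t| := by ring_nf
          _ ≤ |x - u| + |u| + |Real.cos t| := by
              exact (abs_add_le _ _).trans (add_le_add_left (abs_add_le _ _) _)
          _ ≤ |u| + 2 := by linarith
      have h4 : |x + Real.cos t| ^ n ≤ (|u| + 2) ^ n :=
        pow_le_pow_left₀ (abs_nonneg _) h1 n
      have h5 : (0:ℝ) ≤ (n:ℝ) + 1 := by positivity
      calc ‖((n:ℝ)+1) * (x + Real.cos t)^n‖ = ((n:ℝ)+1) * |x + Real.cos t| ^ n := by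
            rw [norm_mul, norm_pow]
            simp [abs_of_nonneg h5, Real.norm_eq_abs]
        _ ≤ ((n:ℝ)+1) * (|u| + 2)^n := by
            exact mul_le_mul_of_nonneg_left h4 h5)
    intervalIntegrable_const
    (Filter.Eventually.of_forall fun t _ x _ => by
      have := ((hasDerivAt_id x).add_const (Real.cos t)).pow (n+1)
      simp at this
      exact this)
  have h2 := h.2
  rw [intervalIntegral.integral_const_mul] at h2
  exact h2

lemma II_hasDerivAt' (k : ℕ) (u : ℝ) :
    HasDerivAt (fun u => II k u) ((k:ℝ) * II (k-1) u) u := by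
  cases k with
  | zero =>
      have : (fun u : ℝ => II 0 u) = fun _ => Real.pi := funext fun u => II_zero u
      rw [this]
      simpa using hasDerivAt_const u Real.pi
  | succ n =>
      have := II_hasDerivAt n u
      push_cast
      simpa using this

lemma II_rec' (k : ℕ) (u : ℝ) :
    ((k:ℝ)+1) * II (k+1) u = (2*(k:ℝ)+1)*u*II k u - (k:ℝ)*(u^2-1)*II (k-1) u := by
  cases k with
  | zero => simp [II_one, II_zero]; ring
  | succ n =>
      have h := II_rec n u
      push_cast
      push_cast at h
      convert h using 2 <;> ring

lemma main_aux (k : ℕ) : ∀ ρ : ℝ, 0 < ρ →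
    (fun f : ℝ → ℝ => fun x => -(1 / Real.sinh x) * deriv f x)^[k]
        (fun x => 1 / Real.sinh x) ρ
      = ((k.factorial : ℝ) / Real.pi) * ((Real.sinh ρ ^ (2*k+1))⁻¹ * II k (Real.cosh ρ)) := by
  induction k with
  | zero =>
      intro ρ hρ
      have hs : Real.sinh ρ ≠ 0 := ne_of_gt (Real.sinh_pos_iff.2 hρ)
      simp [II_zero]
      field_simp
  | succ k IH =>
      intro ρ hρ
      have hs : Real.sinh ρ ≠ 0 := ne_of_gt (Real.sinh_pos_iff.2 hρ)
      rw [Function.iterate_succ_apply']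
      have hev : deriv ((fun f : ℝ → ℝ => fun x => -(1 / Real.sinh x) * deriv f x)^[k]
            (fun x => 1 / Real.sinh x)) ρ
          = deriv (fun ρ => ((k.factorial : ℝ) / Real.pi) *
              ((Real.sinh ρ ^ (2*k+1))⁻¹ * II k (Real.cosh ρ))) ρ := by
        apply Filter.EventuallyEq.deriv_eq
        filter_upwards [isOpen_Ioi.mem_nhds hρ] with x hx
        exact IH x hx
      show -(1 / Real.sinh ρ) * deriv _ ρ = _
      rw [hev]
      -- compute the derivative
      have hsinh : HasDerivAt Real.sinh (Real.cosh ρ) ρ := Real.hasDerivAt_sinh ρ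
      have hpow : HasDerivAt (fun ρ => Real.sinh ρ ^ (2*k+1))
          ((2*(k:ℝ)+1) * Real.sinh ρ ^ (2*k) * Real.cosh ρ) ρ := by
        have := hsinh.pow (2*k+1)
        push_cast at this
        exact this
      have hinv : HasDerivAt (fun ρ => (Real.sinh ρ ^ (2*k+1))⁻¹)
          (-((2*(k:ℝ)+1) * Real.sinh ρ ^ (2*k) * Real.cosh ρ) / (Real.sinh ρ ^ (2*k+1))^2) ρ :=
        hpow.inv (pow_ne_zero _ hs)
      have hcomp : HasDerivAt (fun ρ => II k (Real.cosh ρ))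
          ((k:ℝ) * II (k-1) (Real.cosh ρ) * Real.sinh ρ) ρ :=
        (II_hasDerivAt' k (Real.cosh ρ)).comp ρ (Real.hasDerivAt_cosh ρ)
      have hG : HasDerivAt (fun ρ => ((k.factorial : ℝ) / Real.pi) *
            ((Real.sinh ρ ^ (2*k+1))⁻¹ * II k (Real.cosh ρ)))
          (((k.factorial : ℝ) / Real.pi) *
            (-((2*(k:ℝ)+1) * Real.sinh ρ ^ (2*k) * Real.cosh ρ) / (Real.sinh ρ ^ (2*k+1))^2
                * II k (Real.cosh ρ)
              + (Real.sinh ρ ^ (2*k+1))⁻¹ *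
                ((k:ℝ) * II (k-1) (Real.cosh ρ) * Real.sinh ρ))) ρ :=
        (hinv.mul hcomp).const_mul _
      rw [hG.deriv]
      have hrec := II_rec' k (Real.cosh ρ)
      have hc : Real.cosh ρ ^ 2 - 1 = Real.sinh ρ ^ 2 := by
        have := Real.cosh_sq_sub_sinh_sq ρ
        linarith
      have hfac : ((k+1).factorial : ℝ) = ((k:ℝ)+1) * (k.factorial : ℝ) := by
        push_cast [Nat.factorial_succ]; ring
      rw [hfac]
      have hπ : Real.pi ≠ 0 := Real.pi_ne_zero
      rw [hc] at hrec
      have hexp : 2*(k+1)+1 = (2*k+1) + 2 := by ring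
      rw [hexp, pow_add]
      field_simp
      set s := Real.sinh ρ; set c := Real.cosh ρ
      linear_combination (-s^(2*k+1+2)) * hrec

/-- Lemma 3.1 of the paper: the (m-1)-fold iterate of `D f ρ = -(1/sinh ρ) f'(ρ)`
applied to `1/sinh` has the closed form
`(Γ(m)/π) (sinh ρ)^{-(2m-1)} ∫₀^π (cosh ρ + cos t)^{m-1} dt`. -/
theorem iterate_sinh_inv (m : ℕ) (hm : 1 ≤ m) (ρ : ℝ) (hρ : 0 < ρ) :
    (fun f : ℝ → ℝ => fun x => -(1 / Real.sinh x) * deriv f x)^[m - 1]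
        (fun x => 1 / Real.sinh x) ρ
      = (Real.Gamma (m : ℝ) / Real.pi) * (1 / Real.sinh ρ ^ (2 * m - 1)) *
        ∫ t in (0 : ℝ)..Real.pi, (Real.cosh ρ + Real.cos t) ^ (m - 1) := by
  obtain ⟨k, rfl⟩ : ∃ k, m = k + 1 := ⟨m - 1, (Nat.succ_pred_eq_of_pos hm).symm⟩
  have h1 : k + 1 - 1 = k := by omega
  have h2 : 2 * (k + 1) - 1 = 2 * k + 1 := by omega
  have hΓ : Real.Gamma ((k+1 : ℕ) : ℝ) = (k.factorial : ℝ) := by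
    push_cast
    exact Real.Gamma_nat_eq_factorial k
  rw [h1, h2, hΓ]
  have := main_aux k ρ hρ
  rw [this]
  have hII : II k (Real.cosh ρ)
      = ∫ t in (0 : ℝ)..Real.pi, (Real.cosh ρ + Real.cos t) ^ k := rfl
  rw [← hII]
  ring
end

section
/- Let m > k ≥ 0 be integers and let ρ > 0 be real. Then ∫_0^π (cosh ρ + cos t)^{m-1-k} (sin t)^{2k} dt = ∑_{j=0}^{m-1-k} [Γ(m-k)/(Γ(j+1)Γ(m-k-j))] · (2 sinh²(ρ/2))^j · 2^{m+k-1-j} · Γ(m-j-1/2) · Γ(k+1/2) / Γ(m+k-j). -/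
open Real Finset intervalIntegral


noncomputable def Jint (a b : ℕ) : ℝ :=
  ∫ t in (0:ℝ)..Real.pi, (1 + Real.cos t) ^ a * (1 - Real.cos t) ^ b

lemma Jcont (a b : ℕ) : Continuous fun t : ℝ => (1 + Real.cos t) ^ a * (1 - Real.cos t) ^ b := by
  fun_prop

lemma Jint_symm (a b : ℕ) : Jint a b = Jint b a := by
  unfold Jint
  have := intervalIntegral.integral_comp_sub_left
      (a := (0:ℝ)) (b := Real.pi)
      (fun t : ℝ => (1 + Real.cos t) ^ a * (1 - Real.cos t) ^ b) Real.pi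
  simp only [sub_zero, sub_self, Real.cos_pi_sub] at this
  rw [← this]
  congr 1
  ext t
  ring

lemma Jint_rec (a b : ℕ) :
    ((a : ℝ) + b + 1) * Jint (a + 1) b = (2 * a + 1) * Jint a b := by
  set g : ℝ → ℝ := fun t =>
    (1 + Real.cos t) ^ a * (1 - Real.cos t) ^ b *
      (((b : ℝ) - a) + ((a : ℝ) + b + 1) * Real.cos t) with hg
  have hderiv : ∀ t : ℝ, HasDerivAt
      (fun t => Real.sin t * ((1 + Real.cos t) ^ a * (1 - Real.cos t) ^ b)) (g t) t := by
    intro t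
    have hc := Real.hasDerivAt_cos t
    have h1 : HasDerivAt (fun t : ℝ => (1 + Real.cos t) ^ a)
        ((a : ℝ) * (1 + Real.cos t) ^ (a - 1) * (-Real.sin t)) t := (hc.const_add 1).pow a
    have h2 : HasDerivAt (fun t : ℝ => (1 - Real.cos t) ^ b)
        ((b : ℝ) * (1 - Real.cos t) ^ (b - 1) * (-(-Real.sin t))) t := (hc.const_sub 1).pow b
    have hf := (Real.hasDerivAt_sin t).mul (h1.mul h2)
    refine hf.congr_deriv (Eq.symm ?_)
    have hs : Real.sin t ^ 2 = (1 + Real.cos t) * (1 - Real.cos t) := by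
      have := Real.sin_sq_add_cos_sq t; nlinarith
    have e1 : (a : ℝ) * (1 + Real.cos t) ^ (a - 1) * Real.sin t ^ 2
        = (a : ℝ) * (1 - Real.cos t) * (1 + Real.cos t) ^ a := by
      cases a with
      | zero => simp
      | succ n => simp only [Nat.add_sub_cancel]; rw [hs, pow_succ]; push_cast; ring
    have e2 : (b : ℝ) * (1 - Real.cos t) ^ (b - 1) * Real.sin t ^ 2
        = (b : ℝ) * (1 + Real.cos t) * (1 - Real.cos t) ^ b := by
      cases b with
      | zero => simp
      | succ n => simp only [Nat.add_sub_cancel]; rw [hs, pow_succ]; push_cast; ring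
    simp only [hg, Pi.mul_apply]
    linear_combination ((1 - Real.cos t) ^ b) * e1 - ((1 + Real.cos t) ^ a) * e2
  have hgcont : Continuous g := by rw [hg]; fun_prop
  have hzero : (∫ t in (0:ℝ)..Real.pi, g t) = 0 := by
    rw [intervalIntegral.integral_eq_sub_of_hasDerivAt (fun t _ => hderiv t)
      (hgcont.intervalIntegrable _ _)]
    simp
  have h0 : IntervalIntegrable (fun t : ℝ => (1 + Real.cos t) ^ a * (1 - Real.cos t) ^ b)
      MeasureTheory.volume 0 Real.pi := (Jcont a b).intervalIntegrable _ _
  have h1 : IntervalIntegrable (fun t : ℝ => (1 + Real.cos t) ^ (a+1) * (1 - Real.cos t) ^ b)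
      MeasureTheory.volume 0 Real.pi := (Jcont (a+1) b).intervalIntegrable _ _
  have hsplit : (∫ t in (0:ℝ)..Real.pi, g t)
      = ((b : ℝ) - a - ((a:ℝ) + b + 1)) * Jint a b + ((a:ℝ) + b + 1) * Jint (a+1) b := by
    unfold Jint
    rw [← intervalIntegral.integral_const_mul, ← intervalIntegral.integral_const_mul,
      ← intervalIntegral.integral_add (h0.const_mul _) (h1.const_mul _)]
    congr 1; ext t; rw [hg]; ring
  rw [hzero] at hsplit
  linarith [hsplit]

noncomputable def Jcf (a b : ℕ) : ℝ :=
  2 ^ (a + b) * Real.Gamma ((a : ℝ) + 1 / 2) * Real.Gamma ((b : ℝ) + 1 / 2) /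
    Real.Gamma ((a : ℝ) + b + 1)

lemma Jcf_symm (a b : ℕ) : Jcf a b = Jcf b a := by
  unfold Jcf
  rw [Nat.add_comm a b]
  ring_nf

lemma Gamma_half_pos (a : ℕ) : 0 < Real.Gamma ((a : ℝ) + 1 / 2) :=
  Real.Gamma_pos_of_pos (by positivity)

lemma Jcf_rec (a b : ℕ) : ((a : ℝ) + b + 1) * Jcf (a + 1) b = (2 * a + 1) * Jcf a b := by
  unfold Jcf
  have h1 : Real.Gamma (((a + 1 : ℕ) : ℝ) + 1 / 2) = ((a : ℝ) + 1 / 2) * Real.Gamma ((a : ℝ) + 1 / 2) := by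
    rw [show (((a + 1 : ℕ) : ℝ) + 1 / 2) = ((a : ℝ) + 1 / 2) + 1 by push_cast; ring,
      Real.Gamma_add_one (by positivity)]
  have h2 : Real.Gamma (((a + 1 : ℕ) : ℝ) + b + 1) = ((a : ℝ) + b + 1) * Real.Gamma ((a : ℝ) + b + 1) := by
    rw [show (((a + 1 : ℕ) : ℝ) + b + 1) = ((a : ℝ) + b + 1) + 1 by push_cast; ring,
      Real.Gamma_add_one (by positivity)]
  have h3 : Real.Gamma ((a : ℝ) + b + 1) ≠ 0 := (Real.Gamma_pos_of_pos (by positivity)).ne'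
  rw [h1, h2, show a + 1 + b = (a + b) + 1 by omega, pow_succ]
  field_simp

lemma Jint_zero_left : ∀ b : ℕ, Jint 0 b = Jcf 0 b := by
  intro b
  induction b with
  | zero =>
    unfold Jint Jcf
    simp only [pow_zero, one_mul, mul_one, Nat.cast_zero, zero_add, Real.Gamma_one, div_one,
      Real.Gamma_one_half_eq, intervalIntegral.integral_const, smul_eq_mul, sub_zero]
    rw [Real.mul_self_sqrt Real.pi_pos.le]
  | succ b ih =>
    have hrec := Jint_rec b 0
    have hcrec := Jcf_rec b 0
    rw [Jint_symm b 0, ih] at hrec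
    rw [Jcf_symm b 0] at hcrec
    have hne : ((b : ℝ) + (0:ℕ) + 1) ≠ 0 := by positivity
    have : Jint (b + 1) 0 = Jcf (b + 1) 0 :=
      mul_left_cancel₀ hne (hrec.trans hcrec.symm)
    rw [Jint_symm, this, Jcf_symm]

lemma Jint_eq (a b : ℕ) : Jint a b = Jcf a b := by
  induction a with
  | zero => exact Jint_zero_left b
  | succ a ih =>
    have hrec := Jint_rec a b
    have hcrec := Jcf_rec a b
    rw [ih] at hrec
    have hne : ((a : ℝ) + (b:ℕ) + 1) ≠ 0 := by positivity
    exact mul_left_cancel₀ hne (hrec.trans hcrec.symm)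

lemma term_eq (m k j : ℕ) (hk : k < m) (hj : j < m - k) (A : ℝ) :
    Real.Gamma ((m : ℝ) - k) /
        (Real.Gamma ((j : ℝ) + 1) * Real.Gamma ((m : ℝ) - k - j)) *
      A ^ j * (2 : ℝ) ^ ((m : ℝ) + k - 1 - j) *
      Real.Gamma ((m : ℝ) - j - 1 / 2) * Real.Gamma ((k : ℝ) + 1 / 2) /
      Real.Gamma ((m : ℝ) + k - j)
    = ((m - 1 - k).choose j : ℝ) * A ^ j * Jcf (m - 1 - k - j + k) k := by
  set M := m - 1 - k with hM
  set a := M - j + k with ha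
  have hjM : j ≤ M := by omega
  have hMc : ((M : ℕ) : ℝ) = (m : ℝ) - 1 - k := by
    have : ((M + 1 + k : ℕ) : ℝ) = (m : ℝ) := by rw [show M + 1 + k = m by omega]
    push_cast at this; linarith
  have hac : ((a : ℕ) : ℝ) = (m : ℝ) - 1 - j := by
    have : ((a + 1 + j : ℕ) : ℝ) = (m : ℝ) := by rw [show a + 1 + j = m by omega]
    push_cast at this; linarith
  have hMjc : ((M - j : ℕ) : ℝ) = (m : ℝ) - 1 - k - j := by
    have : ((M - j + 1 + k + j : ℕ) : ℝ) = (m : ℝ) := by rw [show M - j + 1 + k + j = m by omega]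
    push_cast at this; linarith
  have e1 : Real.Gamma ((m : ℝ) - k) = (Nat.factorial M : ℝ) := by
    rw [show (m : ℝ) - k = (M : ℝ) + 1 by rw [hMc]; ring, Real.Gamma_nat_eq_factorial]
  have e2 : Real.Gamma ((j : ℝ) + 1) = (Nat.factorial j : ℝ) := Real.Gamma_nat_eq_factorial j
  have e3 : Real.Gamma ((m : ℝ) - k - j) = (Nat.factorial (M - j) : ℝ) := by
    rw [show (m : ℝ) - k - j = ((M - j : ℕ) : ℝ) + 1 by rw [hMjc]; ring,
      Real.Gamma_nat_eq_factorial]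
  have e4 : (2 : ℝ) ^ ((m : ℝ) + k - 1 - j) = (2 : ℝ) ^ (a + k) := by
    rw [show (m : ℝ) + k - 1 - j = ((a + k : ℕ) : ℝ) by push_cast [hac]; ring,
      Real.rpow_natCast]
  have e5 : Real.Gamma ((m : ℝ) - j - 1 / 2) = Real.Gamma ((a : ℝ) + 1 / 2) := by
    rw [hac]; ring_nf
  have e6 : Real.Gamma ((m : ℝ) + k - j) = Real.Gamma ((a : ℝ) + k + 1) := by
    rw [hac]; ring_nf
  have e7 : ((M.choose j : ℕ) : ℝ) = (Nat.factorial M : ℝ) / ((Nat.factorial j : ℝ) * (Nat.factorial (M - j) : ℝ)) :=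
    Nat.cast_choose ℝ hjM
  unfold Jcf
  rw [e1, e2, e3, e4, e5, e6, e7]
  have n1 : (Nat.factorial j : ℝ) ≠ 0 := by positivity
  have n2 : ((Nat.factorial (M - j) : ℝ) : ℝ) ≠ 0 := by positivity
  have n3 : Real.Gamma ((a : ℝ) + k + 1) ≠ 0 := (Real.Gamma_pos_of_pos (by positivity)).ne'
  field_simp

/-- The computational core of Lemma 4.1 of the paper: for integers `m > k ≥ 0` and `ρ > 0`,
`∫₀^π (cosh ρ + cos t)^{m-1-k} (sin t)^{2k} dt` expands as a finite sum of Gamma factors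
times powers of `sinh²(ρ/2)`. -/
theorem cosh_cos_integral_expansion (m k : ℕ) (hk : k < m) (ρ : ℝ) (hρ : 0 < ρ) :
    ∫ t in (0 : ℝ)..Real.pi, (Real.cosh ρ + Real.cos t) ^ (m - 1 - k) * Real.sin t ^ (2 * k)
      = ∑ j ∈ Finset.range (m - k),
          Real.Gamma ((m : ℝ) - k) /
              (Real.Gamma ((j : ℝ) + 1) * Real.Gamma ((m : ℝ) - k - j)) *
            (2 * Real.sinh (ρ / 2) ^ 2) ^ j *
            (2 : ℝ) ^ ((m : ℝ) + k - 1 - j) *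
            Real.Gamma ((m : ℝ) - j - 1 / 2) * Real.Gamma ((k : ℝ) + 1 / 2) /
            Real.Gamma ((m : ℝ) + k - j) := by
  set M := m - 1 - k with hM
  set A := 2 * Real.sinh (ρ / 2) ^ 2 with hA
  have hcosh : Real.cosh ρ = A + 1 := by
    have h2 : Real.cosh ρ = Real.cosh (2 * (ρ / 2)) := by congr 1; ring
    rw [h2, Real.cosh_two_mul, Real.cosh_sq, hA]; ring
  have hintegrand : ∀ t : ℝ,
      (Real.cosh ρ + Real.cos t) ^ M * Real.sin t ^ (2 * k)
      = ∑ j ∈ Finset.range (M + 1),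
          ((M.choose j : ℝ) * A ^ j) *
            ((1 + Real.cos t) ^ (M - j + k) * (1 - Real.cos t) ^ k) := by
    intro t
    have hs : Real.sin t ^ (2 * k) = (1 + Real.cos t) ^ k * (1 - Real.cos t) ^ k := by
      rw [pow_mul, show Real.sin t ^ 2 = (1 + Real.cos t) * (1 - Real.cos t) by
        nlinarith [Real.sin_sq_add_cos_sq t], mul_pow]
    rw [hcosh, show A + 1 + Real.cos t = A + (1 + Real.cos t) by ring, add_pow, hs,
      Finset.sum_mul]
    refine Finset.sum_congr rfl fun j hj => ?_
    rw [show M - j + k = (M - j) + k from rfl, pow_add]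
    ring
  have hLHS : (∫ t in (0 : ℝ)..Real.pi, (Real.cosh ρ + Real.cos t) ^ M * Real.sin t ^ (2 * k))
      = ∑ j ∈ Finset.range (M + 1), ((M.choose j : ℝ) * A ^ j) * Jint (M - j + k) k := by
    simp only [hintegrand]
    rw [intervalIntegral.integral_finset_sum (f := fun j t => ((M.choose j : ℝ) * A ^ j) * ((1 + Real.cos t) ^ (M - j + k) * (1 - Real.cos t) ^ k))
      (fun j _ => (continuous_const.mul (Jcont (M - j + k) k)).intervalIntegrable _ _)]
    exact Finset.sum_congr rfl fun j _ => intervalIntegral.integral_const_mul _ _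
  rw [hLHS, show m - k = M + 1 by omega]
  refine Finset.sum_congr rfl fun j hj => ?_
  rw [Jint_eq]
  exact (term_eq m k j hk (by simp only [Finset.mem_range] at hj; omega) A).symm
end

section
/- Let m ≥ 1 be an integer and λ ∈ ℝ. Then ∏_{j=1}^{m} ((2j-1)² + λ²) − ∏_{j=1}^{m} (2j-1)² ≥ λ² · ∏_{j=1}^{m-1} (j² + λ²). -/
open Finset

/-- Inequality (4.17) of the paper (spectral comparison):
`∏_{j=1}^m ((2j-1)² + λ²) − ∏_{j=1}^m (2j-1)² ≥ λ² ∏_{j=1}^{m-1} (j² + λ²)`. -/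
theorem product_spectral_comparison (m : ℕ) (hm : 1 ≤ m) (lam : ℝ) :
    (∏ j ∈ Finset.Icc 1 m, ((2 * (j : ℝ) - 1) ^ 2 + lam ^ 2))
        - ∏ j ∈ Finset.Icc 1 m, (2 * (j : ℝ) - 1) ^ 2
      ≥ lam ^ 2 * ∏ j ∈ Finset.Icc 1 (m - 1), ((j : ℝ) ^ 2 + lam ^ 2) := by
  obtain ⟨n, rfl⟩ : ∃ n, m = n + 1 := ⟨m - 1, (Nat.succ_pred_eq_of_pos hm).symm⟩
  simp only [Nat.add_sub_cancel]
  rw [Finset.prod_Icc_succ_top (Nat.le_add_left 1 n),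
      Finset.prod_Icc_succ_top (Nat.le_add_left 1 n)]
  have hB : (0:ℝ) ≤ ∏ j ∈ Finset.Icc 1 n, (2 * (j : ℝ) - 1) ^ 2 :=
    Finset.prod_nonneg fun j _ => sq_nonneg _
  have hAB : (∏ j ∈ Finset.Icc 1 n, (2 * (j : ℝ) - 1) ^ 2)
      ≤ ∏ j ∈ Finset.Icc 1 n, ((2 * (j : ℝ) - 1) ^ 2 + lam ^ 2) := by
    apply Finset.prod_le_prod (fun j _ => sq_nonneg _)
    intro j _
    nlinarith [sq_nonneg lam]
  have hPA : (∏ j ∈ Finset.Icc 1 n, ((j : ℝ) ^ 2 + lam ^ 2))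
      ≤ ∏ j ∈ Finset.Icc 1 n, ((2 * (j : ℝ) - 1) ^ 2 + lam ^ 2) := by
    apply Finset.prod_le_prod
    · intro j _; positivity
    · intro j hj
      have h1 : (1:ℝ) ≤ (j:ℝ) := by
        exact_mod_cast (Finset.mem_Icc.mp hj).1
      nlinarith
  have hP : (0:ℝ) ≤ ∏ j ∈ Finset.Icc 1 n, ((j : ℝ) ^ 2 + lam ^ 2) :=
    Finset.prod_nonneg fun j _ => by positivity
  push_cast
  nlinarith [sq_nonneg lam, sq_nonneg (2 * ((n:ℝ)+1) - 1),
    mul_nonneg (sq_nonneg lam) hP,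
    mul_le_mul_of_nonneg_left hPA (sq_nonneg lam),
    mul_le_mul_of_nonneg_left hAB (sq_nonneg (2 * ((n:ℝ)+1) - 1))]
end

section
/- Let k, n be integers with 2 ≤ k < n/2 and let 0 < δ < 1 be fixed. For ε > 0 define F_ε : B_δ → ℝ on the ball B_δ = {x ∈ ℝ^n : |x| < δ} by F_ε(x) = (2/(ε+|x|²))^{(n-2k)/2} − (2/(δ²+ε))^{(n-2k)/2} · ∑_{j=0}^{k-1} [Γ(j+(n-2k)/2)/(Γ(j+1)Γ((n-2k)/2))] · ((δ²−|x|²)/(δ²+ε))^j. Then there exist constants C > 0 and ε₀ > 0 such that for all 0 < ε < ε₀, ∫_{B_δ} |F_ε(x)|^{2n/(n-2k)} dx ≥ ε^{-n/2} ( ω_n − C ε^{(n-2k)/2} ), where ω_n = 2π^{(n+1)/2}/Γ((n+1)/2) = ∫_{ℝ^n} (2/(1+|x|²))^n dx. -/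
open MeasureTheory Real Finset



/-- Tangent-line / Bernoulli pointwise bound. -/
lemma key_pt {a s M q : ℝ} (ha : 0 ≤ a) (hs0 : 0 ≤ s) (hsM : s ≤ M) (hM : 0 < M)
    (hq : 1 ≤ q) : a ^ q - q * M * a ^ (q - 1) ≤ |a - s| ^ q := by
  have hq0 : 0 < q := lt_of_lt_of_le one_pos hq
  by_cases hA : a ≤ q * M
  · refine le_trans ?_ (Real.rpow_nonneg (abs_nonneg _) q)
    rcases eq_or_lt_of_le ha with h0 | h0
    · rw [← h0, Real.zero_rpow hq0.ne']
      have : 0 ≤ q * M * (0:ℝ) ^ (q - 1) := by positivity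
      linarith
    · have : a ^ q = a ^ (q - 1) * a := by
        rw [← Real.rpow_add_one h0.ne']; ring_nf
      rw [this]
      have h1 : a ^ (q - 1) * a ≤ a ^ (q - 1) * (q * M) :=
        mul_le_mul_of_nonneg_left hA (Real.rpow_nonneg h0.le _)
      nlinarith [Real.rpow_nonneg h0.le (q - 1)]
  · push_neg at hA
    have hqM : M ≤ q * M := le_mul_of_one_le_left hM.le hq
    have haM : M < a := lt_of_le_of_lt hqM hA
    have ha0 : 0 < a := lt_trans hM haM
    have hsa : s < a := lt_of_le_of_lt hsM haM
    have habs : |a - s| = a - s := abs_of_pos (by linarith)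
    rw [habs]
    have h1 : (a - M) ^ q ≤ (a - s) ^ q :=
      Real.rpow_le_rpow (by linarith) (by linarith) hq0.le
    refine le_trans ?_ h1
    -- Bernoulli with s = -M/a
    have hber : 1 + q * (-(M / a)) ≤ (1 + -(M / a)) ^ q := by
      apply one_add_mul_self_le_rpow_one_add _ hq
      have : M / a ≤ 1 := (div_le_one ha0).mpr haM.le
      linarith
    have hmul : a ^ q * (1 + q * (-(M / a))) ≤ a ^ q * (1 + -(M / a)) ^ q :=
      mul_le_mul_of_nonneg_left hber (Real.rpow_nonneg ha0.le q)
    calc a ^ q - q * M * a ^ (q - 1) = a ^ q * (1 + q * (-(M / a))) := by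
          rw [Real.rpow_sub_one ha0.ne']
          field_simp
          ring
      _ ≤ a ^ q * (1 + -(M / a)) ^ q := hmul
      _ = (a - M) ^ q := by
          rw [← Real.mul_rpow ha0.le (by
            have : M / a ≤ 1 := (div_le_one ha0).mpr haM.le
            linarith)]
          congr 1
          field_simp
          ring



/-- Real Beta integral. -/
lemma betaReal {a b : ℝ} (ha : 0 < a) (hb : 0 < b) :
    ∫ t in Set.Ioo (0:ℝ) 1, t ^ (a - 1) * (1 - t) ^ (b - 1)
      = Real.Gamma a * Real.Gamma b / Real.Gamma (a + b) := by
  have hC := Complex.Gamma_mul_Gamma_eq_betaIntegral (s := (a:ℂ)) (t := (b:ℂ))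
    (by simpa using ha) (by simpa using hb)
  have hcast : Complex.betaIntegral (a:ℂ) (b:ℂ)
      = ((∫ t in Set.Ioo (0:ℝ) 1, t ^ (a - 1) * (1 - t) ^ (b - 1) : ℝ) : ℂ) := by
    rw [Complex.betaIntegral]
    rw [show (∫ t in Set.Ioo (0:ℝ) 1, t ^ (a - 1) * (1 - t) ^ (b - 1))
        = ∫ t in (0:ℝ)..1, t ^ (a - 1) * (1 - t) ^ (b - 1) by
      rw [intervalIntegral.integral_of_le zero_le_one, integral_Ioc_eq_integral_Ioo]]
    rw [← intervalIntegral.integral_ofReal]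
    apply intervalIntegral.integral_congr
    intro x hx
    rw [Set.uIcc_of_le zero_le_one] at hx
    simp only []
    have e1 : ((x:ℂ)) ^ ((a:ℂ) - 1) = ((x ^ (a - 1) : ℝ) : ℂ) := by
      rw [show ((a:ℂ) - 1) = ((a - 1 : ℝ) : ℂ) by push_cast; ring,
        ← Complex.ofReal_cpow hx.1]
    have e2 : (1 - (x:ℂ)) ^ ((b:ℂ) - 1) = (((1 - x) ^ (b - 1) : ℝ) : ℂ) := by
      rw [show (1 - (x:ℂ)) = ((1 - x : ℝ) : ℂ) by push_cast; ring,
        show ((b:ℂ) - 1) = ((b - 1 : ℝ) : ℂ) by push_cast; ring,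
        ← Complex.ofReal_cpow (by linarith [hx.2] : (0:ℝ) ≤ 1 - x)]
    rw [e1, e2, ← Complex.ofReal_mul]
  rw [hcast] at hC
  have hG : Complex.Gamma ((a:ℂ) + b) = ((Real.Gamma (a + b) : ℝ) : ℂ) := by
    rw [← Complex.ofReal_add, Complex.Gamma_ofReal]
  rw [Complex.Gamma_ofReal, Complex.Gamma_ofReal, hG, ← Complex.ofReal_mul,
    ← Complex.ofReal_mul] at hC
  have := Complex.ofReal_inj.mp hC
  have hGab : Real.Gamma (a + b) ≠ 0 := (Real.Gamma_pos_of_pos (by linarith)).ne'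
  field_simp [this]
  linear_combination -this

lemma halfline_beta {c : ℝ} (hc : 0 < c) :
    ∫ y in Set.Ioi (0:ℝ), y ^ (2 * c - 1) * (1 + y ^ 2) ^ (-(2 * c))
      = Real.Gamma c ^ 2 / (2 * Real.Gamma (2 * c)) := by
  set f : ℝ → ℝ := fun y => (1 + y ^ 2)⁻¹ with hf_def
  set f' : ℝ → ℝ := fun y => -(2 * y) / (1 + y ^ 2) ^ 2 with hf'_def
  have hA : ∀ y : ℝ, (0:ℝ) < 1 + y ^ 2 := fun y => by positivity
  have hder : ∀ y ∈ Set.Ioi (0:ℝ), HasDerivWithinAt f (f' y) (Set.Ioi 0) y := by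
    intro y hy
    have h1 : HasDerivAt (fun y : ℝ => 1 + y ^ 2) (2 * y) y := by
      simpa using ((hasDerivAt_pow 2 y).const_add 1)
    exact ((h1.inv (hA y).ne')).hasDerivWithinAt
  have hinj : Set.InjOn f (Set.Ioi 0) := by
    intro y₁ h₁ y₂ h₂ h
    have h1 : (1 : ℝ) + y₁ ^ 2 = 1 + y₂ ^ 2 := by
      have := congrArg (·⁻¹) h
      simpa [hf_def, inv_inv] using this
    have h3 : (y₁ - y₂) * (y₁ + y₂) = 0 := by nlinarith
    rcases mul_eq_zero.mp h3 with h4 | h4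
    · linarith
    · exfalso; simp only [Set.mem_Ioi] at h₁ h₂; linarith
  have himg : f '' Set.Ioi 0 = Set.Ioo 0 1 := by
    ext t
    constructor
    · rintro ⟨y, hy, rfl⟩
      simp only [Set.mem_Ioi] at hy
      constructor
      · positivity
      · rw [hf_def]
        have : (1:ℝ) < 1 + y ^ 2 := by nlinarith
        simpa using inv_lt_one_of_one_lt₀ this
    · rintro ⟨ht0, ht1⟩
      refine ⟨Real.sqrt (1 / t - 1), ?_, ?_⟩
      · simp only [Set.mem_Ioi]
        apply Real.sqrt_pos.mpr
        have : (1:ℝ) < 1 / t := by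
          rw [lt_div_iff₀ ht0]; linarith
        linarith
      · have hnn : (0:ℝ) ≤ 1 / t - 1 := by
          have : (1:ℝ) ≤ 1 / t := by rw [le_div_iff₀ ht0]; linarith
          linarith
        simp only [hf_def]
        rw [Real.sq_sqrt hnn]
        field_simp
        ring
  have hchg := integral_image_eq_integral_abs_deriv_smul measurableSet_Ioi hder hinj
    (fun t => t ^ (c - 1) * (1 - t) ^ (c - 1))
  rw [himg] at hchg
  have hsimp : ∀ y ∈ Set.Ioi (0:ℝ),
      |f' y| • (f y ^ (c - 1) * (1 - f y) ^ (c - 1))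
        = 2 * (y ^ (2 * c - 1) * (1 + y ^ 2) ^ (-(2 * c))) := by
    intro y hy
    simp only [Set.mem_Ioi] at hy
    have hA' := hA y
    have habs : |f' y| = 2 * y / (1 + y ^ 2) ^ 2 := by
      rw [hf'_def]
      simp only [neg_div, abs_neg]
      rw [abs_of_nonneg (by positivity)]
    have h1f : 1 - f y = y ^ 2 / (1 + y ^ 2) := by
      rw [hf_def]; field_simp; ring
    rw [smul_eq_mul, habs, h1f, hf_def]
    simp only []
    rw [Real.inv_rpow hA'.le, ← Real.rpow_neg hA'.le,
      Real.div_rpow (sq_nonneg y) hA'.le,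
      ← Real.rpow_natCast y 2, ← Real.rpow_mul (le_of_lt hy)]
    have hB : (0:ℝ) < 1 + y ^ ((2:ℕ):ℝ) := by rw [Real.rpow_natCast]; exact hA'
    set B := 1 + y ^ ((2:ℕ):ℝ) with hBdef
    have e1 : B ^ (2:ℕ) = B ^ ((2:ℕ):ℝ) := (Real.rpow_natCast _ 2).symm
    rw [e1, div_eq_mul_inv, div_eq_mul_inv, ← Real.rpow_neg hB.le, ← Real.rpow_neg hB.le]
    have ey : y * y ^ (((2:ℕ):ℝ) * (c-1)) = y ^ (2*c-1) := by
      have h := Real.rpow_add hy 1 (((2:ℕ):ℝ)*(c-1))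
      rw [Real.rpow_one] at h
      rw [← h]; norm_num; ring_nf
    have eB : B ^ (-((2:ℕ):ℝ)) * (B ^ (-(c-1)) * B ^ (-(c-1))) = B ^ (-(2*c)) := by
      rw [← Real.rpow_add hB, ← Real.rpow_add hB]; norm_num; ring_nf
    calc 2 * y * B ^ (-((2:ℕ):ℝ)) * (B ^ (-(c - 1)) * (y ^ (((2:ℕ):ℝ) * (c - 1)) * B ^ (-(c - 1))))
        = 2 * (y * y ^ (((2:ℕ):ℝ) * (c-1))) * (B ^ (-((2:ℕ):ℝ)) * (B ^ (-(c-1)) * B ^ (-(c-1)))) := by ring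
      _ = 2 * (y ^ (2*c-1) * B ^ (-(2*c))) := by rw [ey, eB]; ring
  rw [setIntegral_congr_fun measurableSet_Ioi hsimp] at hchg
  rw [integral_const_mul] at hchg
  rw [betaReal hc hc] at hchg
  have h2c : Real.Gamma (2 * c) ≠ 0 := (Real.Gamma_pos_of_pos (by linarith)).ne'
  rw [show c + c = 2 * c by ring] at hchg
  field_simp at hchg ⊢
  linarith [hchg]



section profile

variable {m s a : ℝ}

/-- pointwise bound for the profile. -/
lemma profile_le (hm : 0 ≤ m) (hs : 0 ≤ s) (ha : 0 ≤ a) {y : ℝ} (hy : 0 < y) :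
    y ^ m * (2 / (a + y ^ 2)) ^ s ≤ 2 ^ s * y ^ (m - 2 * s) := by
  have hy2 : (0:ℝ) < y ^ 2 := by positivity
  have h1 : (2 / (a + y ^ 2)) ^ s ≤ (2 / y ^ 2) ^ s := by
    apply Real.rpow_le_rpow (by positivity) _ hs
    apply div_le_div_of_nonneg_left (by norm_num) hy2 (by linarith)
  have h2 : (2 / y ^ 2 : ℝ) ^ s = 2 ^ s / y ^ (2 * s) := by
    rw [Real.div_rpow (by norm_num) hy2.le]
    congr 1
    rw [← Real.rpow_natCast y 2, ← Real.rpow_mul hy.le]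
    norm_num
  calc y ^ m * (2 / (a + y ^ 2)) ^ s ≤ y ^ m * (2 ^ s / y ^ (2 * s)) := by
        rw [← h2]
        exact mul_le_mul_of_nonneg_left h1 (Real.rpow_nonneg hy.le m)
    _ = 2 ^ s * (y ^ m / y ^ (2 * s)) := by ring
    _ = 2 ^ s * y ^ (m - 2 * s) := by rw [← Real.rpow_sub hy]

lemma profile_continuousOn (ha : 0 ≤ a) {R : ℝ} (hR : 0 < R) :
    ContinuousOn (fun y : ℝ => y ^ m * (2 / (a + y ^ 2)) ^ s) (Set.Ioi R) := by
  intro y hy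
  have hy0 : 0 < y := lt_trans hR hy
  have hden : (0:ℝ) < a + y ^ 2 := by positivity
  apply ContinuousWithinAt.mul
  · exact (Real.continuousAt_rpow_const y m (Or.inl hy0.ne')).continuousWithinAt
  · apply ContinuousAt.continuousWithinAt
    have hb : ContinuousAt (fun y : ℝ => 2 / (a + y ^ 2)) y := by
      exact continuousAt_const.div (by fun_prop) hden.ne'
    exact (Real.continuousAt_rpow_const _ s (Or.inl (by positivity))).comp hb

lemma profile_continuous (hm : 0 < m) (ha : 0 < a) :
    Continuous (fun y : ℝ => y ^ m * (2 / (a + y ^ 2)) ^ s) := by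
  apply Continuous.mul
  · rw [continuous_iff_continuousAt]
    intro y
    exact Real.continuousAt_rpow_const y m (Or.inr hm.le)
  · have hb : Continuous (fun y : ℝ => 2 / (a + y ^ 2)) := by
      apply Continuous.div continuous_const (by fun_prop)
      intro y; positivity
    exact hb.rpow_const (fun y => Or.inl (by positivity))

lemma profile_integrableOn_Ioi (hm : 0 ≤ m) (hs : 0 ≤ s) (ha : 0 ≤ a)
    (hdec : m - 2 * s < -1) {R : ℝ} (hR : 0 < R) :
    IntegrableOn (fun y : ℝ => y ^ m * (2 / (a + y ^ 2)) ^ s) (Set.Ioi R) := by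
  apply Integrable.mono' ((integrableOn_Ioi_rpow_of_lt hdec hR).const_mul ((2:ℝ) ^ s))
  · exact (profile_continuousOn ha hR).aestronglyMeasurable measurableSet_Ioi
  · filter_upwards [ae_restrict_mem measurableSet_Ioi] with y hy
    have hy0 : 0 < y := lt_trans hR hy
    rw [Real.norm_eq_abs, abs_of_nonneg (by positivity)]
    exact profile_le hm hs ha hy0

lemma profile_tail_bound (hm : 0 ≤ m) (hs : 0 ≤ s) (ha : 0 ≤ a)
    (hdec : m - 2 * s < -1) {R : ℝ} (hR : 0 < R) :
    ∫ y in Set.Ioi R, y ^ m * (2 / (a + y ^ 2)) ^ s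
      ≤ 2 ^ s * (-R ^ (m - 2 * s + 1) / (m - 2 * s + 1)) := by
  have h1 : ∫ y in Set.Ioi R, y ^ m * (2 / (a + y ^ 2)) ^ s
      ≤ ∫ y in Set.Ioi R, 2 ^ s * y ^ (m - 2 * s) := by
    apply setIntegral_mono_on (profile_integrableOn_Ioi hm hs ha hdec hR)
      ((integrableOn_Ioi_rpow_of_lt hdec hR).const_mul ((2:ℝ) ^ s)) measurableSet_Ioi
    intro y hy
    exact profile_le hm hs ha (lt_trans hR hy)
  rw [integral_const_mul, integral_Ioi_rpow_of_lt hdec hR] at h1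
  exact h1

lemma profile_integrableOn_Ioi_zero (hm : 0 < m) (hs : 0 ≤ s) (ha : 0 < a)
    (hdec : m - 2 * s < -1) :
    IntegrableOn (fun y : ℝ => y ^ m * (2 / (a + y ^ 2)) ^ s) (Set.Ioi 0) := by
  rw [show Set.Ioi (0:ℝ) = Set.Ioc 0 1 ∪ Set.Ioi 1 from (Set.Ioc_union_Ioi_eq_Ioi zero_le_one).symm]
  apply IntegrableOn.union
  · apply IntegrableOn.mono_set _ Set.Ioc_subset_Icc_self
    exact ((profile_continuous hm ha).continuousOn).integrableOn_compact isCompact_Icc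
  · exact profile_integrableOn_Ioi hm.le hs ha.le hdec one_pos

/-- scaling of the full half-line integral. -/
lemma profile_scaling {n : ℕ} (hn : 0 < n) (hs : 0 ≤ s) {ε : ℝ} (hε : 0 < ε) :
    ∫ y in Set.Ioi (0:ℝ), y ^ ((n:ℝ) - 1) * (2 / (ε + y ^ 2)) ^ s
      = ε ^ ((n:ℝ) / 2 - s) * ∫ u in Set.Ioi (0:ℝ), u ^ ((n:ℝ) - 1) * (2 / (1 + u ^ 2)) ^ s := by
  set c : ℝ := ε ^ ((2:ℝ)⁻¹) with hc_def
  have hc : 0 < c := Real.rpow_pos_of_pos hε _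
  have hc2 : c ^ 2 = ε := by
    rw [hc_def, ← Real.rpow_natCast (ε ^ ((2:ℝ)⁻¹)) 2, ← Real.rpow_mul hε.le]
    norm_num
  have key := integral_comp_mul_left_Ioi
    (fun y => y ^ ((n:ℝ) - 1) * (2 / (ε + y ^ 2)) ^ s) 0 hc
  rw [mul_zero] at key
  have congr1 : ∀ u ∈ Set.Ioi (0:ℝ),
      (c * u) ^ ((n:ℝ) - 1) * (2 / (ε + (c * u) ^ 2)) ^ s
        = (c ^ ((n:ℝ) - 1) * ε ^ (-s)) * (u ^ ((n:ℝ) - 1) * (2 / (1 + u ^ 2)) ^ s) := by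
    intro u hu
    have hu0 : 0 < u := hu
    have h1 : (c * u) ^ ((n:ℝ) - 1) = c ^ ((n:ℝ) - 1) * u ^ ((n:ℝ) - 1) :=
      Real.mul_rpow hc.le hu0.le
    have h2 : ε + (c * u) ^ 2 = ε * (1 + u ^ 2) := by
      rw [mul_pow, hc2]; ring
    have h3 : (2 / (ε + (c * u) ^ 2)) ^ s = ε ^ (-s) * (2 / (1 + u ^ 2)) ^ s := by
      rw [h2, show (2:ℝ) / (ε * (1 + u ^ 2)) = ε⁻¹ * (2 / (1 + u ^ 2)) by
        field_simp,
        Real.mul_rpow (by positivity) (by positivity),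
        ← Real.rpow_neg_one ε, ← Real.rpow_mul hε.le]
      norm_num
    rw [h1, h3]; ring
  rw [setIntegral_congr_fun measurableSet_Ioi congr1, integral_const_mul] at key
  have key2 : (∫ y in Set.Ioi (0:ℝ), y ^ ((n:ℝ) - 1) * (2 / (ε + y ^ 2)) ^ s)
      = c * ((c ^ ((n:ℝ) - 1) * ε ^ (-s)) *
        ∫ u in Set.Ioi (0:ℝ), u ^ ((n:ℝ) - 1) * (2 / (1 + u ^ 2)) ^ s) := by
    rw [key, smul_eq_mul, ← mul_assoc, mul_inv_cancel₀ hc.ne', one_mul]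
  rw [key2, ← mul_assoc]
  congr 1
  rw [hc_def, ← Real.rpow_one (ε ^ ((2:ℝ)⁻¹)), ← Real.rpow_mul hε.le,
    ← Real.rpow_mul hε.le, ← Real.rpow_add hε, ← Real.rpow_add hε]
  congr 1
  ring

end profile

section radial

variable {n : ℕ}

local notation "E" n => EuclideanSpace ℝ (Fin n)

lemma radial_total (hn : 0 < n) (g : ℝ → ℝ) :
    ∫ x : EuclideanSpace ℝ (Fin n), g ‖x‖
      = ((n : ℝ) * (volume (Metric.ball (0 : EuclideanSpace ℝ (Fin n)) 1)).toReal) *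
        ∫ y in Set.Ioi (0:ℝ), y ^ (n - 1 : ℕ) * g y := by
  haveI : Nonempty (Fin n) := Fin.pos_iff_nonempty.mp hn
  have h := MeasureTheory.integral_fun_norm_addHaar
    (volume : Measure (EuclideanSpace ℝ (Fin n))) g
  rw [finrank_euclideanSpace_fin] at h
  rw [h]
  simp only [nsmul_eq_mul, smul_eq_mul, mul_assoc]
  rfl

lemma radial_ball (hn : 0 < n) (g : ℝ → ℝ) {δ : ℝ} :
    ∫ x in Metric.ball (0 : EuclideanSpace ℝ (Fin n)) δ, g ‖x‖
      = ((n : ℝ) * (volume (Metric.ball (0 : EuclideanSpace ℝ (Fin n)) 1)).toReal) *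
        ∫ y in Set.Ioo (0:ℝ) δ, y ^ (n - 1 : ℕ) * g y := by
  have h := radial_total hn ((Set.Iio δ).indicator g)
  have hleft : (∫ x : EuclideanSpace ℝ (Fin n), (Set.Iio δ).indicator g ‖x‖)
      = ∫ x in Metric.ball (0 : EuclideanSpace ℝ (Fin n)) δ, g ‖x‖ := by
    rw [← integral_indicator measurableSet_ball]
    congr 1
    ext x
    by_cases hx : ‖x‖ < δ
    · rw [Set.indicator_of_mem (Set.mem_Iio.mpr hx) g,
        Set.indicator_of_mem (mem_ball_zero_iff.mpr hx) (fun x => g ‖x‖)]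
    · rw [Set.indicator_of_notMem (by simpa using hx) g,
        Set.indicator_of_notMem (fun hmem => hx (mem_ball_zero_iff.mp hmem)) (fun x => g ‖x‖)]
  have hright : (∫ y in Set.Ioi (0:ℝ), y ^ (n - 1 : ℕ) * (Set.Iio δ).indicator g y)
      = ∫ y in Set.Ioo (0:ℝ) δ, y ^ (n - 1 : ℕ) * g y := by
    rw [show (fun y : ℝ => y ^ (n - 1 : ℕ) * (Set.Iio δ).indicator g y)
        = fun y : ℝ => (Set.Iio δ).indicator (fun y => y ^ (n - 1 : ℕ) * g y) y by
      ext y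
      simp [Set.indicator_apply, mul_ite, mul_zero]]
    rw [setIntegral_indicator measurableSet_Iio, Set.Ioi_inter_Iio]
  rw [hleft, hright] at h
  exact h

lemma omega_eq (hn : 0 < n) :
    ((n : ℝ) * (volume (Metric.ball (0 : EuclideanSpace ℝ (Fin n)) 1)).toReal) *
        ∫ y in Set.Ioi (0:ℝ), y ^ ((n:ℝ) - 1) * (2 / (1 + y ^ 2)) ^ ((n:ℝ))
      = 2 * Real.pi ^ (((n : ℝ) + 1) / 2) / Real.Gamma (((n : ℝ) + 1) / 2) := by
  haveI : Nonempty (Fin n) := Fin.pos_iff_nonempty.mp hn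
  have hn2 : (0:ℝ) < (n:ℝ) / 2 := by positivity
  -- value of the one-dimensional integral
  have h1 : (∫ y in Set.Ioi (0:ℝ), y ^ ((n:ℝ) - 1) * (2 / (1 + y ^ 2)) ^ ((n:ℝ)))
      = 2 ^ ((n:ℝ)) * (Real.Gamma ((n:ℝ)/2) ^ 2 / (2 * Real.Gamma (2 * ((n:ℝ)/2)))) := by
    rw [← halfline_beta hn2, ← integral_const_mul]
    apply setIntegral_congr_fun measurableSet_Ioi
    intro y hy
    have hy0 : (0:ℝ) < y := hy
    have hA : (0:ℝ) < 1 + y ^ 2 := by positivity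
    simp only []
    rw [Real.div_rpow (by norm_num) hA.le, div_eq_mul_inv, ← Real.rpow_neg hA.le]
    rw [show 2 * ((n:ℝ)/2) - 1 = (n:ℝ) - 1 by ring, show 2 * ((n:ℝ)/2) = (n:ℝ) by ring]
    ring
  -- volume of the unit ball
  have h2 : (volume (Metric.ball (0 : EuclideanSpace ℝ (Fin n)) 1)).toReal
      = Real.sqrt π ^ n / Real.Gamma ((n:ℝ) / 2 + 1) := by
    rw [EuclideanSpace.volume_ball, Fintype.card_fin]
    rw [ENNReal.toReal_mul, ENNReal.toReal_pow, ENNReal.toReal_ofReal (by norm_num : (0:ℝ) ≤ 1)]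
    rw [ENNReal.toReal_ofReal (by positivity)]
    simp
  rw [h1, h2]
  have hG2 : Real.Gamma ((n:ℝ)/2) > 0 := Real.Gamma_pos_of_pos hn2
  have hGn : Real.Gamma (2 * ((n:ℝ)/2)) > 0 := Real.Gamma_pos_of_pos (by positivity)
  have hGh : Real.Gamma (((n:ℝ)+1)/2) > 0 := Real.Gamma_pos_of_pos (by positivity)
  have hdup := Real.Gamma_mul_Gamma_add_half ((n:ℝ)/2)
  rw [show (n:ℝ)/2 + 1/2 = ((n:ℝ)+1)/2 by ring] at hdup
  have hGadd : Real.Gamma ((n:ℝ)/2 + 1) = ((n:ℝ)/2) * Real.Gamma ((n:ℝ)/2) :=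
    Real.Gamma_add_one hn2.ne'
  have hsq : Real.sqrt π ^ n = π ^ ((n:ℝ)/2) := by
    rw [Real.sqrt_eq_rpow, ← Real.rpow_natCast (π ^ ((1:ℝ)/2)) n, ← Real.rpow_mul pi_pos.le]
    congr 1
    ring
  have hpi : π ^ ((n:ℝ)/2) * Real.sqrt π = π ^ (((n:ℝ)+1)/2) := by
    rw [Real.sqrt_eq_rpow, ← Real.rpow_add pi_pos]
    congr 1
    ring
  rw [show 2*((n:ℝ)/2) = (n:ℝ) by ring] at hdup hGn ⊢
  rw [Real.rpow_natCast 2 n]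
  have h2pow : (2:ℝ) ^ n * 2 ^ (1 - (n:ℝ)) = 2 := by
    rw [← Real.rpow_natCast 2 n, ← Real.rpow_add (by norm_num : (0:ℝ) < 2),
      show (n:ℝ) + (1 - (n:ℝ)) = 1 by ring, Real.rpow_one]
  have key : (2:ℝ) ^ n * Real.Gamma ((n:ℝ)/2) * Real.Gamma (((n:ℝ)+1)/2)
      = 2 * Real.sqrt π * Real.Gamma (n:ℝ) := by
    linear_combination ((2:ℝ)^n) * hdup + (Real.Gamma (n:ℝ) * Real.sqrt π) * h2pow
  rw [hGadd, hsq]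
  have hne : ((n:ℝ)/2) * Real.Gamma ((n:ℝ)/2) ≠ 0 := by positivity
  field_simp
  linear_combination (π^((n:ℝ)/2)) * key + (2*Real.Gamma (n:ℝ)) * hpi

end radial

lemma integrableOn_ball_of_continuous {n : ℕ} {f : EuclideanSpace ℝ (Fin n) → ℝ}
    (hf : Continuous f) (δ : ℝ) : IntegrableOn f (Metric.ball 0 δ) :=
  (hf.continuousOn.integrableOn_compact (isCompact_closedBall _ _)).mono_set
    Metric.ball_subset_closedBall


set_option maxHeartbeats 2000000 in
/-- The second estimate of Lemma 5.1 of the paper: lower bound for the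
`2n/(n-2k)`-norm of the truncated Sobolev test function `F_ε` on the ball of radius `δ`. -/
theorem test_function_Lp_lower_bound (n k : ℕ) (hk : 2 ≤ k) (hkn : 2 * k < n)
    (δ : ℝ) (hδ0 : 0 < δ) (hδ1 : δ < 1) :
    ∃ C > (0 : ℝ), ∃ ε₀ > (0 : ℝ), ∀ ε : ℝ, 0 < ε → ε < ε₀ →
      (∫ x in Metric.ball (0 : EuclideanSpace ℝ (Fin n)) δ,
          |(2 / (ε + ‖x‖ ^ 2)) ^ (((n : ℝ) - 2 * k) / 2) -
            (2 / (δ ^ 2 + ε)) ^ (((n : ℝ) - 2 * k) / 2) *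
              ∑ j ∈ Finset.range k,
                Real.Gamma ((j : ℝ) + ((n : ℝ) - 2 * k) / 2) /
                    (Real.Gamma ((j : ℝ) + 1) * Real.Gamma (((n : ℝ) - 2 * k) / 2)) *
                  ((δ ^ 2 - ‖x‖ ^ 2) / (δ ^ 2 + ε)) ^ j|
            ^ ((2 * (n : ℝ)) / ((n : ℝ) - 2 * k)))
        ≥ ε ^ (-(n : ℝ) / 2) *
          (2 * Real.pi ^ (((n : ℝ) + 1) / 2) / Real.Gamma (((n : ℝ) + 1) / 2)
            - C * ε ^ (((n : ℝ) - 2 * k) / 2)) := by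
  have hn0 : 0 < n := by omega
  have hnk : (2:ℝ) * k < (n:ℝ) := by exact_mod_cast hkn
  have hk1 : (2:ℝ) ≤ (k:ℝ) := by exact_mod_cast hk
  set p : ℝ := ((n : ℝ) - 2 * k) / 2 with hp_def
  set q : ℝ := (2 * (n : ℝ)) / ((n : ℝ) - 2 * k) with hq_def
  have hnk0 : (0:ℝ) < (n:ℝ) - 2 * k := by linarith
  have hp : 0 < p := by rw [hp_def]; positivity
  have hq1 : 1 ≤ q := by
    rw [hq_def, le_div_iff₀ hnk0]
    have : (0:ℝ) ≤ (k:ℝ) := by positivity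
    linarith
  have hpq : p * q = (n:ℝ) := by
    rw [hp_def, hq_def]; field_simp
  have hσ : p * (q - 1) = ((n:ℝ) + 2 * k) / 2 := by
    rw [hp_def, hq_def]; field_simp; ring
  set σ : ℝ := ((n:ℝ) + 2 * k) / 2 with hσ_def
  -- constants
  set V : ℝ := (volume (Metric.ball (0 : EuclideanSpace ℝ (Fin n)) 1)).toReal with hV_def
  have hV : 0 ≤ V := ENNReal.toReal_nonneg
  set csum : ℝ := ∑ j ∈ Finset.range k,
    Real.Gamma ((j : ℝ) + p) / (Real.Gamma ((j : ℝ) + 1) * Real.Gamma p) with hcsum_def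
  have hcsum_nonneg : 0 ≤ csum := by
    apply Finset.sum_nonneg
    intro j _
    have h1 : 0 < Real.Gamma ((j:ℝ) + p) := Real.Gamma_pos_of_pos (by positivity)
    have h2 : 0 < Real.Gamma ((j:ℝ) + 1) := Real.Gamma_pos_of_pos (by positivity)
    have h3 : 0 < Real.Gamma p := Real.Gamma_pos_of_pos hp
    positivity
  set M : ℝ := (2 / δ ^ 2) ^ p * csum with hM_def
  have hM : 0 < M := by
    rw [hM_def, hcsum_def]
    apply mul_pos (Real.rpow_pos_of_pos (by positivity) p)
    apply Finset.sum_pos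
    · intro j _
      have h1 : 0 < Real.Gamma ((j:ℝ) + p) := Real.Gamma_pos_of_pos (by positivity)
      have h2 : 0 < Real.Gamma ((j:ℝ) + 1) := Real.Gamma_pos_of_pos (by positivity)
      have h3 : 0 < Real.Gamma p := Real.Gamma_pos_of_pos hp
      positivity
    · exact ⟨0, Finset.mem_range.mpr (by omega)⟩
  set J : ℝ := ∫ u in Set.Ioi (0:ℝ), u ^ ((n:ℝ) - 1) * (2 / (1 + u ^ 2)) ^ σ with hJ_def
  have hJ : 0 ≤ J := by
    rw [hJ_def]
    apply setIntegral_nonneg measurableSet_Ioi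
    intro y hy
    have : (0:ℝ) < y := hy
    positivity
  set Tδ : ℝ := 2 ^ ((n:ℝ)) *
    (-δ ^ (((n:ℝ) - 1) - 2 * (n:ℝ) + 1) / (((n:ℝ) - 1) - 2 * (n:ℝ) + 1)) with hT_def
  have hTδ : 0 ≤ Tδ := by
    rw [hT_def]
    have h1 : (0:ℝ) < δ ^ (((n:ℝ) - 1) - 2 * (n:ℝ) + 1) := Real.rpow_pos_of_pos hδ0 _
    have h2 : ((n:ℝ) - 1) - 2 * (n:ℝ) + 1 < 0 := by
      have : (1:ℝ) ≤ (n:ℝ) := by exact_mod_cast hn0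
      linarith
    have := Real.rpow_pos_of_pos (show (0:ℝ) < 2 by norm_num) ((n:ℝ))
    have h3 : 0 ≤ -δ ^ (((n:ℝ) - 1) - 2 * (n:ℝ) + 1) / (((n:ℝ) - 1) - 2 * (n:ℝ) + 1) :=
      div_nonneg_of_nonpos (by linarith) h2.le
    positivity
  refine ⟨(n:ℝ) * V * Tδ + (n:ℝ) * V * (q * M) * J + 1, by positivity, 1, one_pos, ?_⟩
  intro ε hε hε1
  have hεδ : (0:ℝ) < δ ^ 2 + ε := by positivity
  set B := Metric.ball (0 : EuclideanSpace ℝ (Fin n)) δ with hB_def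
  -- continuity facts
  have hGcont : ∀ s : ℝ,
      Continuous (fun x : EuclideanSpace ℝ (Fin n) => (2 / (ε + ‖x‖ ^ 2)) ^ s) := by
    intro s
    have h1 : Continuous fun x : EuclideanSpace ℝ (Fin n) => ε + ‖x‖ ^ 2 :=
      continuous_const.add (continuous_norm.pow 2)
    exact (continuous_const.div h1 (fun x => by positivity)).rpow_const
      (fun x => Or.inl (by positivity : (0:ℝ) < 2 / (ε + ‖x‖ ^ 2)).ne')
  have hFcont : Continuous (fun x : EuclideanSpace ℝ (Fin n) =>
      |(2 / (ε + ‖x‖ ^ 2)) ^ p - (2 / (δ ^ 2 + ε)) ^ p * ∑ j ∈ Finset.range k,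
        Real.Gamma ((j : ℝ) + p) / (Real.Gamma ((j : ℝ) + 1) * Real.Gamma p) *
          ((δ ^ 2 - ‖x‖ ^ 2) / (δ ^ 2 + ε)) ^ j| ^ q) := by
    apply Continuous.rpow_const _ (fun x => Or.inr (by linarith))
    apply Continuous.abs
    apply Continuous.sub (hGcont p)
    apply Continuous.mul continuous_const
    apply continuous_finset_sum
    intro j _
    exact Continuous.mul continuous_const
      (((continuous_const.sub (continuous_norm.pow 2)).div_const _).pow j)
  -- integrability on the ball
  have intFq : IntegrableOn (fun x : EuclideanSpace ℝ (Fin n) =>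
      |(2 / (ε + ‖x‖ ^ 2)) ^ p - (2 / (δ ^ 2 + ε)) ^ p * ∑ j ∈ Finset.range k,
        Real.Gamma ((j : ℝ) + p) / (Real.Gamma ((j : ℝ) + 1) * Real.Gamma p) *
          ((δ ^ 2 - ‖x‖ ^ 2) / (δ ^ 2 + ε)) ^ j| ^ q) B :=
    integrableOn_ball_of_continuous hFcont δ
  have intGn : IntegrableOn
      (fun x : EuclideanSpace ℝ (Fin n) => (2 / (ε + ‖x‖ ^ 2)) ^ ((n:ℝ))) B :=
    integrableOn_ball_of_continuous (hGcont _) δ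
  have intGσ : IntegrableOn
      (fun x : EuclideanSpace ℝ (Fin n) => (2 / (ε + ‖x‖ ^ 2)) ^ σ) B :=
    integrableOn_ball_of_continuous (hGcont _) δ
  -- pointwise lower bound
  have step_pt : ∀ x ∈ B,
      (2 / (ε + ‖x‖ ^ 2)) ^ ((n:ℝ)) - q * M * (2 / (ε + ‖x‖ ^ 2)) ^ σ ≤
        |(2 / (ε + ‖x‖ ^ 2)) ^ p - (2 / (δ ^ 2 + ε)) ^ p * ∑ j ∈ Finset.range k,
          Real.Gamma ((j : ℝ) + p) / (Real.Gamma ((j : ℝ) + 1) * Real.Gamma p) *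
            ((δ ^ 2 - ‖x‖ ^ 2) / (δ ^ 2 + ε)) ^ j| ^ q := by
    intro x hx
    have hxδ : ‖x‖ < δ := mem_ball_zero_iff.mp hx
    have hx2 : ‖x‖ ^ 2 < δ ^ 2 := by
      apply pow_lt_pow_left₀ hxδ (norm_nonneg x) (by norm_num)
    have hbase : (0:ℝ) < 2 / (ε + ‖x‖ ^ 2) := by positivity
    have hterm : ∀ j ∈ Finset.range k,
        (0:ℝ) ≤ Real.Gamma ((j : ℝ) + p) / (Real.Gamma ((j : ℝ) + 1) * Real.Gamma p) *
          ((δ ^ 2 - ‖x‖ ^ 2) / (δ ^ 2 + ε)) ^ j := by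
      intro j _
      have h1 : 0 < Real.Gamma ((j:ℝ) + p) := Real.Gamma_pos_of_pos (by positivity)
      have h2 : 0 < Real.Gamma ((j:ℝ) + 1) := Real.Gamma_pos_of_pos (by positivity)
      have h3 : 0 < Real.Gamma p := Real.Gamma_pos_of_pos hp
      have h4 : (0:ℝ) ≤ (δ ^ 2 - ‖x‖ ^ 2) / (δ ^ 2 + ε) := by
        apply div_nonneg (by linarith) hεδ.le
      positivity
    have hs0 : (0:ℝ) ≤ (2 / (δ ^ 2 + ε)) ^ p * ∑ j ∈ Finset.range k,
        Real.Gamma ((j : ℝ) + p) / (Real.Gamma ((j : ℝ) + 1) * Real.Gamma p) *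
          ((δ ^ 2 - ‖x‖ ^ 2) / (δ ^ 2 + ε)) ^ j := by
      apply mul_nonneg (Real.rpow_nonneg (by positivity) p)
      exact Finset.sum_nonneg hterm
    have hsM : (2 / (δ ^ 2 + ε)) ^ p * (∑ j ∈ Finset.range k,
        Real.Gamma ((j : ℝ) + p) / (Real.Gamma ((j : ℝ) + 1) * Real.Gamma p) *
          ((δ ^ 2 - ‖x‖ ^ 2) / (δ ^ 2 + ε)) ^ j) ≤ M := by
      rw [hM_def]
      apply mul_le_mul
      · apply Real.rpow_le_rpow (by positivity) _ hp.le
        apply div_le_div_of_nonneg_left (by norm_num) (by positivity) (by linarith)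
      · rw [hcsum_def]
        apply Finset.sum_le_sum
        intro j _
        have h1 : 0 < Real.Gamma ((j:ℝ) + p) := Real.Gamma_pos_of_pos (by positivity)
        have h2 : 0 < Real.Gamma ((j:ℝ) + 1) := Real.Gamma_pos_of_pos (by positivity)
        have h3 : 0 < Real.Gamma p := Real.Gamma_pos_of_pos hp
        have h4 : ((δ ^ 2 - ‖x‖ ^ 2) / (δ ^ 2 + ε)) ^ j ≤ 1 := by
          apply pow_le_one₀ (div_nonneg (by linarith) hεδ.le)
          rw [div_le_one hεδ]
          linarith [sq_nonneg ‖x‖]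
        calc Real.Gamma ((j : ℝ) + p) / (Real.Gamma ((j : ℝ) + 1) * Real.Gamma p) *
              ((δ ^ 2 - ‖x‖ ^ 2) / (δ ^ 2 + ε)) ^ j
            ≤ Real.Gamma ((j : ℝ) + p) / (Real.Gamma ((j : ℝ) + 1) * Real.Gamma p) * 1 := by
              apply mul_le_mul_of_nonneg_left h4 (by positivity)
          _ = Real.Gamma ((j : ℝ) + p) / (Real.Gamma ((j : ℝ) + 1) * Real.Gamma p) := mul_one _
      · exact Finset.sum_nonneg hterm
      · exact Real.rpow_nonneg (by positivity) p
    have h := key_pt (a := (2 / (ε + ‖x‖ ^ 2)) ^ p)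
      (Real.rpow_nonneg hbase.le p) hs0 hsM hM hq1
    have ea : ((2 / (ε + ‖x‖ ^ 2)) ^ p) ^ q = (2 / (ε + ‖x‖ ^ 2)) ^ ((n:ℝ)) := by
      rw [← Real.rpow_mul hbase.le, hpq]
    have eb : ((2 / (ε + ‖x‖ ^ 2)) ^ p) ^ (q - 1) = (2 / (ε + ‖x‖ ^ 2)) ^ σ := by
      rw [← Real.rpow_mul hbase.le, hσ]
    rw [ea, eb] at h
    exact h
  -- integral comparison on the ball
  have step1 : ∫ x in B, ((2 / (ε + ‖x‖ ^ 2)) ^ ((n:ℝ)) - q * M * (2 / (ε + ‖x‖ ^ 2)) ^ σ) ≤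
      ∫ x in B, |(2 / (ε + ‖x‖ ^ 2)) ^ p - (2 / (δ ^ 2 + ε)) ^ p * ∑ j ∈ Finset.range k,
        Real.Gamma ((j : ℝ) + p) / (Real.Gamma ((j : ℝ) + 1) * Real.Gamma p) *
          ((δ ^ 2 - ‖x‖ ^ 2) / (δ ^ 2 + ε)) ^ j| ^ q := by
    apply setIntegral_mono_on _ intFq measurableSet_ball step_pt
    exact intGn.sub (intGσ.const_mul _)
  have split : ∫ x in B, ((2 / (ε + ‖x‖ ^ 2)) ^ ((n:ℝ)) - q * M * (2 / (ε + ‖x‖ ^ 2)) ^ σ) =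
      (∫ x in B, (2 / (ε + ‖x‖ ^ 2)) ^ ((n:ℝ))) -
        q * M * ∫ x in B, (2 / (ε + ‖x‖ ^ 2)) ^ σ := by
    rw [integral_sub intGn (intGσ.const_mul _), integral_const_mul]
  -- radial reduction
  have conv : ∀ s : ℝ, (∫ y in Set.Ioo (0:ℝ) δ, y ^ (n - 1 : ℕ) * (2 / (ε + y ^ 2)) ^ s)
      = ∫ y in Set.Ioo (0:ℝ) δ, y ^ ((n:ℝ) - 1) * (2 / (ε + y ^ 2)) ^ s := by
    intro s
    apply setIntegral_congr_fun measurableSet_Ioo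
    intro y hy
    simp only []
    rw [← Real.rpow_natCast y (n - 1), Nat.cast_sub hn0, Nat.cast_one]
  have rad_n : (∫ x in B, (2 / (ε + ‖x‖ ^ 2)) ^ ((n:ℝ)))
      = ((n:ℝ) * V) * ∫ y in Set.Ioo (0:ℝ) δ, y ^ ((n:ℝ) - 1) * (2 / (ε + y ^ 2)) ^ ((n:ℝ)) := by
    rw [← conv]
    exact radial_ball hn0 (fun y => (2 / (ε + y ^ 2)) ^ ((n:ℝ)))
  have rad_σ : (∫ x in B, (2 / (ε + ‖x‖ ^ 2)) ^ σ)
      = ((n:ℝ) * V) * ∫ y in Set.Ioo (0:ℝ) δ, y ^ ((n:ℝ) - 1) * (2 / (ε + y ^ 2)) ^ σ := by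
    rw [← conv]
    exact radial_ball hn0 (fun y => (2 / (ε + y ^ 2)) ^ σ)
  -- one-dimensional estimates
  have hm0 : (0:ℝ) ≤ (n:ℝ) - 1 := by
    have : (1:ℝ) ≤ (n:ℝ) := by exact_mod_cast hn0
    linarith
  have hm0' : (0:ℝ) < (n:ℝ) - 1 := by
    have : (2:ℝ) ≤ (n:ℝ) := by
      have : 2 ≤ n := by omega
      exact_mod_cast this
    linarith
  have hncast : (0:ℝ) ≤ (n:ℝ) := by positivity
  have hdec_n : ((n:ℝ) - 1) - 2 * (n:ℝ) < -1 := by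
    have : (0:ℝ) < (n:ℝ) := by exact_mod_cast hn0
    linarith
  have hσpos : (0:ℝ) ≤ σ := by rw [hσ_def]; positivity
  have hdec_σ : ((n:ℝ) - 1) - 2 * σ < -1 := by
    rw [hσ_def]
    have : (0:ℝ) ≤ (k:ℝ) := by positivity
    linarith
  have int_n_Ioi : IntegrableOn
      (fun y : ℝ => y ^ ((n:ℝ) - 1) * (2 / (ε + y ^ 2)) ^ ((n:ℝ))) (Set.Ioi 0) :=
    profile_integrableOn_Ioi_zero hm0' hncast hε hdec_n
  have int_σ_Ioi : IntegrableOn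
      (fun y : ℝ => y ^ ((n:ℝ) - 1) * (2 / (ε + y ^ 2)) ^ σ) (Set.Ioi 0) :=
    profile_integrableOn_Ioi_zero hm0' hσpos hε hdec_σ
  -- split the n-integral
  have hunion : Set.Ioo (0:ℝ) δ ∪ Set.Ici δ = Set.Ioi 0 := Set.Ioo_union_Ici_eq_Ioi hδ0
  have hdisj : Disjoint (Set.Ioo (0:ℝ) δ) (Set.Ici δ) := by
    rw [Set.disjoint_left]
    rintro y ⟨_, h2⟩ h3
    exact absurd (Set.mem_Ici.mp h3) (not_le.mpr h2)
  have hsplit_n : (∫ y in Set.Ioi (0:ℝ), y ^ ((n:ℝ) - 1) * (2 / (ε + y ^ 2)) ^ ((n:ℝ)))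
      = (∫ y in Set.Ioo (0:ℝ) δ, y ^ ((n:ℝ) - 1) * (2 / (ε + y ^ 2)) ^ ((n:ℝ)))
        + ∫ y in Set.Ici δ, y ^ ((n:ℝ) - 1) * (2 / (ε + y ^ 2)) ^ ((n:ℝ)) := by
    rw [← hunion]
    exact setIntegral_union hdisj measurableSet_Ici
      (int_n_Ioi.mono_set (by rw [← hunion]; exact Set.subset_union_left))
      (int_n_Ioi.mono_set (by rw [← hunion]; exact Set.subset_union_right))
  have tail_n : (∫ y in Set.Ici δ, y ^ ((n:ℝ) - 1) * (2 / (ε + y ^ 2)) ^ ((n:ℝ))) ≤ Tδ := by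
    rw [hT_def, integral_Ici_eq_integral_Ioi]
    exact profile_tail_bound hm0 hncast hε.le hdec_n hδ0
  have scale_n : (∫ y in Set.Ioi (0:ℝ), y ^ ((n:ℝ) - 1) * (2 / (ε + y ^ 2)) ^ ((n:ℝ)))
      = ε ^ (-(n:ℝ) / 2) *
        ∫ u in Set.Ioi (0:ℝ), u ^ ((n:ℝ) - 1) * (2 / (1 + u ^ 2)) ^ ((n:ℝ)) := by
    rw [profile_scaling hn0 hncast hε]
    congr 2
    ring
  -- σ-term bound
  have bound_σ : (∫ y in Set.Ioo (0:ℝ) δ, y ^ ((n:ℝ) - 1) * (2 / (ε + y ^ 2)) ^ σ)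
      ≤ ε ^ (-(k:ℝ)) * J := by
    have h1 : (∫ y in Set.Ioo (0:ℝ) δ, y ^ ((n:ℝ) - 1) * (2 / (ε + y ^ 2)) ^ σ)
        ≤ ∫ y in Set.Ioi (0:ℝ), y ^ ((n:ℝ) - 1) * (2 / (ε + y ^ 2)) ^ σ := by
      apply setIntegral_mono_set int_σ_Ioi
      · filter_upwards [ae_restrict_mem measurableSet_Ioi] with y hy
        have : (0:ℝ) < y := hy
        positivity
      · exact HasSubset.Subset.eventuallyLE Set.Ioo_subset_Ioi_self
    have h2 : (∫ y in Set.Ioi (0:ℝ), y ^ ((n:ℝ) - 1) * (2 / (ε + y ^ 2)) ^ σ)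
        = ε ^ (-(k:ℝ)) * J := by
      rw [profile_scaling hn0 hσpos hε, hJ_def]
      congr 2
      rw [hσ_def]
      ring
    linarith
  -- put everything together
  have homega := omega_eq (n := n) hn0
  set ω : ℝ := 2 * Real.pi ^ (((n : ℝ) + 1) / 2) / Real.Gamma (((n : ℝ) + 1) / 2) with hω_def
  set Iinf : ℝ := ∫ u in Set.Ioi (0:ℝ), u ^ ((n:ℝ) - 1) * (2 / (1 + u ^ 2)) ^ ((n:ℝ)) with hI_def
  -- lower bound for the Set.Ioo n-integral
  have A1_lb : ε ^ (-(n:ℝ) / 2) * Iinf - Tδ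
      ≤ ∫ y in Set.Ioo (0:ℝ) δ, y ^ ((n:ℝ) - 1) * (2 / (ε + y ^ 2)) ^ ((n:ℝ)) := by
    have := hsplit_n
    rw [scale_n] at this
    linarith
  have hnV : (0:ℝ) ≤ (n:ℝ) * V := by positivity
  have hqM : (0:ℝ) ≤ q * M := by positivity
  have hek : ε ^ (-(n:ℝ) / 2) * ε ^ p = ε ^ (-(k:ℝ)) := by
    rw [← Real.rpow_add hε, hp_def]
    congr 1
    ring
  have h1ek : 1 ≤ ε ^ (-(k:ℝ)) := by
    apply Real.one_le_rpow_of_pos_of_le_one_of_nonpos hε hε1.le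
    simp
  have hekpos : (0:ℝ) < ε ^ (-(k:ℝ)) := Real.rpow_pos_of_pos hε _
  rw [ge_iff_le]
  calc ε ^ (-(n:ℝ) / 2) * (ω - ((n:ℝ) * V * Tδ + (n:ℝ) * V * (q * M) * J + 1) * ε ^ p)
      = ε ^ (-(n:ℝ) / 2) * ω
        - ((n:ℝ) * V * Tδ + (n:ℝ) * V * (q * M) * J + 1) * (ε ^ (-(n:ℝ) / 2) * ε ^ p) := by
        ring
    _ = ε ^ (-(n:ℝ) / 2) * ω
        - ((n:ℝ) * V * Tδ + (n:ℝ) * V * (q * M) * J + 1) * ε ^ (-(k:ℝ)) := by rw [hek]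
    _ ≤ ε ^ (-(n:ℝ) / 2) * ω - ((n:ℝ) * V * Tδ + (n:ℝ) * V * (q * M) * (ε ^ (-(k:ℝ)) * J)) := by
        apply sub_le_sub_left
        have e1 : (n:ℝ) * V * Tδ ≤ (n:ℝ) * V * Tδ * ε ^ (-(k:ℝ)) :=
          le_mul_of_one_le_right (mul_nonneg hnV hTδ) h1ek
        have e2 : (n:ℝ) * V * (q * M) * (ε ^ (-(k:ℝ)) * J)
            = ((n:ℝ) * V * (q * M) * J) * ε ^ (-(k:ℝ)) := by ring
        rw [e2]
        have e3 : (0:ℝ) ≤ ε ^ (-(k:ℝ)) := hekpos.le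
        calc (n:ℝ) * V * Tδ + ((n:ℝ) * V * (q * M) * J) * ε ^ (-(k:ℝ))
            ≤ (n:ℝ) * V * Tδ * ε ^ (-(k:ℝ)) + ((n:ℝ) * V * (q * M) * J) * ε ^ (-(k:ℝ))
              + 1 * ε ^ (-(k:ℝ)) := by
              have : (0:ℝ) ≤ 1 * ε ^ (-(k:ℝ)) := by linarith
              linarith
          _ = ((n:ℝ) * V * Tδ + (n:ℝ) * V * (q * M) * J + 1) * ε ^ (-(k:ℝ)) := by ring
    _ = ((n:ℝ) * V) * (ε ^ (-(n:ℝ) / 2) * Iinf - Tδ)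
        - q * M * (((n:ℝ) * V) * (ε ^ (-(k:ℝ)) * J)) := by
        have e4 : ε ^ (-(n:ℝ) / 2) * ω = ((n:ℝ) * V) * (ε ^ (-(n:ℝ) / 2) * Iinf) := by
          rw [← homega]; ring
        rw [e4]
        ring
    _ ≤ ((n:ℝ) * V) * (∫ y in Set.Ioo (0:ℝ) δ, y ^ ((n:ℝ) - 1) * (2 / (ε + y ^ 2)) ^ ((n:ℝ)))
        - q * M * (((n:ℝ) * V) * ∫ y in Set.Ioo (0:ℝ) δ, y ^ ((n:ℝ) - 1) * (2 / (ε + y ^ 2)) ^ σ) := by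
        have e1 := mul_le_mul_of_nonneg_left A1_lb hnV
        have e2 := mul_le_mul_of_nonneg_left (mul_le_mul_of_nonneg_left bound_σ hnV) hqM
        exact sub_le_sub e1 e2
    _ = ∫ x in B, ((2 / (ε + ‖x‖ ^ 2)) ^ ((n:ℝ)) - q * M * (2 / (ε + ‖x‖ ^ 2)) ^ σ) := by
        rw [split, rad_n, rad_σ]
    _ ≤ _ := step1
end

section
/- Let k, n be integers with 2 ≤ k and n > 4k, and let 0 < δ < 1 be fixed. For ε > 0 define F_ε : B_δ → ℝ on the ball B_δ = {x ∈ ℝ^n : |x| < δ} by F_ε(x) = (2/(ε+|x|²))^{(n-2k)/2} − (2/(δ²+ε))^{(n-2k)/2} · ∑_{j=0}^{k-1} [Γ(j+(n-2k)/2)/(Γ(j+1)Γ((n-2k)/2))] · ((δ²−|x|²)/(δ²+ε))^j. Then there exist constants 0 < c ≤ C and ε₀ > 0 such that for all 0 < ε < ε₀, c · ε^{2k-n/2} ≤ ∫_{B_δ} F_ε(x)² · (2/(1-|x|²))^{2k} dx ≤ C · ε^{2k-n/2}. -/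
open MeasureTheory Real Finset Metric

noncomputable def Ffun (n k : ℕ) (δ ε : ℝ) (x : EuclideanSpace ℝ (Fin n)) : ℝ :=
  (2 / (ε + ‖x‖ ^ 2)) ^ (((n : ℝ) - 2 * k) / 2) -
    (2 / (δ ^ 2 + ε)) ^ (((n : ℝ) - 2 * k) / 2) *
      ∑ j ∈ Finset.range k,
        Real.Gamma ((j : ℝ) + ((n : ℝ) - 2 * k) / 2) /
            (Real.Gamma ((j : ℝ) + 1) * Real.Gamma (((n : ℝ) - 2 * k) / 2)) *
          ((δ ^ 2 - ‖x‖ ^ 2) / (δ ^ 2 + ε)) ^ j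

noncomputable def wfun (n k : ℕ) (x : EuclideanSpace ℝ (Fin n)) : ℝ :=
  (2 / (1 - ‖x‖ ^ 2)) ^ (2 * k)

lemma sq_rpow' (a b : ℝ) (ha : 0 ≤ a) : (a ^ b) ^ (2:ℕ) = a ^ (2 * b) := by
  rw [← Real.rpow_natCast (a ^ b) 2, ← Real.rpow_mul ha]
  norm_num [mul_comm]

section Main

variable (n k : ℕ) (δ : ℝ)

local notation "E" => EuclideanSpace ℝ (Fin n)
local notation "p" => (((n : ℝ) - 2 * k) / 2)

lemma cont_A (q ε : ℝ) (hε : 0 < ε) :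
    Continuous fun x : E => (2 / (ε + ‖x‖ ^ 2)) ^ q := by
  have h1 : Continuous fun x : E => ε + ‖x‖ ^ 2 := by continuity
  have h2 : Continuous fun x : E => 2 / (ε + ‖x‖ ^ 2) :=
    continuous_const.div h1 (fun x => by positivity)
  exact h2.rpow_const fun x => Or.inl (by positivity)

lemma integrable_h (hp : 0 < p) (hnp : (n : ℝ) < 4 * p) :
    Integrable (fun y : E => ((2 / (1 + ‖y‖ ^ 2)) ^ p) ^ (2:ℕ)) := by
  have hint : Integrable (fun y : E => (4:ℝ) ^ (2 * p) * (1 + ‖y‖) ^ (-(4 * p))) := by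
    refine (integrable_one_add_norm ?_).const_mul _
    rwa [finrank_euclideanSpace_fin]
  refine hint.mono' ((cont_A n _ 1 one_pos).pow 2).aestronglyMeasurable ?_
  filter_upwards with y
  have hy : (0:ℝ) ≤ ‖y‖ := norm_nonneg y
  have h0 : (0:ℝ) < 1 + ‖y‖ ^ 2 := by positivity
  have h1 : (0:ℝ) < 1 + ‖y‖ := by positivity
  have hle : 2 / (1 + ‖y‖ ^ 2) ≤ 4 / (1 + ‖y‖) ^ 2 := by
    rw [div_le_div_iff₀ h0 (by positivity)]
    nlinarith [sq_nonneg (1 - ‖y‖)]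
  have hbnd : ((2 / (1 + ‖y‖ ^ 2)) ^ p) ^ (2:ℕ) ≤ (4:ℝ) ^ (2 * p) * (1 + ‖y‖) ^ (-(4 * p)) := by
    rw [sq_rpow' _ _ (by positivity)]
    calc (2 / (1 + ‖y‖ ^ 2)) ^ (2 * p) ≤ (4 / (1 + ‖y‖) ^ 2) ^ (2 * p) :=
          Real.rpow_le_rpow (by positivity) hle (by positivity)
      _ = (4:ℝ) ^ (2 * p) * (1 + ‖y‖) ^ (-(4 * p)) := by
          rw [Real.div_rpow (by norm_num) (by positivity), ← Real.rpow_natCast (1 + ‖y‖) 2,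
            ← Real.rpow_mul h1.le, Real.rpow_neg h1.le, div_eq_mul_inv]
          push_cast
          ring_nf
  rw [Real.norm_eq_abs, abs_of_nonneg (by positivity)]
  exact hbnd

lemma cont_F (ε : ℝ) (hε : 0 < ε) : Continuous (Ffun n k δ ε) := by
  unfold Ffun
  refine (cont_A n _ ε hε).sub (continuous_const.mul ?_)
  refine continuous_finset_sum _ fun j _ => continuous_const.mul ?_
  exact ((continuous_const.sub ((continuous_norm.pow 2))).div_const _).pow j

lemma contOn_w (hδ1 : δ < 1) :
    ContinuousOn (wfun n k) (closedBall (0 : E) δ) := by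
  unfold wfun
  refine ContinuousOn.pow ?_ _
  refine continuousOn_const.div (Continuous.continuousOn (by continuity)) ?_
  intro x hx
  simp only [mem_closedBall, dist_zero_right] at hx
  have h0 := norm_nonneg x
  have h1 : ‖x‖ < 1 := lt_of_le_of_lt hx hδ1
  nlinarith

lemma integrableOn_g (ε : ℝ) (hε : 0 < ε) (hδ1 : δ < 1) :
    IntegrableOn (fun x => (Ffun n k δ ε x) ^ 2 * wfun n k x) (ball (0 : E) δ) := by
  have h : IntegrableOn (fun x => (Ffun n k δ ε x) ^ 2 * wfun n k x) (closedBall (0 : E) δ) := by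
    apply ContinuousOn.integrableOn_compact (isCompact_closedBall _ _)
    exact (((cont_F n k δ ε hε).pow 2).continuousOn).mul (contOn_w n k δ hδ1)
  exact h.mono_set ball_subset_closedBall

end Main

set_option maxHeartbeats 3200000 in
/-- The third estimate of Lemma 5.1 of the paper: for `n > 4k` the weighted `L²`-norm
of the truncated Sobolev test function `F_ε` is comparable to `ε^{2k - n/2}`. -/
theorem test_function_L2_asymptotics (n k : ℕ) (hk : 2 ≤ k) (hn : 4 * k < n)
    (δ : ℝ) (hδ0 : 0 < δ) (hδ1 : δ < 1) :
    ∃ c C ε₀ : ℝ, 0 < c ∧ c ≤ C ∧ 0 < ε₀ ∧ ∀ ε : ℝ, 0 < ε → ε < ε₀ →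
      c * ε ^ (2 * (k : ℝ) - (n : ℝ) / 2)
        ≤ (∫ x in Metric.ball (0 : EuclideanSpace ℝ (Fin n)) δ,
            ((2 / (ε + ‖x‖ ^ 2)) ^ (((n : ℝ) - 2 * k) / 2) -
              (2 / (δ ^ 2 + ε)) ^ (((n : ℝ) - 2 * k) / 2) *
                ∑ j ∈ Finset.range k,
                  Real.Gamma ((j : ℝ) + ((n : ℝ) - 2 * k) / 2) /
                      (Real.Gamma ((j : ℝ) + 1) * Real.Gamma (((n : ℝ) - 2 * k) / 2)) *
                    ((δ ^ 2 - ‖x‖ ^ 2) / (δ ^ 2 + ε)) ^ j) ^ 2 *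
            (2 / (1 - ‖x‖ ^ 2)) ^ (2 * k))
      ∧ (∫ x in Metric.ball (0 : EuclideanSpace ℝ (Fin n)) δ,
            ((2 / (ε + ‖x‖ ^ 2)) ^ (((n : ℝ) - 2 * k) / 2) -
              (2 / (δ ^ 2 + ε)) ^ (((n : ℝ) - 2 * k) / 2) *
                ∑ j ∈ Finset.range k,
                  Real.Gamma ((j : ℝ) + ((n : ℝ) - 2 * k) / 2) /
                      (Real.Gamma ((j : ℝ) + 1) * Real.Gamma (((n : ℝ) - 2 * k) / 2)) *
                    ((δ ^ 2 - ‖x‖ ^ 2) / (δ ^ 2 + ε)) ^ j) ^ 2 *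
            (2 / (1 - ‖x‖ ^ 2)) ^ (2 * k))
          ≤ C * ε ^ (2 * (k : ℝ) - (n : ℝ) / 2) := by
  show ∃ c C ε₀ : ℝ, 0 < c ∧ c ≤ C ∧ 0 < ε₀ ∧ ∀ ε : ℝ, 0 < ε → ε < ε₀ →
      c * ε ^ (2 * (k : ℝ) - (n : ℝ) / 2)
        ≤ (∫ x in Metric.ball (0 : EuclideanSpace ℝ (Fin n)) δ,
            (Ffun n k δ ε x) ^ 2 * wfun n k x)
      ∧ (∫ x in Metric.ball (0 : EuclideanSpace ℝ (Fin n)) δ,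
            (Ffun n k δ ε x) ^ 2 * wfun n k x)
          ≤ C * ε ^ (2 * (k : ℝ) - (n : ℝ) / 2)
  have h4 : (4 : ℝ) * k < n := by exact_mod_cast hn
  have hk0 : (0 : ℝ) ≤ (k : ℝ) := Nat.cast_nonneg k
  have hk2 : (2 : ℝ) ≤ (k : ℝ) := by exact_mod_cast hk
  set p : ℝ := ((n : ℝ) - 2 * k) / 2 with hp_def
  have hp : 0 < p := by rw [hp_def]; linarith
  have hnp : (n : ℝ) < 4 * p := by rw [hp_def]; linarith
  set e : ℝ := 2 * (k : ℝ) - (n : ℝ) / 2 with he_def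
  have he_neg : e < 0 := by rw [he_def]; linarith
  have he_eq : 2 * (-p) + (n : ℝ) / 2 = e := by rw [he_def, hp_def]; ring
  haveI : Nonempty (Fin n) := ⟨⟨0, by omega⟩⟩
  haveI : Nontrivial (EuclideanSpace ℝ (Fin n)) := by infer_instance
  -- basic positive quantities
  have hGpos : ∀ j : ℕ,
      0 < Real.Gamma ((j : ℝ) + p) / (Real.Gamma ((j : ℝ) + 1) * Real.Gamma p) := fun j =>
    div_pos (Real.Gamma_pos_of_pos (by positivity))
      (mul_pos (Real.Gamma_pos_of_pos (by positivity)) (Real.Gamma_pos_of_pos hp))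
  set K : ℝ := ∑ j ∈ Finset.range k,
      Real.Gamma ((j : ℝ) + p) / (Real.Gamma ((j : ℝ) + 1) * Real.Gamma p) with hK_def
  have hK0 : 0 ≤ K := Finset.sum_nonneg fun j _ => (hGpos j).le
  set B₀ : ℝ := (2 / δ ^ 2) ^ p * K with hB₀_def
  have hB₀0 : 0 ≤ B₀ := mul_nonneg (Real.rpow_nonneg (by positivity) p) hK0
  have hδsq : (0:ℝ) < 1 - δ ^ 2 := by nlinarith
  set W : ℝ := (2 / (1 - δ ^ 2)) ^ (2 * k) with hW_def
  have hW0 : 0 < W := by rw [hW_def]; positivity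
  set V : ℝ := (volume (ball (0 : EuclideanSpace ℝ (Fin n)) 1)).toReal with hV_def
  have hV : 0 < V := by
    rw [hV_def]
    exact ENNReal.toReal_pos (measure_ball_pos volume _ one_pos).ne' measure_ball_lt_top.ne
  set Ih : ℝ := ∫ y : EuclideanSpace ℝ (Fin n), ((2 / (1 + ‖y‖ ^ 2)) ^ p) ^ (2:ℕ) with hIh_def
  have hIh0 : 0 ≤ Ih := integral_nonneg fun y => by positivity
  have h_int : Integrable (fun y : EuclideanSpace ℝ (Fin n) =>
      ((2 / (1 + ‖y‖ ^ 2)) ^ p) ^ (2:ℕ)) := integrable_h n k hp hnp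
  -- nonnegativity of integrand
  have hw_nonneg : ∀ x : EuclideanSpace ℝ (Fin n), 0 ≤ wfun n k x := by
    intro x
    show 0 ≤ (2 / (1 - ‖x‖ ^ 2)) ^ (2 * k)
    rw [pow_mul]
    exact pow_nonneg (sq_nonneg _) k
  have hg_nonneg : ∀ (ε : ℝ) (x : EuclideanSpace ℝ (Fin n)),
      0 ≤ (Ffun n k δ ε x) ^ 2 * wfun n k x := fun ε x =>
    mul_nonneg (sq_nonneg _) (hw_nonneg x)
  -- bounds on the subtracted term
  have hB' : ∀ ε : ℝ, 0 < ε → ∀ x : EuclideanSpace ℝ (Fin n), x ∈ ball (0 : EuclideanSpace ℝ (Fin n)) δ →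
      0 ≤ (2 / (δ ^ 2 + ε)) ^ p * (∑ j ∈ Finset.range k,
          Real.Gamma ((j : ℝ) + p) / (Real.Gamma ((j : ℝ) + 1) * Real.Gamma p) *
            ((δ ^ 2 - ‖x‖ ^ 2) / (δ ^ 2 + ε)) ^ j) ∧
      (2 / (δ ^ 2 + ε)) ^ p * (∑ j ∈ Finset.range k,
          Real.Gamma ((j : ℝ) + p) / (Real.Gamma ((j : ℝ) + 1) * Real.Gamma p) *
            ((δ ^ 2 - ‖x‖ ^ 2) / (δ ^ 2 + ε)) ^ j) ≤ B₀ := by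
    intro ε hε x hx
    have hx' : ‖x‖ < δ := mem_ball_zero_iff.1 hx
    have hx0 := norm_nonneg x
    have hxx : ‖x‖ ^ 2 < δ ^ 2 := by nlinarith
    have hden : 0 < δ ^ 2 + ε := by positivity
    have hr0 : 0 ≤ (δ ^ 2 - ‖x‖ ^ 2) / (δ ^ 2 + ε) := div_nonneg (by linarith) hden.le
    have hr1 : (δ ^ 2 - ‖x‖ ^ 2) / (δ ^ 2 + ε) ≤ 1 := by
      rw [div_le_one hden]; nlinarith
    have hS0 : 0 ≤ ∑ j ∈ Finset.range k,
        Real.Gamma ((j : ℝ) + p) / (Real.Gamma ((j : ℝ) + 1) * Real.Gamma p) *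
          ((δ ^ 2 - ‖x‖ ^ 2) / (δ ^ 2 + ε)) ^ j :=
      Finset.sum_nonneg fun j _ => mul_nonneg (hGpos j).le (pow_nonneg hr0 j)
    have hSK : (∑ j ∈ Finset.range k,
        Real.Gamma ((j : ℝ) + p) / (Real.Gamma ((j : ℝ) + 1) * Real.Gamma p) *
          ((δ ^ 2 - ‖x‖ ^ 2) / (δ ^ 2 + ε)) ^ j) ≤ K := by
      rw [hK_def]
      refine Finset.sum_le_sum fun j _ => ?_
      have h1 : ((δ ^ 2 - ‖x‖ ^ 2) / (δ ^ 2 + ε)) ^ j ≤ 1 := pow_le_one₀ hr0 hr1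
      calc Real.Gamma ((j : ℝ) + p) / (Real.Gamma ((j : ℝ) + 1) * Real.Gamma p) *
            ((δ ^ 2 - ‖x‖ ^ 2) / (δ ^ 2 + ε)) ^ j
          ≤ Real.Gamma ((j : ℝ) + p) / (Real.Gamma ((j : ℝ) + 1) * Real.Gamma p) * 1 :=
            mul_le_mul_of_nonneg_left h1 (hGpos j).le
        _ = _ := mul_one _
    have hbase : (0:ℝ) < 2 / (δ ^ 2 + ε) := by positivity
    have hbase' : 2 / (δ ^ 2 + ε) ≤ 2 / δ ^ 2 :=
      div_le_div_of_nonneg_left (by norm_num) (by positivity) (by linarith)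
    have hrp : (2 / (δ ^ 2 + ε)) ^ p ≤ (2 / δ ^ 2) ^ p :=
      Real.rpow_le_rpow hbase.le hbase' hp.le
    refine ⟨mul_nonneg (Real.rpow_nonneg hbase.le p) hS0, ?_⟩
    rw [hB₀_def]
    exact mul_le_mul hrp hSK hS0 (Real.rpow_nonneg (by positivity) p)
  -- scaling identity for the leading term
  have hscale : ∀ ε : ℝ, 0 < ε → ∀ x : EuclideanSpace ℝ (Fin n),
      ((2 / (1 + ‖(Real.sqrt ε)⁻¹ • x‖ ^ 2)) ^ p) ^ (2:ℕ)
        = ε ^ (2 * p) * ((2 / (ε + ‖x‖ ^ 2)) ^ p) ^ (2:ℕ) := by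
    intro ε hε x
    have hs0 : (0:ℝ) ≤ (Real.sqrt ε)⁻¹ := by positivity
    have hns : ‖(Real.sqrt ε)⁻¹ • x‖ ^ 2 = ε⁻¹ * ‖x‖ ^ 2 := by
      rw [norm_smul, Real.norm_eq_abs, abs_of_nonneg hs0, mul_pow, ← Real.sqrt_inv,
        Real.sq_sqrt (inv_nonneg.2 hε.le)]
    have hd : 1 + ε⁻¹ * ‖x‖ ^ 2 = ε⁻¹ * (ε + ‖x‖ ^ 2) := by
      field_simp
    have hbase : 2 / (1 + ‖(Real.sqrt ε)⁻¹ • x‖ ^ 2) = ε * (2 / (ε + ‖x‖ ^ 2)) := by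
      have h0 : ε + ‖x‖ ^ 2 ≠ 0 := by positivity
      rw [hns, hd]
      field_simp
    rw [hbase, Real.mul_rpow hε.le (by positivity), mul_pow, sq_rpow' ε p hε.le]
  -- the integral of the leading term over all of space
  have hIA : ∀ ε : ℝ, 0 < ε →
      (∫ x : EuclideanSpace ℝ (Fin n), ((2 / (ε + ‖x‖ ^ 2)) ^ p) ^ (2:ℕ)) = Ih * ε ^ e := by
    intro ε hε
    have hsε : (0:ℝ) < Real.sqrt ε := Real.sqrt_pos.2 hε
    have hεp : (0:ℝ) < ε ^ (2 * p) := Real.rpow_pos_of_pos hε _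
    have h1 : (∫ x : EuclideanSpace ℝ (Fin n),
        ((2 / (1 + ‖(Real.sqrt ε)⁻¹ • x‖ ^ 2)) ^ p) ^ (2:ℕ))
        = (Real.sqrt ε) ^ n • Ih := by
      have h1' := Measure.integral_comp_inv_smul_of_nonneg
        (volume : Measure (EuclideanSpace ℝ (Fin n)))
        (fun y : EuclideanSpace ℝ (Fin n) => ((2 / (1 + ‖y‖ ^ 2)) ^ p) ^ (2:ℕ))
        (Real.sqrt_nonneg ε)
      rw [finrank_euclideanSpace_fin] at h1'
      exact h1'
    have h2 : (∫ x : EuclideanSpace ℝ (Fin n),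
        ((2 / (1 + ‖(Real.sqrt ε)⁻¹ • x‖ ^ 2)) ^ p) ^ (2:ℕ))
        = ε ^ (2 * p) * ∫ x : EuclideanSpace ℝ (Fin n), ((2 / (ε + ‖x‖ ^ 2)) ^ p) ^ (2:ℕ) := by
      simp_rw [hscale ε hε]
      exact integral_const_mul _ _
    have hsn : (Real.sqrt ε) ^ n = ε ^ ((n:ℝ) / 2) := by
      rw [Real.sqrt_eq_rpow, ← Real.rpow_natCast (ε ^ ((1:ℝ)/2)) n, ← Real.rpow_mul hε.le]
      congr 1
      ring
    have key : ε ^ (2 * p) * (∫ x : EuclideanSpace ℝ (Fin n), ((2 / (ε + ‖x‖ ^ 2)) ^ p) ^ (2:ℕ))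
        = ε ^ ((n:ℝ)/2) * Ih := by
      rw [← h2, h1, smul_eq_mul, hsn]
    have h3 : (∫ x : EuclideanSpace ℝ (Fin n), ((2 / (ε + ‖x‖ ^ 2)) ^ p) ^ (2:ℕ))
        = ε ^ (-(2 * p)) * (ε ^ ((n:ℝ)/2) * Ih) := by
      rw [Real.rpow_neg hε.le, ← key, ← mul_assoc, inv_mul_cancel₀ hεp.ne', one_mul]
    rw [h3,
      show ε ^ (-(2*p)) * (ε ^ ((n:ℝ)/2) * Ih) = Ih * (ε ^ (-(2*p)) * ε ^ ((n:ℝ)/2)) from by ring,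
      ← Real.rpow_add hε, show -(2*p) + (n:ℝ)/2 = e from by linarith [he_eq]]
  -- global integrability of the leading term
  have hintA : ∀ ε : ℝ, 0 < ε → Integrable (fun x : EuclideanSpace ℝ (Fin n) =>
      ((2 / (ε + ‖x‖ ^ 2)) ^ p) ^ (2:ℕ)) := by
    intro ε hε
    have hεp : (0:ℝ) < ε ^ (2 * p) := Real.rpow_pos_of_pos hε _
    have hsε : Real.sqrt ε ≠ 0 := (Real.sqrt_pos.2 hε).ne'
    have h1 : Integrable (fun x : EuclideanSpace ℝ (Fin n) =>
        ((2 / (1 + ‖(Real.sqrt ε)⁻¹ • x‖ ^ 2)) ^ p) ^ (2:ℕ)) :=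
      h_int.comp_smul (inv_ne_zero hsε)
    simp_rw [hscale ε hε] at h1
    refine (h1.const_mul ((ε ^ (2 * p))⁻¹)).congr (Filter.Eventually.of_forall fun x => ?_)
    show (ε ^ (2 * p))⁻¹ * (ε ^ (2 * p) * ((2 / (ε + ‖x‖ ^ 2)) ^ p) ^ (2:ℕ))
        = ((2 / (ε + ‖x‖ ^ 2)) ^ p) ^ (2:ℕ)
    rw [← mul_assoc, inv_mul_cancel₀ hεp.ne', one_mul]
  -- upper bound
  have hupper : ∀ ε : ℝ, 0 < ε → ε < 1 →
      (∫ x in ball (0 : EuclideanSpace ℝ (Fin n)) δ, (Ffun n k δ ε x) ^ 2 * wfun n k x)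
        ≤ (2 * W * Ih + 2 * B₀ ^ 2 * W *
            (volume (ball (0 : EuclideanSpace ℝ (Fin n)) δ)).toReal) * ε ^ e := by
    intro ε hε hε1
    have hεe1 : 1 ≤ ε ^ e :=
      ((Real.one_lt_rpow_iff_of_pos hε).2 (Or.inr ⟨hε1, he_neg⟩)).le
    have hεe0 : 0 < ε ^ e := Real.rpow_pos_of_pos hε e
    have hvol0 : (0:ℝ) ≤ (volume (ball (0 : EuclideanSpace ℝ (Fin n)) δ)).toReal :=
      ENNReal.toReal_nonneg
    have hptw : ∀ x ∈ ball (0 : EuclideanSpace ℝ (Fin n)) δ,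
        (Ffun n k δ ε x) ^ 2 * wfun n k x
          ≤ 2 * W * ((2 / (ε + ‖x‖ ^ 2)) ^ p) ^ (2:ℕ) + 2 * B₀ ^ 2 * W := by
      intro x hx
      have hB := hB' ε hε x hx
      have hx' : ‖x‖ < δ := mem_ball_zero_iff.1 hx
      have hx0 := norm_nonneg x
      have hwW : wfun n k x ≤ W := by
        show (2 / (1 - ‖x‖ ^ 2)) ^ (2 * k) ≤ (2 / (1 - δ ^ 2)) ^ (2 * k)
        have h1 : (0:ℝ) < 1 - ‖x‖ ^ 2 := by nlinarith
        exact pow_le_pow_left₀ (by positivity)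
          (div_le_div_of_nonneg_left (by norm_num) hδsq (by nlinarith)) _
      have hF2 : (Ffun n k δ ε x) ^ 2
          ≤ 2 * ((2 / (ε + ‖x‖ ^ 2)) ^ p) ^ (2:ℕ) + 2 * B₀ ^ 2 := by
        have hFdef : Ffun n k δ ε x = (2 / (ε + ‖x‖ ^ 2)) ^ p -
            (2 / (δ ^ 2 + ε)) ^ p * (∑ j ∈ Finset.range k,
              Real.Gamma ((j : ℝ) + p) / (Real.Gamma ((j : ℝ) + 1) * Real.Gamma p) *
                ((δ ^ 2 - ‖x‖ ^ 2) / (δ ^ 2 + ε)) ^ j) := rfl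
        rw [hFdef]
        nlinarith [sq_nonneg ((2 / (ε + ‖x‖ ^ 2)) ^ p +
          (2 / (δ ^ 2 + ε)) ^ p * (∑ j ∈ Finset.range k,
            Real.Gamma ((j : ℝ) + p) / (Real.Gamma ((j : ℝ) + 1) * Real.Gamma p) *
              ((δ ^ 2 - ‖x‖ ^ 2) / (δ ^ 2 + ε)) ^ j)), hB.1, hB.2]
      calc (Ffun n k δ ε x) ^ 2 * wfun n k x
          ≤ (2 * ((2 / (ε + ‖x‖ ^ 2)) ^ p) ^ (2:ℕ) + 2 * B₀ ^ 2) * W := by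
            refine mul_le_mul hF2 hwW (hw_nonneg x) ?_
            nlinarith [sq_nonneg ((2 / (ε + ‖x‖ ^ 2)) ^ p), sq_nonneg B₀]
        _ = 2 * W * ((2 / (ε + ‖x‖ ^ 2)) ^ p) ^ (2:ℕ) + 2 * B₀ ^ 2 * W := by ring
    have hi1 : IntegrableOn (fun x : EuclideanSpace ℝ (Fin n) =>
        2 * W * ((2 / (ε + ‖x‖ ^ 2)) ^ p) ^ (2:ℕ) + 2 * B₀ ^ 2 * W)
        (ball (0 : EuclideanSpace ℝ (Fin n)) δ) := by
      refine (((hintA ε hε).integrableOn).const_mul (2 * W)).add ?_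
      exact integrableOn_const measure_ball_lt_top.ne
    have step1 : (∫ x in ball (0 : EuclideanSpace ℝ (Fin n)) δ, (Ffun n k δ ε x) ^ 2 * wfun n k x)
        ≤ ∫ x in ball (0 : EuclideanSpace ℝ (Fin n)) δ,
            (2 * W * ((2 / (ε + ‖x‖ ^ 2)) ^ p) ^ (2:ℕ) + 2 * B₀ ^ 2 * W) :=
      setIntegral_mono_on (integrableOn_g n k δ ε hε hδ1) hi1 measurableSet_ball hptw
    have step2 : (∫ x in ball (0 : EuclideanSpace ℝ (Fin n)) δ,
            (2 * W * ((2 / (ε + ‖x‖ ^ 2)) ^ p) ^ (2:ℕ) + 2 * B₀ ^ 2 * W))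
        = 2 * W * (∫ x in ball (0 : EuclideanSpace ℝ (Fin n)) δ, ((2 / (ε + ‖x‖ ^ 2)) ^ p) ^ (2:ℕ))
          + 2 * B₀ ^ 2 * W * (volume (ball (0 : EuclideanSpace ℝ (Fin n)) δ)).toReal := by
      rw [integral_add (((hintA ε hε).integrableOn).const_mul (2 * W))
          (integrableOn_const measure_ball_lt_top.ne),
        integral_const_mul, setIntegral_const, smul_eq_mul, measureReal_def]
      ring
    have step3 : (∫ x in ball (0 : EuclideanSpace ℝ (Fin n)) δ, ((2 / (ε + ‖x‖ ^ 2)) ^ p) ^ (2:ℕ))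
        ≤ Ih * ε ^ e := by
      refine le_trans (setIntegral_le_integral (hintA ε hε)
        (Filter.Eventually.of_forall fun x => by positivity)) ?_
      rw [hIA ε hε]
    have h4' : 2 * W * (∫ x in ball (0 : EuclideanSpace ℝ (Fin n)) δ,
        ((2 / (ε + ‖x‖ ^ 2)) ^ p) ^ (2:ℕ)) ≤ 2 * W * (Ih * ε ^ e) :=
      mul_le_mul_of_nonneg_left step3 (by linarith)
    have h5 : 2 * B₀ ^ 2 * W * (volume (ball (0 : EuclideanSpace ℝ (Fin n)) δ)).toReal
        ≤ (2 * B₀ ^ 2 * W * (volume (ball (0 : EuclideanSpace ℝ (Fin n)) δ)).toReal) * ε ^ e :=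
      le_mul_of_one_le_right
        (mul_nonneg (mul_nonneg (by nlinarith [sq_nonneg B₀]) hW0.le) hvol0) hεe1
    calc (∫ x in ball (0 : EuclideanSpace ℝ (Fin n)) δ, (Ffun n k δ ε x) ^ 2 * wfun n k x)
        ≤ ∫ x in ball (0 : EuclideanSpace ℝ (Fin n)) δ,
            (2 * W * ((2 / (ε + ‖x‖ ^ 2)) ^ p) ^ (2:ℕ) + 2 * B₀ ^ 2 * W) := step1
      _ = 2 * W * (∫ x in ball (0 : EuclideanSpace ℝ (Fin n)) δ, ((2 / (ε + ‖x‖ ^ 2)) ^ p) ^ (2:ℕ))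
          + 2 * B₀ ^ 2 * W * (volume (ball (0 : EuclideanSpace ℝ (Fin n)) δ)).toReal := step2
      _ ≤ 2 * W * (Ih * ε ^ e)
          + (2 * B₀ ^ 2 * W * (volume (ball (0 : EuclideanSpace ℝ (Fin n)) δ)).toReal) * ε ^ e := by
          linarith
      _ = (2 * W * Ih + 2 * B₀ ^ 2 * W *
            (volume (ball (0 : EuclideanSpace ℝ (Fin n)) δ)).toReal) * ε ^ e := by ring
  -- lower bound
  set r₀ : ℝ := (2 * B₀ + 1) ^ ((-1:ℝ) / p) with hr₀_def
  have hr₀ : 0 < r₀ := Real.rpow_pos_of_pos (by linarith) _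
  have hlower : ∀ ε : ℝ, 0 < ε → ε < δ ^ 2 → ε < r₀ →
      V / 4 * ε ^ e
        ≤ ∫ x in ball (0 : EuclideanSpace ℝ (Fin n)) δ, (Ffun n k δ ε x) ^ 2 * wfun n k x := by
    intro ε hε hεδ hεr
    have hεp : 0 < ε ^ p := Real.rpow_pos_of_pos hε p
    have hB₀ε : 2 * B₀ < ε ^ (-p) := by
      have h1 : ε ^ p < (2 * B₀ + 1)⁻¹ := by
        have h2 : r₀ ^ p = (2 * B₀ + 1)⁻¹ := by
          rw [hr₀_def, ← Real.rpow_mul (by linarith : (0:ℝ) ≤ 2 * B₀ + 1),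
            show (-1:ℝ) / p * p = -1 from by field_simp]
          exact Real.rpow_neg_one _
        calc ε ^ p < r₀ ^ p := Real.rpow_lt_rpow hε.le hεr hp
          _ = _ := h2
      have h3 : (2 * B₀ + 1) * ε ^ p < 1 := by
        have h4 := mul_lt_mul_of_pos_left h1 (show (0:ℝ) < 2 * B₀ + 1 from by linarith)
        rwa [mul_inv_cancel₀ (show (2 * B₀ + 1) ≠ 0 from by linarith)] at h4
      rw [Real.rpow_neg hε.le, inv_eq_one_div, lt_div_iff₀ hεp]
      nlinarith
    have hsqrtδ : Real.sqrt ε < δ := by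
      have := Real.sqrt_lt_sqrt hε.le hεδ
      rwa [Real.sqrt_sq hδ0.le] at this
    have hsub : ball (0 : EuclideanSpace ℝ (Fin n)) (Real.sqrt ε)
        ⊆ ball (0 : EuclideanSpace ℝ (Fin n)) δ := ball_subset_ball hsqrtδ.le
    have hεnegp : 0 < ε ^ (-p) := Real.rpow_pos_of_pos hε _
    have hpt : ∀ x ∈ ball (0 : EuclideanSpace ℝ (Fin n)) (Real.sqrt ε),
        (ε ^ (-p) / 2) ^ 2 ≤ (Ffun n k δ ε x) ^ 2 * wfun n k x := by
      intro x hx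
      have hxδ : x ∈ ball (0 : EuclideanSpace ℝ (Fin n)) δ := hsub hx
      have hxn : ‖x‖ < Real.sqrt ε := mem_ball_zero_iff.1 hx
      have hx2 : ‖x‖ ^ 2 < ε := by
        nlinarith [norm_nonneg x, Real.sq_sqrt hε.le, Real.sqrt_nonneg ε]
      have hAlow : ε ^ (-p) ≤ (2 / (ε + ‖x‖ ^ 2)) ^ p := by
        have h2 : ε⁻¹ ≤ 2 / (ε + ‖x‖ ^ 2) := by
          rw [inv_eq_one_div, div_le_div_iff₀ hε (by positivity)]
          nlinarith
        calc ε ^ (-p) = (ε⁻¹) ^ p := by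
              rw [Real.rpow_neg hε.le, ← Real.inv_rpow hε.le]
          _ ≤ _ := Real.rpow_le_rpow (by positivity) h2 hp.le
      have hB := hB' ε hε x hxδ
      have hF : ε ^ (-p) / 2 ≤ Ffun n k δ ε x := by
        have hFdef : Ffun n k δ ε x = (2 / (ε + ‖x‖ ^ 2)) ^ p -
            (2 / (δ ^ 2 + ε)) ^ p * (∑ j ∈ Finset.range k,
              Real.Gamma ((j : ℝ) + p) / (Real.Gamma ((j : ℝ) + 1) * Real.Gamma p) *
                ((δ ^ 2 - ‖x‖ ^ 2) / (δ ^ 2 + ε)) ^ j) := rfl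
        rw [hFdef]
        linarith [hAlow, hB.2, hB₀ε]
      have hF2 : (ε ^ (-p) / 2) ^ 2 ≤ (Ffun n k δ ε x) ^ 2 :=
        pow_le_pow_left₀ (by positivity) hF 2
      have hw1 : 1 ≤ wfun n k x := by
        show (1:ℝ) ≤ (2 / (1 - ‖x‖ ^ 2)) ^ (2 * k)
        have hxd : ‖x‖ < δ := mem_ball_zero_iff.1 hxδ
        have h1 : (0:ℝ) < 1 - ‖x‖ ^ 2 := by nlinarith [norm_nonneg x]
        have hb : (1:ℝ) ≤ 2 / (1 - ‖x‖ ^ 2) := by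
          rw [le_div_iff₀ h1]
          nlinarith [norm_nonneg x]
        calc (1:ℝ) = 1 ^ (2 * k) := (one_pow _).symm
          _ ≤ _ := pow_le_pow_left₀ one_pos.le hb _
      calc (ε ^ (-p) / 2) ^ 2 = (ε ^ (-p) / 2) ^ 2 * 1 := (mul_one _).symm
        _ ≤ (Ffun n k δ ε x) ^ 2 * wfun n k x :=
            mul_le_mul hF2 hw1 one_pos.le (sq_nonneg _)
    have hIS : (ε ^ (-p) / 2) ^ 2 *
        (volume (ball (0 : EuclideanSpace ℝ (Fin n)) (Real.sqrt ε))).toReal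
        ≤ ∫ x in ball (0 : EuclideanSpace ℝ (Fin n)) (Real.sqrt ε),
            (Ffun n k δ ε x) ^ 2 * wfun n k x :=
      by have := setIntegral_ge_of_const_le measurableSet_ball measure_ball_lt_top.ne hpt
           ((integrableOn_g n k δ ε hε hδ1).mono_set hsub)
         rw [smul_eq_mul, measureReal_def] at this; linarith
    have hmono : (∫ x in ball (0 : EuclideanSpace ℝ (Fin n)) (Real.sqrt ε),
            (Ffun n k δ ε x) ^ 2 * wfun n k x)
        ≤ ∫ x in ball (0 : EuclideanSpace ℝ (Fin n)) δ, (Ffun n k δ ε x) ^ 2 * wfun n k x :=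
      setIntegral_mono_set (integrableOn_g n k δ ε hε hδ1)
        (Filter.Eventually.of_forall fun x => hg_nonneg ε x)
        (HasSubset.Subset.eventuallyLE hsub)
    have hvol : (volume (ball (0 : EuclideanSpace ℝ (Fin n)) (Real.sqrt ε))).toReal
        = ε ^ ((n:ℝ)/2) * V := by
      rw [Measure.addHaar_ball volume (0 : EuclideanSpace ℝ (Fin n)) (Real.sqrt_nonneg ε),
        finrank_euclideanSpace_fin, ENNReal.toReal_mul, ENNReal.toReal_ofReal (by positivity),
        hV_def]
      congr 1
      rw [Real.sqrt_eq_rpow, ← Real.rpow_natCast (ε ^ ((1:ℝ)/2)) n, ← Real.rpow_mul hε.le]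
      congr 1
      ring
    have harith : (ε ^ (-p) / 2) ^ 2 * (ε ^ ((n:ℝ)/2) * V) = V / 4 * ε ^ e := by
      rw [div_pow, sq_rpow' ε (-p) hε.le,
        show ε ^ (2 * -p) / (2:ℝ) ^ 2 * (ε ^ ((n:ℝ)/2) * V)
          = V / 4 * (ε ^ (2 * -p) * ε ^ ((n:ℝ)/2)) from by ring,
        ← Real.rpow_add hε, he_eq]
    calc V / 4 * ε ^ e = (ε ^ (-p) / 2) ^ 2 * (ε ^ ((n:ℝ)/2) * V) := harith.symm
      _ = (ε ^ (-p) / 2) ^ 2 *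
          (volume (ball (0 : EuclideanSpace ℝ (Fin n)) (Real.sqrt ε))).toReal := by rw [hvol]
      _ ≤ _ := le_trans hIS hmono
  -- assembly
  refine ⟨V / 4, max (V / 4) (2 * W * Ih + 2 * B₀ ^ 2 * W *
      (volume (ball (0 : EuclideanSpace ℝ (Fin n)) δ)).toReal),
    min (δ ^ 2) (min 1 r₀), by linarith, le_max_left _ _,
    lt_min (by positivity) (lt_min one_pos hr₀), ?_⟩
  intro ε hε hεε₀
  have hε1 : ε < 1 := lt_of_lt_of_le hεε₀ ((min_le_right _ _).trans (min_le_left _ _))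
  have hεδ : ε < δ ^ 2 := lt_of_lt_of_le hεε₀ (min_le_left _ _)
  have hεr : ε < r₀ := lt_of_lt_of_le hεε₀ ((min_le_right _ _).trans (min_le_right _ _))
  refine ⟨hlower ε hε hεδ hεr, ?_⟩
  refine le_trans (hupper ε hε hε1) ?_
  exact mul_le_mul_of_nonneg_right (le_max_right _ _) (Real.rpow_pos_of_pos hε e).le
end

section
/- Let k, n be integers with 1 ≤ k < n/2 and let ε > 0. Then for every x ∈ ℝ^n, the k-fold iterated Laplacian with alternating sign satisfies (−Δ)^k [ (ε + |x|²)^{-(n-2k)/2} ] = 4^k ε^k · (Γ((n+2k)/2)/Γ((n-2k)/2)) · (ε + |x|²)^{-(n+2k)/2}, where Δ = ∑_{i=1}^n ∂²/∂x_i². -/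
open Real Finset

/-- The Euclidean Laplacian `Δ f = ∑ ∂²f/∂xᵢ²` on `ℝⁿ`. -/
noncomputable def eucLaplacian {n : ℕ} (f : EuclideanSpace ℝ (Fin n) → ℝ) :
    EuclideanSpace ℝ (Fin n) → ℝ :=
  fun x => ∑ i : Fin n,
    iteratedFDeriv ℝ 2 f x ![EuclideanSpace.single i 1, EuclideanSpace.single i 1]

/-- The k-fold iterate `(-Δ)^k`. -/
noncomputable def negLapPow {n : ℕ} (k : ℕ) (f : EuclideanSpace ℝ (Fin n) → ℝ) :
    EuclideanSpace ℝ (Fin n) → ℝ :=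
  (fun g => fun x => -eucLaplacian g x)^[k] f

section Analysis

variable {n : ℕ} {ε : ℝ}

lemma hasFDerivAt_phi (y : EuclideanSpace ℝ (Fin n)) :
    HasFDerivAt (fun z : EuclideanSpace ℝ (Fin n) => ε + ‖z‖ ^ 2) (2 • (innerSL ℝ y)) y := by
  have h := (hasFDerivAt_id (𝕜 := ℝ) y).norm_sq
  simp only [ContinuousLinearMap.comp_id, id] at h
  exact h.const_add ε

lemma hasFDerivAt_pow_phi (hε : 0 < ε) (p : ℝ) (y : EuclideanSpace ℝ (Fin n)) :
    HasFDerivAt (fun z : EuclideanSpace ℝ (Fin n) => (ε + ‖z‖ ^ 2) ^ p)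
      ((p * (ε + ‖y‖ ^ 2) ^ (p - 1)) • (2 • innerSL ℝ y)) y := by
  have hpos : (0:ℝ) < ε + ‖y‖ ^ 2 := by positivity
  exact (hasFDerivAt_phi y).rpow_const (Or.inl hpos.ne')

lemma contDiff_pow_term (hε : 0 < ε) (p : ℝ) :
    ContDiff ℝ 2 (fun z : EuclideanSpace ℝ (Fin n) => (ε + ‖z‖ ^ 2) ^ p) := by
  rw [contDiff_iff_contDiffAt]
  intro y
  have hpos : (0:ℝ) < ε + ‖y‖ ^ 2 := by positivity
  exact ((contDiff_const.add (contDiff_norm_sq ℝ)).contDiffAt).rpow_const_of_ne hpos.ne'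

lemma iteratedFDeriv_two_pow (hε : 0 < ε) (p : ℝ) (x v : EuclideanSpace ℝ (Fin n)) :
    iteratedFDeriv ℝ 2 (fun z : EuclideanSpace ℝ (Fin n) => (ε + ‖z‖ ^ 2) ^ p) x ![v, v]
      = 2 * p * (ε + ‖x‖ ^ 2) ^ (p - 1) * ‖v‖ ^ 2
        + 4 * p * (p - 1) * (ε + ‖x‖ ^ 2) ^ (p - 2) * (inner ℝ x v : ℝ) ^ 2 := by
  have hDf : fderiv ℝ (fun z : EuclideanSpace ℝ (Fin n) => (ε + ‖z‖ ^ 2) ^ p)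
      = fun y => (p * (ε + ‖y‖ ^ 2) ^ (p - 1)) • (2 • innerSL ℝ y) :=
    funext fun y => (hasFDerivAt_pow_phi hε p y).fderiv
  rw [iteratedFDeriv_two_apply, hDf]
  have hc : HasFDerivAt (fun y : EuclideanSpace ℝ (Fin n) => p * (ε + ‖y‖ ^ 2) ^ (p - 1))
      (p • (((p-1) * (ε + ‖x‖ ^ 2) ^ (p - 1 - 1)) • (2 • innerSL ℝ x))) x :=
    (hasFDerivAt_pow_phi hε (p-1) x).const_mul p
  have hA : HasFDerivAt (fun y : EuclideanSpace ℝ (Fin n) => (2 • innerSL ℝ y))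
      (2 • (innerSL ℝ : EuclideanSpace ℝ (Fin n) →L[ℝ] _)) x := by
    exact ((2 • (innerSL ℝ : EuclideanSpace ℝ (Fin n) →L[ℝ] _)).hasFDerivAt (x := x))
  have hD : HasFDerivAt (fun y : EuclideanSpace ℝ (Fin n) =>
      (p * (ε + ‖y‖ ^ 2) ^ (p - 1)) • (2 • innerSL ℝ y)) _ x := hc.smul hA
  rw [hD.fderiv]
  simp only [Matrix.cons_val_zero, Matrix.cons_val_one, Matrix.head_cons,
    ContinuousLinearMap.add_apply, ContinuousLinearMap.smul_apply,
    ContinuousLinearMap.smulRight_apply, innerSL_apply_apply, smul_eq_mul,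
    real_inner_self_eq_norm_sq]
  rw [show p - 1 - 1 = p - 2 by ring]
  simp only [nsmul_eq_mul, Nat.cast_ofNat]
  rw [innerSL_apply_apply, real_inner_self_eq_norm_sq]
  ring

lemma norm_sq_eq_sum (x : EuclideanSpace ℝ (Fin n)) : ‖x‖ ^ 2 = ∑ i : Fin n, x i ^ 2 := by
  rw [EuclideanSpace.norm_eq, Real.sq_sqrt (by positivity)]
  simp [Real.norm_eq_abs, sq_abs]

lemma eucLaplacian_pow (hε : 0 < ε) (p : ℝ) (x : EuclideanSpace ℝ (Fin n)) :
    eucLaplacian (fun z : EuclideanSpace ℝ (Fin n) => (ε + ‖z‖ ^ 2) ^ p) x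
      = 2 * p * n * (ε + ‖x‖ ^ 2) ^ (p - 1)
        + 4 * p * (p - 1) * ‖x‖ ^ 2 * (ε + ‖x‖ ^ 2) ^ (p - 2) := by
  unfold eucLaplacian
  have h : ∀ i : Fin n,
      iteratedFDeriv ℝ 2 (fun z : EuclideanSpace ℝ (Fin n) => (ε + ‖z‖ ^ 2) ^ p) x
        ![EuclideanSpace.single i 1, EuclideanSpace.single i 1]
      = 2 * p * (ε + ‖x‖ ^ 2) ^ (p - 1) + 4 * p * (p - 1) * (ε + ‖x‖ ^ 2) ^ (p - 2) * x i ^ 2 := by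
    intro i
    rw [iteratedFDeriv_two_pow hε p x (EuclideanSpace.single i 1)]
    have h1 : ‖(EuclideanSpace.single i 1 : EuclideanSpace ℝ (Fin n))‖ = 1 := by simp
    have h2 : (inner ℝ x (EuclideanSpace.single i (1:ℝ)) : ℝ) = x i := by
      rw [EuclideanSpace.inner_single_right]; simp
    rw [h1, h2]; ring
  rw [Finset.sum_congr rfl (fun i _ => h i), Finset.sum_add_distrib]
  rw [Finset.sum_const, ← Finset.mul_sum, ← norm_sq_eq_sum]
  simp only [Finset.card_univ, Fintype.card_fin, nsmul_eq_mul]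
  ring

lemma eucLaplacian_sum {ι : Type*} (s : Finset ι) (F : ι → EuclideanSpace ℝ (Fin n) → ℝ)
    (h : ∀ i ∈ s, ContDiff ℝ 2 (F i)) (x : EuclideanSpace ℝ (Fin n)) :
    eucLaplacian (fun y => ∑ i ∈ s, F i y) x = ∑ i ∈ s, eucLaplacian (F i) x := by
  unfold eucLaplacian
  rw [iteratedFDeriv_sum h]
  simp only [Finset.sum_apply, ContinuousMultilinearMap.sum_apply]
  rw [Finset.sum_comm]

lemma eucLaplacian_const_mul (c : ℝ) (F : EuclideanSpace ℝ (Fin n) → ℝ) (hF : ContDiff ℝ 2 F)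
    (x : EuclideanSpace ℝ (Fin n)) :
    eucLaplacian (fun y => c * F y) x = c * eucLaplacian F x := by
  unfold eucLaplacian
  have : (fun y => c * F y) = c • F := by funext y; simp
  rw [this]
  simp only [iteratedFDeriv_const_smul_apply hF.contDiffAt, ContinuousMultilinearMap.smul_apply,
    smul_eq_mul, Finset.mul_sum]

end Analysis

noncomputable def coefC (n k j i : ℕ) : ℝ :=
  4 ^ j * (∏ t ∈ Finset.range (j + i), (((n : ℝ) - 2 * k) / 2 + t)) * (j.choose i) *
    (∏ t ∈ Finset.range (j - i), ((k : ℝ) - 1 - i - t))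

lemma gamma_prod (z : ℝ) (hz : 0 < z) (m : ℕ) :
    Real.Gamma (z + m) = (∏ t ∈ Finset.range m, (z + t)) * Real.Gamma z := by
  induction m with
  | zero => simp
  | succ m ih =>
    have h1 : z + ((m + 1 : ℕ) : ℝ) = (z + m) + 1 := by push_cast; ring
    have h2 : z + (m : ℝ) ≠ 0 := by positivity
    rw [h1, Real.Gamma_add_one h2, ih, Finset.prod_range_succ]
    ring
lemma coefC_rec (n k j i : ℕ) :
    coefC n k (j+1) i
      = 4 * (((n : ℝ) - 2 * k) / 2 + j + i) * ((k : ℝ) - j - i - 1) * coefC n k j i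
        + (if i = 0 then 0 else
            4 * (((n : ℝ) - 2 * k) / 2 + j + i - 1) * (((n : ℝ) - 2 * k) / 2 + j + i)
              * coefC n k j (i - 1)) := by
  rcases i with _ | m
  · -- i = 0
    simp only [if_pos rfl, add_zero, Nat.cast_zero]
    unfold coefC
    simp only [add_zero, Nat.sub_zero, Nat.choose_zero_right, Nat.cast_one,
      Finset.prod_range_succ]
    push_cast
    ring
  · rw [if_neg (Nat.succ_ne_zero m)]
    rcases lt_or_ge m j with hmj | hmj
    · -- main case 1 ≤ i = m+1 ≤ j
      have h1 : (((j+1).choose (m+1) : ℕ) : ℝ) = j.choose m + j.choose (m+1) := by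
        rw [Nat.choose_succ_succ]; push_cast; ring
      have h2 : ((j.choose (m+1) : ℕ) : ℝ) * (m+1) = (j.choose m) * ((j:ℝ) - m) := by
        have hc := congrArg (Nat.cast (R := ℝ)) (Nat.choose_succ_right_eq j m)
        rw [Nat.cast_mul, Nat.cast_mul, Nat.cast_sub hmj.le] at hc
        push_cast at hc ⊢
        linarith [hc]
      unfold coefC
      simp only [Nat.add_sub_cancel]
      have pA : (∏ t ∈ Finset.range (j + 1 + (m + 1)), (((n:ℝ) - 2*k)/2 + t))
          = (∏ t ∈ Finset.range (j + m), (((n:ℝ) - 2*k)/2 + t)) * (((n:ℝ)-2*k)/2 + (j+m))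
            * (((n:ℝ)-2*k)/2 + (j+m) + 1) := by
        rw [show j + 1 + (m+1) = (j+m) + 1 + 1 from by omega, Finset.prod_range_succ,
          Finset.prod_range_succ]
        push_cast; ring
      have pB : (∏ t ∈ Finset.range (j + (m + 1)), (((n:ℝ) - 2*k)/2 + t))
          = (∏ t ∈ Finset.range (j + m), (((n:ℝ) - 2*k)/2 + t)) * (((n:ℝ)-2*k)/2 + (j+m)) := by
        rw [show j + (m+1) = (j+m) + 1 from by omega, Finset.prod_range_succ]; push_cast; ring
      have pC : (∏ t ∈ Finset.range (j + 1 - (m + 1)), ((k:ℝ) - 1 - ((m+1 : ℕ):ℝ) - t))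
          = (∏ t ∈ Finset.range (j - (m + 1)), ((k:ℝ) - 1 - ((m+1:ℕ):ℝ) - t))
            * ((k:ℝ) - 1 - j) := by
        rw [show j + 1 - (m+1) = (j - (m+1)) + 1 from by omega, Finset.prod_range_succ,
          Nat.cast_sub (show m+1 ≤ j from by omega)]
        push_cast; ring
      have pD : (∏ t ∈ Finset.range (j - m), ((k:ℝ) - 1 - (m:ℝ) - t))
          = (∏ t ∈ Finset.range (j - (m + 1)), ((k:ℝ) - 1 - ((m+1:ℕ):ℝ) - t))
            * ((k:ℝ) - 1 - m) := by
        rw [show j - m = (j - (m+1)) + 1 from by omega, Finset.prod_range_succ']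
        have hcongr : ∀ t ∈ Finset.range (j - (m+1)),
            ((k:ℝ) - 1 - (m:ℝ) - ((t+1 : ℕ):ℝ)) = ((k:ℝ) - 1 - ((m+1:ℕ):ℝ) - (t:ℝ)) :=
          fun t _ => by push_cast; ring
        rw [Finset.prod_congr rfl hcongr]
        push_cast; ring
      rw [pA, pB, pC, pD]
      set P : ℝ := ∏ t ∈ Finset.range (j + m), (((n:ℝ) - 2*k)/2 + t)
      set Q : ℝ := ∏ t ∈ Finset.range (j - (m+1)), ((k:ℝ) - 1 - ((m+1:ℕ):ℝ) - t)
      push_cast at h1 h2 ⊢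
      set B : ℝ := ((n:ℝ) - 2*k)/2
      linear_combination (4 ^ (j+1) * P * Q * (B + j + m) * (B + j + m + 1)
          * ((k:ℝ) - 1 - j)) * h1
        + (4 ^ (j+1) * P * Q * (B + j + m) * (B + j + m + 1)) * h2
    · rcases eq_or_lt_of_le hmj with hmj' | hmj'
      · -- i = j+1
        subst hmj'
        unfold coefC
        simp only [Nat.choose_self, Nat.sub_self, Nat.cast_one,
          Finset.range_zero, Finset.prod_empty, mul_one]
        rw [show j + 1 + (j + 1) = (j + j + 1) + 1 from by omega, Finset.prod_range_succ,
          show j + (j+1) = (j + j) + 1 from by omega, Finset.prod_range_succ,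
          show j - (j + 1) = 0 from by omega]
        simp only [Nat.add_sub_cancel, Nat.choose_self, Nat.sub_self, Nat.cast_one,
          Finset.range_zero, Finset.prod_empty]
        push_cast [Nat.choose_eq_zero_of_lt (Nat.lt_succ_self j)]
        ring
      · -- i > j+1 : everything vanishes
        unfold coefC
        rw [Nat.choose_eq_zero_of_lt (by omega), Nat.choose_eq_zero_of_lt (by omega),
          Nat.choose_eq_zero_of_lt (by omega)]
        simp

noncomputable def aaF (n k j : ℕ) (ε w : ℝ) (i : ℕ) : ℝ :=
  4 * (((n:ℝ) - 2 * k) / 2 + j + i) * ((k:ℝ) - j - i - 1) * coefC n k j i * ε ^ i *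
    w ^ (-(((n:ℝ) - 2 * k) / 2 + (j:ℝ) + 1 + (i:ℝ)))

noncomputable def ggF (n k j : ℕ) (ε w : ℝ) (i : ℕ) : ℝ :=
  if i = 0 then 0 else
    4 * (((n:ℝ) - 2 * k) / 2 + j + i - 1) * (((n:ℝ) - 2 * k) / 2 + j + i) *
      coefC n k j (i - 1) * ε ^ i * w ^ (-(((n:ℝ) - 2 * k) / 2 + (j:ℝ) + 1 + (i:ℝ)))

lemma step1 (n k j : ℕ) {ε : ℝ} (hε : 0 < ε) (x : EuclideanSpace ℝ (Fin n)) :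
    ∑ i ∈ Finset.range (j + 1),
        (aaF n k j ε (ε + ‖x‖ ^ 2) i + ggF n k j ε (ε + ‖x‖ ^ 2) (i + 1))
      = ∑ i ∈ Finset.range (j + 1 + 1), coefC n k (j + 1) i * ε ^ i *
          (ε + ‖x‖ ^ 2) ^ (-((((n : ℝ) - 2 * k) / 2) + ((j + 1 : ℕ) : ℝ) + (i : ℝ))) := by
  rw [Finset.sum_add_distrib]
  have ha : ∑ i ∈ Finset.range (j + 1), aaF n k j ε (ε + ‖x‖ ^ 2) i
      = ∑ i ∈ Finset.range (j + 1 + 1), aaF n k j ε (ε + ‖x‖ ^ 2) i := by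
    have hz : aaF n k j ε (ε + ‖x‖ ^ 2) (j + 1) = 0 := by
      unfold aaF coefC
      simp [Nat.choose_succ_self]
    rw [Finset.sum_range_succ (aaF n k j ε (ε + ‖x‖ ^ 2)) (j + 1), hz, add_zero]
  have hg : ∑ i ∈ Finset.range (j + 1), ggF n k j ε (ε + ‖x‖ ^ 2) (i + 1)
      = ∑ i ∈ Finset.range (j + 1 + 1), ggF n k j ε (ε + ‖x‖ ^ 2) i := by
    rw [Finset.sum_range_succ' (ggF n k j ε (ε + ‖x‖ ^ 2)) (j + 1)]
    simp [ggF]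
  rw [ha, hg, ← Finset.sum_add_distrib]
  refine Finset.sum_congr rfl fun i _ => ?_
  rw [coefC_rec n k j i]
  have hexp : -((((n:ℝ) - 2 * k) / 2) + ((j + 1 : ℕ) : ℝ) + (i : ℝ))
      = -((((n:ℝ) - 2 * k) / 2) + (j:ℝ) + 1 + (i:ℝ)) := by push_cast; ring
  rw [hexp]
  unfold aaF ggF
  by_cases hi : i = 0
  · subst hi
    simp only [if_pos rfl]
    push_cast
    ring
  · rw [if_neg hi, if_neg hi]
    push_cast
    ring


lemma negLapPow_expand (n k : ℕ) {ε : ℝ} (hε : 0 < ε) (j : ℕ) :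
    negLapPow (n := n) j (fun y => (ε + ‖y‖ ^ 2) ^ (-(((n : ℝ) - 2 * k) / 2)))
      = fun x => ∑ i ∈ Finset.range (j + 1),
          coefC n k j i * ε ^ i *
            (ε + ‖x‖ ^ 2) ^ (-((((n : ℝ) - 2 * k) / 2) + j + i)) := by
  induction j with
  | zero =>
    funext x
    simp only [negLapPow, Function.iterate_zero, id_eq]
    rw [Finset.sum_range_one]
    rw [show coefC n k 0 0 = 1 from by simp [coefC]]
    norm_num
  | succ j ih =>
    have hstep : negLapPow (n := n) (j+1) (fun y => (ε + ‖y‖ ^ 2) ^ (-(((n:ℝ) - 2*k)/2)))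
        = fun x => -eucLaplacian
            (negLapPow (n := n) j (fun y => (ε + ‖y‖ ^ 2) ^ (-(((n:ℝ) - 2*k)/2)))) x := by
      rw [negLapPow, Function.iterate_succ_apply']
      rfl
    rw [hstep, ih]
    funext x
    have hA : (0:ℝ) < ε + ‖x‖ ^ 2 := by positivity
    have hlin : eucLaplacian (fun y : EuclideanSpace ℝ (Fin n) =>
          ∑ i ∈ Finset.range (j + 1), coefC n k j i * ε ^ i *
            (ε + ‖y‖ ^ 2) ^ (-((((n:ℝ) - 2*k)/2) + j + i))) x
        = ∑ i ∈ Finset.range (j + 1), eucLaplacian (fun y : EuclideanSpace ℝ (Fin n) =>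
            coefC n k j i * ε ^ i * (ε + ‖y‖ ^ 2) ^ (-((((n:ℝ) - 2*k)/2) + j + i))) x :=
      eucLaplacian_sum _ _ (fun i _ => contDiff_const.mul (contDiff_pow_term hε _)) x
    show -eucLaplacian _ x = _
    rw [hlin]
    have hterm : ∀ i ∈ Finset.range (j + 1),
        eucLaplacian (fun y : EuclideanSpace ℝ (Fin n) =>
            coefC n k j i * ε ^ i * (ε + ‖y‖ ^ 2) ^ (-((((n:ℝ) - 2*k)/2) + j + i))) x
          = coefC n k j i * ε ^ i *
              (2 * (-((((n:ℝ) - 2*k)/2) + j + i)) * n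
                  * (ε + ‖x‖ ^ 2) ^ ((-((((n:ℝ) - 2*k)/2) + j + i)) - 1)
                + 4 * (-((((n:ℝ) - 2*k)/2) + j + i)) * ((-((((n:ℝ) - 2*k)/2) + j + i)) - 1)
                  * ‖x‖ ^ 2 * (ε + ‖x‖ ^ 2) ^ ((-((((n:ℝ) - 2*k)/2) + j + i)) - 2)) := by
      intro i _
      rw [eucLaplacian_const_mul _ _ (contDiff_pow_term hε _) x, eucLaplacian_pow hε _ x]
    rw [Finset.sum_congr rfl hterm, ← Finset.sum_neg_distrib]
    refine Eq.trans (Finset.sum_congr rfl fun i _ => ?_) (step1 n k j hε x)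
    -- termwise split
    unfold aaF ggF
    rw [if_neg (Nat.succ_ne_zero i)]
    simp only [Nat.add_sub_cancel]
    have h1 : -((((n:ℝ) - 2 * k) / 2) + (j:ℝ) + (i:ℝ)) - 1
        = -((((n:ℝ) - 2 * k) / 2) + (j:ℝ) + 1 + (i:ℝ)) := by ring
    have h2 : -((((n:ℝ) - 2 * k) / 2) + (j:ℝ) + (i:ℝ)) - 2
        = -((((n:ℝ) - 2 * k) / 2) + (j:ℝ) + 1 + ((i + 1 : ℕ):ℝ)) := by push_cast; ring
    have h3 : (ε + ‖x‖ ^ 2) ^ (-((((n:ℝ) - 2 * k) / 2) + (j:ℝ) + 1 + (i:ℝ)))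
        = (ε + ‖x‖ ^ 2) ^ (-((((n:ℝ) - 2 * k) / 2) + (j:ℝ) + 1 + ((i + 1 : ℕ):ℝ)))
            * (ε + ‖x‖ ^ 2) := by
      rw [← Real.rpow_add_one hA.ne']
      congr 1
      push_cast
      ring
    rw [h1, h2, h3]
    push_cast
    ring

/-- Identity (5.4) of the paper:
`(−Δ)^k (ε+|x|²)^{-(n-2k)/2} = 4^k ε^k (Γ((n+2k)/2)/Γ((n-2k)/2)) (ε+|x|²)^{-(n+2k)/2}`. -/
theorem iterated_laplacian_sobolev_extremal (n k : ℕ) (hk : 1 ≤ k) (hkn : 2 * k < n)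
    (ε : ℝ) (hε : 0 < ε) (x : EuclideanSpace ℝ (Fin n)) :
    negLapPow k (fun y => (ε + ‖y‖ ^ 2) ^ (-(((n : ℝ) - 2 * k) / 2))) x
      = 4 ^ k * ε ^ k *
          (Real.Gamma (((n : ℝ) + 2 * k) / 2) / Real.Gamma (((n : ℝ) - 2 * k) / 2)) *
          (ε + ‖x‖ ^ 2) ^ (-(((n : ℝ) + 2 * k) / 2)) := by
  rw [negLapPow_expand n k hε k]
  simp only []
  rw [Finset.sum_range_succ]
  have hzero : ∀ i ∈ Finset.range k, coefC n k k i * ε ^ i *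
      (ε + ‖x‖ ^ 2) ^ (-((((n:ℝ) - 2 * k) / 2) + (k:ℝ) + (i:ℝ))) = 0 := by
    intro i hi
    rw [Finset.mem_range] at hi
    have hc : coefC n k k i = 0 := by
      unfold coefC
      have hmem : k - 1 - i ∈ Finset.range (k - i) := Finset.mem_range.2 (by omega)
      rw [Finset.prod_eq_zero hmem, mul_zero]
      rw [Nat.cast_sub (show i ≤ k - 1 by omega), Nat.cast_sub (show 1 ≤ k from hk)]
      push_cast
      ring
    rw [hc]
    ring
  rw [Finset.sum_eq_zero hzero, zero_add]
  have hB : (0:ℝ) < ((n:ℝ) - 2 * k) / 2 := by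
    have h2 : (2 * k : ℝ) < n := by exact_mod_cast hkn
    linarith
  have hΓ : Real.Gamma (((n:ℝ) - 2 * k) / 2) ≠ 0 := (Real.Gamma_pos_of_pos hB).ne'
  have hCkk : coefC n k k k
      = 4 ^ k * (Real.Gamma (((n:ℝ) + 2 * k) / 2) / Real.Gamma (((n:ℝ) - 2 * k) / 2)) := by
    unfold coefC
    rw [Nat.choose_self, Nat.sub_self]
    simp only [Finset.range_zero, Finset.prod_empty, mul_one, Nat.cast_one]
    have h1 : ((n:ℝ) + 2 * k) / 2 = (((n:ℝ) - 2 * k) / 2) + ((k + k : ℕ) : ℝ) := by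
      push_cast; ring
    rw [h1, gamma_prod (((n:ℝ) - 2 * k) / 2) hB (k + k), mul_div_cancel_right₀ _ hΓ]
  rw [hCkk]
  have hexp2 : -((((n:ℝ) - 2 * k) / 2) + (k:ℝ) + (k:ℝ)) = -(((n:ℝ) + 2 * k) / 2) := by
    push_cast; ring
  rw [hexp2]
  ring
end

section
/- Let m, k, l, j be integers with l ≥ 1, k ≥ 0, and 0 ≤ j ≤ m − k − l − 2. Then Γ(m+k)Γ(m-k-l)/(Γ(m-k-l-j)Γ(m+k-j)) − Γ(m+k+1)Γ(m-1-k-l)/(Γ(m-1-k-l-j)Γ(m+k+1-j)) = (2k+1+l) · j · Γ(m+k)Γ(m-1-k-l)/(Γ(m-k-l-j)Γ(m+k+1-j)). -/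
open Real

/-- Identity (6.6) of the paper: a Gamma-function identity used in the induction for
the Green's function of products of shifted resolvents in even dimensions. -/
theorem gamma_identity_even (m k l j : ℕ) (hl : 1 ≤ l) (hj : j + k + l + 2 ≤ m) :
    Real.Gamma ((m : ℝ) + k) * Real.Gamma ((m : ℝ) - k - l) /
        (Real.Gamma ((m : ℝ) - k - l - j) * Real.Gamma ((m : ℝ) + k - j))
      - Real.Gamma ((m : ℝ) + k + 1) * Real.Gamma ((m : ℝ) - 1 - k - l) /
        (Real.Gamma ((m : ℝ) - 1 - k - l - j) * Real.Gamma ((m : ℝ) + k + 1 - j))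
    = (2 * (k : ℝ) + 1 + l) * j * Real.Gamma ((m : ℝ) + k) *
        Real.Gamma ((m : ℝ) - 1 - k - l) /
        (Real.Gamma ((m : ℝ) - k - l - j) * Real.Gamma ((m : ℝ) + k + 1 - j)) := by
  have hm : (j : ℝ) + k + l + 2 ≤ (m : ℝ) := by exact_mod_cast hj
  have hl' : (1 : ℝ) ≤ (l : ℝ) := by exact_mod_cast hl
  have hj0 : (0 : ℝ) ≤ (j : ℝ) := Nat.cast_nonneg j
  have hk0 : (0 : ℝ) ≤ (k : ℝ) := Nat.cast_nonneg k
  -- positivity of all arguments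
  have hA : (0 : ℝ) < (m : ℝ) + k := by linarith
  have hB : (0 : ℝ) < (m : ℝ) - 1 - k - l := by linarith
  have hY : (0 : ℝ) < (m : ℝ) - 1 - k - l - j := by linarith
  have hX : (0 : ℝ) < (m : ℝ) + k - j := by linarith
  -- recurrences
  have e1 : (m : ℝ) - k - l = ((m : ℝ) - 1 - k - l) + 1 := by ring
  have e2 : (m : ℝ) + k + 1 = ((m : ℝ) + k) + 1 := by ring
  have e3 : (m : ℝ) - k - l - j = ((m : ℝ) - 1 - k - l - j) + 1 := by ring
  have e4 : (m : ℝ) + k + 1 - j = ((m : ℝ) + k - j) + 1 := by ring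
  rw [e3, Real.Gamma_add_one hY.ne', e4, Real.Gamma_add_one hX.ne',
    e1, Real.Gamma_add_one hB.ne', e2, Real.Gamma_add_one hA.ne']
  have gA := (Real.Gamma_pos_of_pos hA).ne'
  have gB := (Real.Gamma_pos_of_pos hB).ne'
  have gY := (Real.Gamma_pos_of_pos hY).ne'
  have gX := (Real.Gamma_pos_of_pos hX).ne'
  field_simp
  ring
end

section
/- Let m, k be integers with k ≥ 0 and m ≥ k + 2, and let ρ > 0 be real. Then ∫_0^π (cosh ρ + cos t)^{m-2-k} (sin t)^{2k+1} dt = ∑_{j=0}^{m-2-k} [Γ(m-1-k)/(Γ(j+1)Γ(m-1-k-j))] · (2 sinh²(ρ/2))^j · 2^{m+k-1-j} · Γ(m-1-j) · Γ(k+1) / Γ(m+k-j). -/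
open Real Finset intervalIntegral

private lemma betaNat (b a : ℕ) :
    ∫ x in (0:ℝ)..1, x ^ a * (1 - x) ^ b
      = (a.factorial * b.factorial : ℝ) / (a + b + 1).factorial := by
  induction b generalizing a with
  | zero =>
      simp only [pow_zero, mul_one, integral_pow, Nat.factorial, Nat.add_zero]
      rw [one_pow, zero_pow (Nat.succ_ne_zero a)]
      have h1 : (a:ℝ) + 1 ≠ 0 := by positivity
      have h2 : (a.factorial : ℝ) ≠ 0 := by positivity
      push_cast
      field_simp
      norm_num
  | succ b ih =>
      have hu : ∀ x ∈ Set.uIcc (0:ℝ) 1, HasDerivAt (fun y : ℝ => (1 - y) ^ (b+1))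
          (-((b+1 : ℝ) * (1 - x) ^ b)) x := by
        intro x _
        have h := ((hasDerivAt_id x).const_sub 1).pow (b+1)
        refine h.congr_deriv ?_
        simp only [id, Nat.cast_add, Nat.cast_one, Nat.add_sub_cancel]
        ring
      have ha1 : ((a:ℝ) + 1) ≠ 0 := by positivity
      have hv : ∀ x ∈ Set.uIcc (0:ℝ) 1, HasDerivAt (fun y : ℝ => y ^ (a+1) / ((a:ℝ)+1))
          (x ^ a) x := by
        intro x _
        have h := (hasDerivAt_pow (a+1) x).div_const ((a:ℝ)+1)
        refine h.congr_deriv ?_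
        simp only [Nat.cast_add, Nat.cast_one, Nat.add_sub_cancel]
        rw [mul_div_cancel_left₀ _ ha1]
      have hint1 : IntervalIntegrable (fun x : ℝ => -((b+1 : ℝ) * (1 - x) ^ b)) MeasureTheory.volume 0 1 :=
        (Continuous.intervalIntegrable (by fun_prop) 0 1)
      have hint2 : IntervalIntegrable (fun x : ℝ => x ^ a) MeasureTheory.volume 0 1 :=
        (Continuous.intervalIntegrable (by fun_prop) 0 1)
      have key := intervalIntegral.integral_mul_deriv_eq_deriv_mul hu hv hint1 hint2
      have e1 : ∫ x in (0:ℝ)..1, x ^ a * (1 - x) ^ (b+1)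
          = ∫ x in (0:ℝ)..1, (1 - x) ^ (b+1) * x ^ a := by
        simp_rw [mul_comm]
      rw [e1, key]
      have e2 : ∫ x in (0:ℝ)..1, -((b+1 : ℝ) * (1 - x) ^ b) * (x ^ (a+1) / ((a:ℝ)+1))
          = (-((b+1 : ℝ)) / ((a:ℝ)+1)) * ∫ x in (0:ℝ)..1, x ^ (a+1) * (1 - x) ^ b := by
        rw [← intervalIntegral.integral_const_mul]
        congr 1
        ext x
        field_simp
      rw [e2, ih (a+1)]
      have harith : a + 1 + b + 1 = a + (b + 1) + 1 := by omega
      rw [harith]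
      rw [Nat.factorial_succ a, Nat.factorial_succ b]
      push_cast
      field_simp
      ring

private lemma betaSym (a b : ℕ) :
    ∫ u in (-1:ℝ)..1, (1+u)^a * (1-u)^b
      = 2^(a+b+1) * ((a.factorial * b.factorial : ℝ) / (a+b+1).factorial) := by
  have h := intervalIntegral.integral_comp_mul_add
    (f := fun u : ℝ => (1+u)^a * (1-u)^b) (a := (0:ℝ)) (b := 1) two_ne_zero (-1)
  have h2 : ∀ x : ℝ, (1 + (2*x + -1))^a * (1 - (2*x + -1))^b
      = 2^(a+b) * (x ^ a * (1-x)^b) := by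
    intro x
    have e1 : 1 + (2*x + -1) = 2 * x := by ring
    have e2 : 1 - (2*x + -1) = 2 * (1 - x) := by ring
    rw [e1, e2, mul_pow, mul_pow, pow_add]
    ring
  simp only [h2] at h
  rw [intervalIntegral.integral_const_mul, betaNat] at h
  rw [smul_eq_mul] at h
  norm_num at h
  linear_combination (-2 : ℝ) * h

private lemma cosSubst (c : ℝ) (q k : ℕ) :
    ∫ t in (0:ℝ)..Real.pi, (c + Real.cos t)^q * Real.sin t ^ (2*k+1)
      = ∫ u in (-1:ℝ)..1, (c+u)^q * (1-u^2)^k := by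
  have h := intervalIntegral.integral_comp_smul_deriv (a := (0:ℝ)) (b := Real.pi)
    (f := Real.cos) (f' := fun t => -Real.sin t)
    (g := fun u => -((c+u)^q * (1-u^2)^k))
    (fun x _ => Real.hasDerivAt_cos x) (by fun_prop) (by fun_prop)
  rw [Real.cos_zero, Real.cos_pi] at h
  have e : ∀ t : ℝ, (-Real.sin t) • (-((c + Real.cos t)^q * (1 - Real.cos t ^2)^k))
      = (c + Real.cos t)^q * Real.sin t ^ (2*k+1) := by
    intro t
    rw [smul_eq_mul, ← Real.sin_sq, ← pow_mul]
    ring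
  simp only [Function.comp] at h
  simp only [e] at h
  rw [h, intervalIntegral.integral_symm, intervalIntegral.integral_neg, neg_neg]

/-- The computational core of Lemma 6.1 of the paper: for integers `m ≥ k+2`, `k ≥ 0`
and `ρ > 0`, `∫₀^π (cosh ρ + cos t)^{m-2-k} (sin t)^{2k+1} dt` expands as a finite sum
of Gamma factors times powers of `sinh²(ρ/2)`. -/
theorem cosh_cos_integral_expansion_even (m k : ℕ) (hk : k + 2 ≤ m) (ρ : ℝ) (hρ : 0 < ρ) :
    ∫ t in (0 : ℝ)..Real.pi,
        (Real.cosh ρ + Real.cos t) ^ (m - 2 - k) * Real.sin t ^ (2 * k + 1)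
      = ∑ j ∈ Finset.range (m - 1 - k),
          Real.Gamma ((m : ℝ) - 1 - k) /
              (Real.Gamma ((j : ℝ) + 1) * Real.Gamma ((m : ℝ) - 1 - k - j)) *
            (2 * Real.sinh (ρ / 2) ^ 2) ^ j *
            (2 : ℝ) ^ ((m : ℝ) + k - 1 - j) *
            Real.Gamma ((m : ℝ) - 1 - j) * Real.Gamma ((k : ℝ) + 1) /
            Real.Gamma ((m : ℝ) + k - j) := by
  obtain ⟨p, rfl⟩ : ∃ p, m = p + k + 2 := ⟨m - 2 - k, by omega⟩
  have hp2 : p + k + 2 - 2 - k = p := by omega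
  have hp1 : p + k + 2 - 1 - k = p + 1 := by omega
  rw [hp2, hp1]
  set a : ℝ := 2 * Real.sinh (ρ/2)^2 with ha
  have hcosh : Real.cosh ρ = 1 + a := by
    have hρ2 : ρ = 2 * (ρ/2) := by ring
    rw [hρ2, Real.cosh_two_mul, Real.cosh_sq]
    ring
  rw [hcosh, cosSubst]
  have hexp : ∀ u : ℝ, (1 + a + u)^p * (1-u^2)^k
      = ∑ j ∈ Finset.range (p+1),
          (p.choose j : ℝ) * a^j * ((1+u)^(p-j+k) * (1-u)^k) := by
    intro u
    have e0 : (1:ℝ) + a + u = a + (1+u) := by ring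
    have e1 : (1:ℝ) - u^2 = (1+u)*(1-u) := by ring
    rw [e0, e1, mul_pow, add_pow, Finset.sum_mul]
    refine Finset.sum_congr rfl fun j _ => ?_
    rw [pow_add]
    ring
  simp_rw [hexp]
  rw [intervalIntegral.integral_finset_sum
    (fun j _ => (Continuous.intervalIntegrable (by fun_prop) _ _))]
  refine Finset.sum_congr rfl fun j hj => ?_
  rw [Finset.mem_range] at hj
  obtain ⟨d, rfl⟩ : ∃ d, p = j + d := ⟨p - j, by omega⟩
  have hjd : j + d - j = d := by omega
  rw [hjd, intervalIntegral.integral_const_mul, betaSym]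
  have e1 : ((j+d+k+2 : ℕ) : ℝ) - 1 - k = ((j+d : ℕ) : ℝ) + 1 := by push_cast; ring
  have e2 : ((j+d+k+2 : ℕ) : ℝ) - 1 - k - j = ((d : ℕ) : ℝ) + 1 := by push_cast; ring
  have e3 : ((j+d+k+2 : ℕ) : ℝ) + k - 1 - j = ((d + 2*k + 1 : ℕ) : ℝ) := by push_cast; ring
  have e4 : ((j+d+k+2 : ℕ) : ℝ) - 1 - j = ((d + k : ℕ) : ℝ) + 1 := by push_cast; ring
  have e5 : ((j+d+k+2 : ℕ) : ℝ) + k - j = ((d + 2*k + 1 : ℕ) : ℝ) + 1 := by push_cast; ring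
  rw [e2, e1, e3, e4, e5, Real.rpow_natCast, Real.Gamma_nat_eq_factorial, Real.Gamma_nat_eq_factorial,
    Real.Gamma_nat_eq_factorial, Real.Gamma_nat_eq_factorial, Real.Gamma_nat_eq_factorial,
    Real.Gamma_nat_eq_factorial]
  have e6 : d + k + k + 1 = d + 2*k + 1 := by omega
  rw [e6]
  have hc : (((j+d).choose j : ℕ) : ℝ) = ((j+d).factorial : ℝ) / (j.factorial * d.factorial) := by
    rw [Nat.cast_choose ℝ (by omega : j ≤ j + d), hjd]
  rw [hc]
  have h1 : (j.factorial : ℝ) ≠ 0 := by positivity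
  have h2 : (d.factorial : ℝ) ≠ 0 := by positivity
  have h3 : ((d + 2*k + 1).factorial : ℝ) ≠ 0 := by positivity
  field_simp
end

section
/- Let m, k be integers with 1 < k < m, and let ρ > 0. Then 4^{k-1} (sinh ρ)^{2-2m} · ∑_{j=0}^{m-1-k} [Γ(m)/(Γ(j+1)Γ(m-j))] · (sinh(ρ/2))^{2j+2k-2} ≤ (2 sinh(ρ/2))^{2k-2m} − (2 cosh(ρ/2))^{2k-2m}. -/
open Real Finset

lemma choose_aux (N K i : ℕ) (hi : i ≤ K + 1) :
    (K + 1).choose i ≤ (N + K + 2).choose (N + 1 + i) := by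
  have h1 : (K + 1).choose i = (K + 1).choose (K + 1 - i) := by
    rw [Nat.choose_symm hi]
  have h2 : (N + K + 2).choose (N + 1 + i) = (N + K + 2).choose (K + 1 - i) := by
    have h : N + 1 + i ≤ N + K + 2 := by omega
    rw [← Nat.choose_symm h]
    congr 1
    omega
  rw [h1, h2]
  exact Nat.choose_le_choose _ (by omega)

lemma key_poly (N K : ℕ) (t : ℝ) (ht : 0 ≤ t) :
    (∑ j ∈ Finset.range (N + 1), ((N + K + 2).choose j : ℝ) * t ^ j)
      + t ^ (N + 1) * (1 + t) ^ (K + 1) ≤ (1 + t) ^ (N + K + 2) := by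
  have h1 : (1 + t) ^ (N + K + 2)
      = ∑ j ∈ Finset.range (N + 1 + (K + 2)), ((N + K + 2).choose j : ℝ) * t ^ j := by
    rw [add_comm (1 : ℝ) t, add_pow]
    have hn : N + K + 2 + 1 = N + 1 + (K + 2) := by omega
    rw [hn]
    exact Finset.sum_congr rfl fun j _ => by rw [one_pow]; ring
  have h2 : t ^ (N + 1) * (1 + t) ^ (K + 1)
      = ∑ i ∈ Finset.range (K + 2), ((K + 1).choose i : ℝ) * t ^ (N + 1 + i) := by
    rw [add_comm (1 : ℝ) t, add_pow]
    have hn : K + 1 + 1 = K + 2 := by omega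
    rw [hn, Finset.mul_sum]
    exact Finset.sum_congr rfl fun i _ => by rw [one_pow, pow_add]; ring
  have h3 : ∑ j ∈ Finset.range (N + 1 + (K + 2)), ((N + K + 2).choose j : ℝ) * t ^ j
      = (∑ j ∈ Finset.range (N + 1), ((N + K + 2).choose j : ℝ) * t ^ j)
        + ∑ i ∈ Finset.range (K + 2), ((N + K + 2).choose (N + 1 + i) : ℝ) * t ^ (N + 1 + i) :=
    Finset.sum_range_add (fun j => ((N + K + 2).choose j : ℝ) * t ^ j) (N + 1) (K + 2)
  rw [h1, h2, h3]
  have hterm : ∑ i ∈ Finset.range (K + 2), ((K + 1).choose i : ℝ) * t ^ (N + 1 + i)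
      ≤ ∑ i ∈ Finset.range (K + 2), ((N + K + 2).choose (N + 1 + i) : ℝ) * t ^ (N + 1 + i) := by
    refine Finset.sum_le_sum fun i hi => ?_
    have hcast : ((K + 1).choose i : ℝ) ≤ ((N + K + 2).choose (N + 1 + i) : ℝ) := by
      exact_mod_cast choose_aux N K i (by have := Finset.mem_range.mp hi; omega)
    exact mul_le_mul_of_nonneg_right hcast (pow_nonneg ht _)
  linarith

/-- The pointwise bound of Theorem 1.10 in even dimension `n = 2m` (Lemma 6.3 of the
paper): the explicit Green's function sum is bounded by
`(2 sinh(ρ/2))^{2k-2m} − (2 cosh(ρ/2))^{2k-2m}`. -/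
theorem green_function_bound_even (m k : ℕ) (hk1 : 1 < k) (hkm : k < m)
    (ρ : ℝ) (hρ : 0 < ρ) :
    (4 : ℝ) ^ (k - 1) * Real.sinh ρ ^ ((2 : ℝ) - 2 * m) *
        ∑ j ∈ Finset.range (m - k),
          Real.Gamma (m : ℝ) / (Real.Gamma ((j : ℝ) + 1) * Real.Gamma ((m : ℝ) - j)) *
            Real.sinh (ρ / 2) ^ (2 * j + 2 * k - 2)
      ≤ (2 * Real.sinh (ρ / 2)) ^ (2 * (k : ℝ) - 2 * m)
          - (2 * Real.cosh (ρ / 2)) ^ (2 * (k : ℝ) - 2 * m) := by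
  obtain ⟨K, rfl⟩ : ∃ K, k = K + 2 := ⟨k - 2, by omega⟩
  obtain ⟨N, rfl⟩ : ∃ N, m = N + 1 + (K + 2) := ⟨m - (K + 3), by omega⟩
  set s := Real.sinh (ρ / 2) with hs_def
  set c := Real.cosh (ρ / 2) with hc_def
  have hs : 0 < s := Real.sinh_pos_iff.mpr (by linarith)
  have hc : 0 < c := Real.cosh_pos _
  have hsc : Real.sinh ρ = 2 * s * c := by
    have h := Real.sinh_two_mul (ρ / 2)
    rw [show 2 * (ρ / 2) = ρ by ring] at h
    exact h
  have hsinhρ : 0 < Real.sinh ρ := Real.sinh_pos_iff.mpr hρ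
  -- rewrite the rpow terms as inverses of natural powers
  have e1 : Real.sinh ρ ^ ((2 : ℝ) - 2 * ((N + 1 + (K + 2) : ℕ) : ℝ))
      = ((2 * s * c) ^ (2 * N + 2 * K + 4 : ℕ))⁻¹ := by
    rw [show ((2 : ℝ) - 2 * ((N + 1 + (K + 2) : ℕ) : ℝ)) = -((2 * N + 2 * K + 4 : ℕ) : ℝ) by
      push_cast; ring]
    rw [Real.rpow_neg hsinhρ.le, Real.rpow_natCast, hsc]
  have e2 : (2 * s) ^ (2 * ((K + 2 : ℕ) : ℝ) - 2 * ((N + 1 + (K + 2) : ℕ) : ℝ))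
      = ((2 * s) ^ (2 * N + 2 : ℕ))⁻¹ := by
    rw [show (2 * ((K + 2 : ℕ) : ℝ) - 2 * ((N + 1 + (K + 2) : ℕ) : ℝ))
        = -((2 * N + 2 : ℕ) : ℝ) by push_cast; ring]
    rw [Real.rpow_neg (by positivity), Real.rpow_natCast]
  have e3 : (2 * c) ^ (2 * ((K + 2 : ℕ) : ℝ) - 2 * ((N + 1 + (K + 2) : ℕ) : ℝ))
      = ((2 * c) ^ (2 * N + 2 : ℕ))⁻¹ := by
    rw [show (2 * ((K + 2 : ℕ) : ℝ) - 2 * ((N + 1 + (K + 2) : ℕ) : ℝ))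
        = -((2 * N + 2 : ℕ) : ℝ) by push_cast; ring]
    rw [Real.rpow_neg (by positivity), Real.rpow_natCast]
  rw [e1, e2, e3]
  -- rewrite the sum in terms of binomial coefficients
  have hrange : N + 1 + (K + 2) - (K + 2) = N + 1 := by omega
  rw [hrange]
  have hsum : ∑ j ∈ Finset.range (N + 1),
      Real.Gamma ((N + 1 + (K + 2) : ℕ) : ℝ) /
        (Real.Gamma ((j : ℝ) + 1) * Real.Gamma (((N + 1 + (K + 2) : ℕ) : ℝ) - j)) *
          s ^ (2 * j + 2 * (K + 2) - 2)
      = (∑ j ∈ Finset.range (N + 1), ((N + K + 2).choose j : ℝ) * (s ^ 2) ^ j)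
          * s ^ (2 * K + 2) := by
    rw [Finset.sum_mul]
    refine Finset.sum_congr rfl fun j hj => ?_
    have hj' : j ≤ N := Nat.lt_succ_iff.mp (Finset.mem_range.mp hj)
    have hg1 : Real.Gamma ((N + 1 + (K + 2) : ℕ) : ℝ) = ((N + K + 2).factorial : ℝ) := by
      rw [show ((N + 1 + (K + 2) : ℕ) : ℝ) = ((N + K + 2 : ℕ) : ℝ) + 1 by push_cast; ring]
      exact Real.Gamma_nat_eq_factorial _
    have hg2 : Real.Gamma ((j : ℝ) + 1) = (j.factorial : ℝ) := Real.Gamma_nat_eq_factorial _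
    have hg3 : Real.Gamma (((N + 1 + (K + 2) : ℕ) : ℝ) - j)
        = ((N + K + 2 - j).factorial : ℝ) := by
      rw [show (((N + 1 + (K + 2) : ℕ) : ℝ) - (j : ℝ)) = ((N + K + 2 - j : ℕ) : ℝ) + 1 by
        rw [Nat.cast_sub (by omega)]; push_cast; ring]
      exact Real.Gamma_nat_eq_factorial _
    rw [hg1, hg2, hg3, ← Nat.cast_choose ℝ (by omega : j ≤ N + K + 2)]
    rw [show 2 * j + 2 * (K + 2) - 2 = 2 * j + (2 * K + 2) by omega]
    rw [pow_add, ← pow_mul]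
    ring
  rw [hsum]
  -- positivity facts
  have hP : (0 : ℝ) < (2 * s) ^ (2 * N + 2) := by positivity
  have hQ : (0 : ℝ) < (2 * c) ^ (2 * N + 2) := by positivity
  have hX : (0 : ℝ) < (2 * s * c) ^ (2 * N + 2 * K + 4) := by positivity
  -- the key polynomial bound
  have hcs : (1 : ℝ) + s ^ 2 = c ^ 2 := by
    have := Real.cosh_sq (ρ / 2)
    rw [← hs_def, ← hc_def] at this
    linarith
  have hkey := key_poly N K (s ^ 2) (by positivity)
  rw [hcs] at hkey
  set T : ℝ := ∑ j ∈ Finset.range (N + 1), ((N + K + 2).choose j : ℝ) * (s ^ 2) ^ j with hT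
  have hmain : T ≤ (c ^ 2) ^ (N + K + 2) - (s ^ 2) ^ (N + 1) * (c ^ 2) ^ (K + 1) := by
    linarith
  -- clear the inverses
  rw [show (4 : ℝ) ^ (K + 2 - 1) = 4 ^ (K + 1) by norm_num]
  have hgoal : (4 : ℝ) ^ (K + 1) * ((2 * s * c) ^ (2 * N + 2 * K + 4))⁻¹
      * (T * s ^ (2 * K + 2))
      = (4 ^ (K + 1) * T * s ^ (2 * K + 2)) / (2 * s * c) ^ (2 * N + 2 * K + 4) := by
    ring
  have hrhs : ((2 * s) ^ (2 * N + 2))⁻¹ - ((2 * c) ^ (2 * N + 2))⁻¹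
      = ((2 * c) ^ (2 * N + 2) - (2 * s) ^ (2 * N + 2))
        / ((2 * s) ^ (2 * N + 2) * (2 * c) ^ (2 * N + 2)) := by
    field_simp
  rw [hgoal, hrhs, div_le_div_iff₀ hX (by positivity)]
  rw [show (4 : ℝ) ^ (K + 1) = 2 ^ (2 * K + 2) by
    rw [show 2 * K + 2 = 2 * (K + 1) by omega, pow_mul]; norm_num]
  calc (2:ℝ) ^ (2 * K + 2) * T * s ^ (2 * K + 2) * ((2 * s) ^ (2 * N + 2) * (2 * c) ^ (2 * N + 2))
      = T * (2 ^ (4 * N + 2 * K + 6) * (s ^ 2) ^ (N + K + 2) * (c ^ 2) ^ (N + 1)) := by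
        ring
    _ ≤ ((c ^ 2) ^ (N + K + 2) - (s ^ 2) ^ (N + 1) * (c ^ 2) ^ (K + 1))
          * (2 ^ (4 * N + 2 * K + 6) * (s ^ 2) ^ (N + K + 2) * (c ^ 2) ^ (N + 1)) := by
        exact mul_le_mul_of_nonneg_right hmain (by positivity)
    _ = ((2 * c) ^ (2 * N + 2) - (2 * s) ^ (2 * N + 2)) * (2 * s * c) ^ (2 * N + 2 * K + 4) := by
        ring
end

section
/- Let ρ > 0 and let N be a real number with N > 1/2. Then ∫_ρ^∞ sinh r · (cosh r − cosh ρ)^{-1/2} · (sinh(r/2))^{-2N} dr = √2 · √π · (Γ(N − 1/2)/Γ(N)) · (sinh(ρ/2))^{1-2N}. -/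
open Real MeasureTheory


lemma lemD {N : ℝ} (hN : 1 / 2 < N) :
    ∫ x in Set.Ioo (0:ℝ) 1, x ^ (N - 3/2) * (1 - x) ^ (-(1:ℝ)/2)
      = Real.sqrt Real.pi * Real.Gamma (N - 1/2) / Real.Gamma N := by
  have hs : 0 < ((N:ℂ) - 1/2).re := by norm_num; linarith
  have ht : (0:ℝ) < (1/2 : ℂ).re := by norm_num
  have hbeta := Complex.Gamma_mul_Gamma_eq_betaIntegral hs ht
  have hval : Complex.betaIntegral ((N:ℂ) - 1/2) (1/2)
      = ((∫ x in Set.Ioo (0:ℝ) 1, x ^ (N - 3/2) * (1 - x) ^ (-(1:ℝ)/2) : ℝ) : ℂ) := by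
    rw [Complex.betaIntegral, intervalIntegral.integral_of_le zero_le_one,
      MeasureTheory.integral_Ioc_eq_integral_Ioo]
    refine Eq.trans (setIntegral_congr_fun measurableSet_Ioo (fun x hx => ?_))
      (integral_ofReal (𝕜 := ℂ))
    have hx0 : (0:ℝ) ≤ x := hx.1.le
    have hx1 : (0:ℝ) ≤ 1 - x := by linarith [hx.2]
    have e1 : ((N:ℂ) - 1/2 - 1) = ((N - 3/2 : ℝ) : ℂ) := by push_cast; ring
    have e2 : ((1:ℂ)/2 - 1) = ((-1/2 : ℝ) : ℂ) := by norm_num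
    have e3 : (1 - (x:ℂ)) = ((1 - x : ℝ) : ℂ) := by push_cast; ring
    rw [e1, e2, e3, ← Complex.ofReal_cpow hx0, ← Complex.ofReal_cpow hx1,
      ← Complex.ofReal_mul]
    rfl
  rw [hval] at hbeta
  have hG2 : ((N:ℂ) - 1/2 + 1/2) = ((N : ℝ) : ℂ) := by push_cast; ring
  have hG1 : ((N:ℂ) - 1/2) = ((N - 1/2 : ℝ) : ℂ) := by push_cast; ring
  rw [hG2, hG1, Complex.Gamma_ofReal, Complex.Gamma_ofReal] at hbeta
  have h12 : ((1:ℂ)/2) = ((1/2 : ℝ) : ℂ) := by norm_num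
  rw [h12, Complex.Gamma_ofReal] at hbeta
  have := hbeta
  rw [← Complex.ofReal_mul, ← Complex.ofReal_mul] at this
  have hre : Real.Gamma (N - 1/2) * Real.Gamma (1/2)
      = Real.Gamma N * ∫ x in Set.Ioo (0:ℝ) 1, x ^ (N - 3/2) * (1 - x) ^ (-(1:ℝ)/2) := by
    exact_mod_cast this
  have hGN : Real.Gamma N ≠ 0 := (Real.Gamma_pos_of_pos (by linarith)).ne'
  rw [Real.Gamma_one_half_eq] at hre
  field_simp at hre ⊢
  linarith [hre]

lemma lemC (N : ℝ) :
    ∫ u in Set.Ioi (0:ℝ), (1 + u^2) ^ (-N)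
      = (1/2) * ∫ x in Set.Ioo (0:ℝ) 1, x ^ (N - 3/2) * (1 - x) ^ (-(1:ℝ)/2) := by
  set f : ℝ → ℝ := fun x => Real.sqrt (x⁻¹ - 1) with hf
  have harg : ∀ x : ℝ, x ∈ Set.Ioo (0:ℝ) 1 → 0 < x⁻¹ - 1 := by
    intro x hx
    have h1 : 1 < x⁻¹ := (one_lt_inv_iff₀).2 ⟨hx.1, hx.2⟩
    linarith
  have hderiv : ∀ x ∈ Set.Ioo (0:ℝ) 1,
      HasDerivWithinAt f (1 / (2 * Real.sqrt (x⁻¹ - 1)) * (-(x^2)⁻¹)) (Set.Ioo 0 1) x := by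
    intro x hx
    have hinner : HasDerivAt (fun x : ℝ => x⁻¹ - 1) (-(x^2)⁻¹) x :=
      (hasDerivAt_inv hx.1.ne').sub_const 1
    exact ((Real.hasDerivAt_sqrt (harg x hx).ne').comp x hinner).hasDerivWithinAt
  have hinj : Set.InjOn f (Set.Ioo 0 1) := by
    intro x hx y hy h
    have hx' := (harg x hx).le
    have hy' := (harg y hy).le
    have : x⁻¹ - 1 = y⁻¹ - 1 := by
      have := congrArg (fun t => t ^ 2) h
      simpa [hf, Real.sq_sqrt hx', Real.sq_sqrt hy'] using this
    have : x⁻¹ = y⁻¹ := by linarith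
    exact inv_injective this
  have him : f '' Set.Ioo 0 1 = Set.Ioi (0:ℝ) := by
    ext u
    constructor
    · rintro ⟨x, hx, rfl⟩
      exact Real.sqrt_pos.2 (harg x hx)
    · intro hu
      have hu' : (0:ℝ) < u := hu
      refine ⟨(1 + u^2)⁻¹, ⟨by positivity, ?_⟩, ?_⟩
      · rw [inv_lt_one_iff₀]; right; nlinarith
      · simp only [hf, inv_inv]
        rw [show 1 + u^2 - 1 = u^2 by ring, Real.sqrt_sq hu'.le]
  rw [← him, integral_image_eq_integral_abs_deriv_smul measurableSet_Ioo hderiv hinj,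
    ← MeasureTheory.integral_const_mul]
  refine setIntegral_congr_fun measurableSet_Ioo (fun x hx => ?_)
  have hx0 : (0:ℝ) < x := hx.1
  have hx1 : (0:ℝ) < 1 - x := by linarith [hx.2]
  have hs : (0:ℝ) < Real.sqrt (x⁻¹ - 1) := Real.sqrt_pos.2 (harg x hx)
  have hgf : (1 + f x ^ 2) ^ (-N) = x ^ N := by
    rw [hf]
    simp only
    rw [Real.sq_sqrt (harg x hx).le, show 1 + (x⁻¹ - 1) = x⁻¹ by ring,
      Real.inv_rpow hx0.le, ← Real.rpow_neg hx0.le, neg_neg]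
  have hsinv : (Real.sqrt (x⁻¹ - 1))⁻¹ = x ^ ((1:ℝ)/2) * (1 - x) ^ (-(1:ℝ)/2) := by
    have hxe : x⁻¹ - 1 = (1 - x) * x⁻¹ := by field_simp
    rw [hxe, Real.sqrt_mul hx1.le, Real.sqrt_inv, mul_inv, inv_inv,
      Real.sqrt_eq_rpow, Real.sqrt_eq_rpow, ← Real.rpow_neg hx1.le]
    ring_nf
  have habs : |1 / (2 * Real.sqrt (x⁻¹ - 1)) * (-(x^2)⁻¹)|
      = 1 / (2 * Real.sqrt (x⁻¹ - 1)) * (x^2)⁻¹ := by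
    rw [abs_mul, abs_neg, abs_inv, abs_of_pos (by positivity : (0:ℝ) < 1 / (2 * Real.sqrt (x⁻¹ - 1))),
      abs_of_pos (by positivity : (0:ℝ) < x ^ 2)]
  have hx2 : ((x:ℝ)^2)⁻¹ = x ^ (-(2:ℝ)) := by
    rw [← Real.rpow_natCast x 2, ← Real.rpow_neg hx0.le]
    norm_num
  rw [smul_eq_mul, habs, hgf, one_div, mul_inv, hsinv, hx2]
  rw [show ((2:ℝ))⁻¹ * (x ^ ((1:ℝ)/2) * (1 - x) ^ (-(1:ℝ)/2)) * x ^ (-(2:ℝ)) * x ^ N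
      = 2⁻¹ * ((x ^ ((1:ℝ)/2) * x ^ (-(2:ℝ)) * x ^ N) * (1 - x) ^ (-(1:ℝ)/2)) by ring,
    ← Real.rpow_add hx0, ← Real.rpow_add hx0]
  norm_num
  left
  rw [show -(3/2) + N = N - 3/2 by ring]

lemma lemB {a : ℝ} (N : ℝ) (ha : 0 < a) :
    ∫ t in Set.Ioi (0:ℝ), (t^2 + a^2) ^ (-N)
      = a ^ (1 - 2*N) * ∫ u in Set.Ioi (0:ℝ), (1 + u^2) ^ (-N) := by
  have key := MeasureTheory.integral_comp_mul_left_Ioi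
    (fun t => (t^2 + a^2) ^ (-N)) 0 ha
  simp only [mul_zero, smul_eq_mul] at key
  have hpt : ∀ u : ℝ, ((a*u)^2 + a^2) ^ (-N) = a ^ (-(2*N)) * (1 + u^2) ^ (-N) := by
    intro u
    have h1 : (a*u)^2 + a^2 = a^2 * (1 + u^2) := by ring
    rw [h1, Real.mul_rpow (sq_nonneg a) (by positivity), ← Real.rpow_natCast a 2,
      ← Real.rpow_mul ha.le]
    norm_num
  simp only [hpt] at key
  rw [MeasureTheory.integral_const_mul] at key
  have : ∫ t in Set.Ioi (0:ℝ), (t^2 + a^2) ^ (-N)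
      = a * (a ^ (-(2*N)) * ∫ u in Set.Ioi (0:ℝ), (1 + u^2) ^ (-N)) := by
    rw [key]; field_simp
  rw [this, ← mul_assoc]
  congr 1
  rw [show a * a ^ (-(2*N)) = a ^ (1:ℝ) * a ^ (-(2*N)) by rw [Real.rpow_one],
    ← Real.rpow_add ha]
  ring_nf

lemma coshe (x : ℝ) : Real.cosh x = 1 + 2 * Real.sinh (x/2)^2 := by
  have h := Real.cosh_two_mul (x/2)
  rw [show 2*(x/2) = x by ring] at h
  rw [h, Real.cosh_sq']
  ring

lemma lemA (ρ N : ℝ) (hρ : 0 < ρ) :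
    ∫ r in Set.Ioi ρ,
        Real.sinh r * (Real.cosh r - Real.cosh ρ) ^ (-(1:ℝ)/2) *
          Real.sinh (r/2) ^ (-(2*N))
      = 2 * Real.sqrt 2 *
          ∫ t in Set.Ioi (0:ℝ), (t^2 + Real.sinh (ρ/2)^2) ^ (-N) := by
  set a := Real.sinh (ρ/2) with ha
  have ha0 : 0 < a := Real.sinh_pos_iff.2 (by linarith)
  set f : ℝ → ℝ := fun r => Real.sqrt ((Real.cosh r - Real.cosh ρ)/2) with hf
  have hcr : ∀ r : ℝ, r ∈ Set.Ioi ρ → 0 < (Real.cosh r - Real.cosh ρ)/2 := by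
    intro r hr
    have : Real.cosh ρ < Real.cosh r := by
      rw [Real.cosh_lt_cosh, abs_of_pos hρ, abs_of_pos (hρ.trans hr)]
      exact hr
    linarith
  have hderiv : ∀ r ∈ Set.Ioi ρ,
      HasDerivWithinAt f
        (1 / (2 * Real.sqrt ((Real.cosh r - Real.cosh ρ)/2)) * (Real.sinh r / 2))
        (Set.Ioi ρ) r := by
    intro r hr
    have hinner : HasDerivAt (fun r => (Real.cosh r - Real.cosh ρ)/2) (Real.sinh r / 2) r :=
      ((Real.hasDerivAt_cosh r).sub_const _).div_const 2
    exact ((Real.hasDerivAt_sqrt (hcr r hr).ne').comp r hinner).hasDerivWithinAt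
  have hinj : Set.InjOn f (Set.Ioi ρ) := by
    intro r hr s hs h
    have h2 : (Real.cosh r - Real.cosh ρ)/2 = (Real.cosh s - Real.cosh ρ)/2 := by
      rw [← Real.sq_sqrt (hcr r hr).le, ← Real.sq_sqrt (hcr s hs).le]
      exact congrArg (fun t => t ^ 2) h
    have hcc : Real.cosh r = Real.cosh s := by linarith
    exact Real.cosh_strictMonoOn.injOn (le_of_lt (hρ.trans hr)) (le_of_lt (hρ.trans hs)) hcc
  have him : f '' Set.Ioi ρ = Set.Ioi (0:ℝ) := by
    ext y
    constructor
    · rintro ⟨r, hr, rfl⟩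
      exact Real.sqrt_pos.2 (hcr r hr)
    · intro hy
      have hy' : (0:ℝ) < y := hy
      refine ⟨2 * Real.arsinh (Real.sqrt (y^2 + a^2)), ?_, ?_⟩
      · have hlt : a < Real.sqrt (y^2 + a^2) := by
          have : a = Real.sqrt (a^2) := (Real.sqrt_sq ha0.le).symm
          rw [this]
          exact Real.sqrt_lt_sqrt (sq_nonneg a) (by nlinarith)
        have : Real.sinh (ρ/2) < Real.sinh (Real.arsinh (Real.sqrt (y^2 + a^2))) := by
          rw [Real.sinh_arsinh]; exact hlt
        have := Real.sinh_lt_sinh.1 this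
        simpa using by linarith
      · have hs2 : Real.sinh (2 * Real.arsinh (Real.sqrt (y^2 + a^2)) / 2)
            = Real.sqrt (y^2 + a^2) := by
          rw [show 2 * Real.arsinh (Real.sqrt (y^2 + a^2)) / 2
              = Real.arsinh (Real.sqrt (y^2 + a^2)) by ring, Real.sinh_arsinh]
        rw [hf]
        simp only
        rw [coshe (2 * Real.arsinh (Real.sqrt (y^2 + a^2))), coshe ρ, hs2, ← ha,
          Real.sq_sqrt (by positivity)]
        rw [show (1 + 2 * (y^2 + a^2) - (1 + 2 * a^2))/2 = y^2 by ring, Real.sqrt_sq hy'.le]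
  rw [← him, integral_image_eq_integral_abs_deriv_smul measurableSet_Ioi hderiv hinj,
    ← MeasureTheory.integral_const_mul]
  refine setIntegral_congr_fun measurableSet_Ioi (fun r hr => ?_)
  have hc := hcr r hr
  have hr0 : 0 < r := hρ.trans hr
  have hsr : 0 < Real.sinh r := Real.sinh_pos_iff.2 hr0
  have hs2 : 0 < Real.sinh (r/2) := Real.sinh_pos_iff.2 (by linarith)
  have hsq : 0 < Real.sqrt ((Real.cosh r - Real.cosh ρ)/2) := Real.sqrt_pos.2 hc
  have hgf : (f r ^ 2 + a^2) ^ (-N) = Real.sinh (r/2) ^ (-(2*N)) := by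
    rw [hf]
    simp only
    rw [Real.sq_sqrt hc.le, coshe r, coshe ρ, ← ha,
      show (1 + 2 * Real.sinh (r/2)^2 - (1 + 2 * a^2))/2 + a^2 = Real.sinh (r/2)^2 by ring,
      ← Real.rpow_natCast (Real.sinh (r/2)) 2, ← Real.rpow_mul hs2.le]
    norm_num
  have habs : |1 / (2 * Real.sqrt ((Real.cosh r - Real.cosh ρ)/2)) * (Real.sinh r / 2)|
      = 1 / (2 * Real.sqrt ((Real.cosh r - Real.cosh ρ)/2)) * (Real.sinh r / 2) := by
    apply abs_of_pos
    positivity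
  rw [smul_eq_mul, habs, hgf]
  have hrp : (Real.cosh r - Real.cosh ρ) ^ (-(1:ℝ)/2)
      = (Real.sqrt (Real.cosh r - Real.cosh ρ))⁻¹ := by
    rw [show (-(1:ℝ)/2) = -(1/2 : ℝ) by norm_num, Real.rpow_neg (by linarith),
      ← Real.sqrt_eq_rpow]
  have hsplit : Real.sqrt (Real.cosh r - Real.cosh ρ)
      = Real.sqrt 2 * Real.sqrt ((Real.cosh r - Real.cosh ρ)/2) := by
    rw [← Real.sqrt_mul (by norm_num : (0:ℝ) ≤ 2)]
    congr 1
    ring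
  rw [hrp, hsplit]
  have h2 : Real.sqrt 2 * Real.sqrt 2 = 2 := Real.mul_self_sqrt (by norm_num)
  have h2sq : (Real.sqrt 2)^2 = 2 := Real.sq_sqrt (by norm_num)
  have hne1 : Real.sqrt 2 ≠ 0 := by positivity
  have hne2 : Real.sqrt ((Real.cosh r - Real.cosh ρ)/2) ≠ 0 := hsq.ne'
  rw [mul_inv, one_div, mul_inv]
  field_simp
  ring_nf
  rw [h2sq]

/-- The key definite-integral computation in Lemma 6.4 of the paper:
`∫_ρ^∞ sinh r (cosh r − cosh ρ)^{-1/2} (sinh(r/2))^{-2N} dr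
  = √2 √π (Γ(N-1/2)/Γ(N)) (sinh(ρ/2))^{1-2N}` for `ρ > 0` and `N > 1/2`. -/
theorem sinh_integral_eval (ρ N : ℝ) (hρ : 0 < ρ) (hN : 1 / 2 < N) :
    ∫ r in Set.Ioi ρ,
        Real.sinh r * (Real.cosh r - Real.cosh ρ) ^ (-(1 : ℝ) / 2) *
          Real.sinh (r / 2) ^ (-(2 * N))
      = Real.sqrt 2 * Real.sqrt Real.pi * (Real.Gamma (N - 1 / 2) / Real.Gamma N) *
          Real.sinh (ρ / 2) ^ (1 - 2 * N) := by
  rw [lemA ρ N hρ, lemB N (Real.sinh_pos_iff.2 (by linarith : (0:ℝ) < ρ/2)), lemC N, lemD hN]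
  ring
end
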